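/- arXiv:2112.02976 — 7 statements merged into one kernel-verified Lean document; each statement's English description precedes it below -/
import Mathlib

section
/- Fix n ≥ 1, states i, j ∈ {1,…,n}, and a discount factor α ∈ (0,1). There exist two polynomials f and g in the n² variables (x_{kℓ})_{1≤k,ℓ≤n}, each of total degree at most n and with nonnegative coefficients, such that for every n×n row-stochastic matrix P one has g(P) > 0 and (1−α)·((I − α·P)⁻¹)_{ij} = f(P)/g(P), where f(P), g(P) denote the evaluations of f, g at the entries of P. -/
open Matrix

namespace Stmt1Aux

lemma pow_entry_nonneg {n : ℕ} (Q : Matrix (Fin n) (Fin n) ℝ) (h : ∀ k l, 0 ≤ Q k l) (T : ℕ) :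
    ∀ k l, 0 ≤ (Q ^ T) k l := by
  induction T with
  | zero =>
      intro k l
      rw [pow_zero, Matrix.one_apply]
      split <;> norm_num
  | succ T ih =>
      intro k l
      rw [pow_succ, Matrix.mul_apply]
      exact Finset.sum_nonneg fun m _ => mul_nonneg (ih k m) (h m l)

lemma pow_row_sum {n : ℕ} (Q : Matrix (Fin n) (Fin n) ℝ) (h : ∀ k, ∑ l, Q k l = 1) (T : ℕ) :
    ∀ k, ∑ l, (Q ^ T) k l = 1 := by
  induction T with
  | zero =>
      intro k
      simp [Matrix.one_apply]
  | succ T ih =>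
      intro k
      simp only [pow_succ, Matrix.mul_apply]
      rw [Finset.sum_comm]
      simp_rw [← Finset.mul_sum, h, mul_one]
      exact ih k

lemma pow_entry_le_one {n : ℕ} (Q : Matrix (Fin n) (Fin n) ℝ) (h0 : ∀ k l, 0 ≤ Q k l)
    (h1 : ∀ k, ∑ l, Q k l = 1) (T : ℕ) : ∀ k l, (Q ^ T) k l ≤ 1 := by
  intro k l
  calc (Q ^ T) k l ≤ ∑ m, (Q ^ T) k m :=
        Finset.single_le_sum (fun m _ => pow_entry_nonneg Q h0 T k m) (Finset.mem_univ l)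
    _ = 1 := pow_row_sum Q h1 T k

lemma det_ne_zero {n : ℕ} (P : Matrix (Fin n) (Fin n) ℝ)
    (hP0 : ∀ k l, 0 ≤ P k l) (hP1 : ∀ k, ∑ l, P k l = 1)
    {β : ℝ} (hβ0 : 0 ≤ β) (hβ1 : β < 1) : (1 - β • P).det ≠ 0 := by
  intro hdet
  obtain ⟨v, hvne, hveq⟩ := Matrix.exists_mulVec_eq_zero_iff.mpr hdet
  obtain ⟨k₁, hk₁⟩ := Function.ne_iff.mp hvne
  obtain ⟨k₀, -, hk₀⟩ := Finset.exists_max_image Finset.univ (fun k => |v k|)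
    ⟨k₁, Finset.mem_univ k₁⟩
  have hpos : 0 < |v k₀| := lt_of_lt_of_le (abs_pos.mpr hk₁) (hk₀ k₁ (Finset.mem_univ k₁))
  have hrow : v k₀ = β * ∑ l, P k₀ l * v l := by
    have := congrFun hveq k₀
    simp only [Matrix.mulVec, dotProduct, Matrix.sub_apply, Matrix.smul_apply,
      Matrix.one_apply, smul_eq_mul, Pi.zero_apply, sub_mul, ite_mul, one_mul, zero_mul] at this
    rw [Finset.sum_sub_distrib, Finset.sum_ite_eq Finset.univ k₀ (fun l => v l)] at this
    simp only [Finset.mem_univ, if_true, sub_eq_zero] at this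
    rw [this, Finset.mul_sum]
    ring_nf
  have hb : |v k₀| ≤ β * |v k₀| := by
    calc |v k₀| = β * |∑ l, P k₀ l * v l| := by rw [hrow, abs_mul, abs_of_nonneg hβ0]
      _ ≤ β * ∑ l, P k₀ l * |v k₀| := by
          apply mul_le_mul_of_nonneg_left _ hβ0
          calc |∑ l, P k₀ l * v l| ≤ ∑ l, |P k₀ l * v l| := Finset.abs_sum_le_sum_abs _ _
            _ ≤ ∑ l, P k₀ l * |v k₀| := by
                apply Finset.sum_le_sum
                intro l _
                rw [abs_mul, abs_of_nonneg (hP0 k₀ l)]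
                exact mul_le_mul_of_nonneg_left (hk₀ l (Finset.mem_univ l)) (hP0 k₀ l)
      _ = β * |v k₀| := by rw [← Finset.sum_mul, hP1 k₀, one_mul]
  nlinarith

lemma det_pos {n : ℕ} (P : Matrix (Fin n) (Fin n) ℝ)
    (hP0 : ∀ k l, 0 ≤ P k l) (hP1 : ∀ k, ∑ l, P k l = 1)
    {α : ℝ} (hα0 : 0 < α) (hα1 : α < 1) : 0 < (1 - α • P).det := by
  set F : ℝ → ℝ := fun t => (1 - (t * α) • P).det with hF
  have hc : Continuous F := by
    apply Continuous.matrix_det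
    exact continuous_const.sub (((continuous_id.mul continuous_const)).smul continuous_const)
  have hne : ∀ t ∈ Set.Icc (0:ℝ) 1, F t ≠ 0 := by
    intro t ht
    exact det_ne_zero P hP0 hP1 (mul_nonneg ht.1 hα0.le)
      (lt_of_le_of_lt (by nlinarith [ht.2, hα0.le] : t * α ≤ α) hα1)
  have hF0 : F 0 = 1 := by simp [hF]
  have hF1 : F 1 = (1 - α • P).det := by simp [hF]
  rcases lt_trichotomy (F 1) 0 with h | h | h
  · exfalso
    have h0 : (0:ℝ) ∈ Set.Icc (F 1) (F 0) := ⟨h.le, by rw [hF0]; norm_num⟩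
    obtain ⟨t, ht, hFt⟩ := intermediate_value_Icc' (by norm_num : (0:ℝ) ≤ 1) hc.continuousOn h0
    exact hne t ht hFt
  · exact absurd h (hne 1 (by norm_num))
  · rwa [hF1] at h

lemma inv_entry_nonneg {n : ℕ} (P : Matrix (Fin n) (Fin n) ℝ)
    (hP0 : ∀ k l, 0 ≤ P k l) (hP1 : ∀ k, ∑ l, P k l = 1)
    {α : ℝ} (hα0 : 0 < α) (hα1 : α < 1) (i j : Fin n) : 0 ≤ (1 - α • P)⁻¹ i j := by
  set x : Matrix (Fin n) (Fin n) ℝ := α • P with hx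
  set B : Matrix (Fin n) (Fin n) ℝ := 1 - x with hB
  have hdet : B.det ≠ 0 := det_ne_zero P hP0 hP1 hα0.le hα1
  have hBinv : B⁻¹ * B = 1 := Matrix.nonsing_inv_mul B (isUnit_iff_ne_zero.mpr hdet)
  set C : ℝ := ∑ k, |B⁻¹ i k| with hC
  have key : ∀ T : ℕ, -(C * α ^ T) ≤ B⁻¹ i j := by
    intro T
    set S : Matrix (Fin n) (Fin n) ℝ := ∑ t ∈ Finset.range T, x ^ t with hS
    have hgs : B * S = 1 - x ^ T := by
      have h1 := mul_geom_sum x T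
      have hBneg : B = -(x - 1) := by rw [hB, neg_sub]
      rw [hBneg, neg_mul, h1, neg_sub]
    have hSeq : S = B⁻¹ - B⁻¹ * x ^ T := by
      have h2 : B⁻¹ * (B * S) = B⁻¹ * (1 - x ^ T) := by rw [hgs]
      rw [← mul_assoc, hBinv, one_mul] at h2
      rw [h2, mul_sub, mul_one]
    have hxT : x ^ T = α ^ T • P ^ T := smul_pow α P T
    have hSnn : 0 ≤ S i j := by
      rw [hS, Matrix.sum_apply]
      apply Finset.sum_nonneg
      intro t _
      rw [hx, smul_pow, Matrix.smul_apply, smul_eq_mul]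
      exact mul_nonneg (pow_nonneg hα0.le t) (pow_entry_nonneg P hP0 t i j)
    have hbound : -(C * α ^ T) ≤ (B⁻¹ * x ^ T) i j := by
      rw [Matrix.mul_apply, hC, Finset.sum_mul, ← Finset.sum_neg_distrib]
      apply Finset.sum_le_sum
      intro k _
      rw [hxT, Matrix.smul_apply, smul_eq_mul]
      have hq0 : 0 ≤ (P ^ T) k j := pow_entry_nonneg P hP0 T k j
      have hq1 : (P ^ T) k j ≤ 1 := pow_entry_le_one P hP0 hP1 T k j
      have haT : 0 ≤ α ^ T := pow_nonneg hα0.le T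
      rcases le_or_gt 0 (B⁻¹ i k) with hcs | hcs
      · have : 0 ≤ B⁻¹ i k * (α ^ T * (P ^ T) k j) := by positivity
        nlinarith [abs_nonneg (B⁻¹ i k)]
      · rw [abs_of_neg hcs]
        have h3 : B⁻¹ i k * α ^ T ≤ 0 := mul_nonpos_iff.mpr (Or.inr ⟨hcs.le, haT⟩)
        nlinarith [mul_nonneg (neg_nonneg.mpr h3) (sub_nonneg.mpr hq1)]
    have hsplit : B⁻¹ i j = S i j + (B⁻¹ * x ^ T) i j := by
      rw [hSeq, Matrix.sub_apply]; ring
    rw [hsplit]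
    linarith
  have hlim : Filter.Tendsto (fun T : ℕ => -(C * α ^ T)) Filter.atTop (nhds 0) := by
    have := (tendsto_pow_atTop_nhds_zero_of_lt_one hα0.le hα1).const_mul C
    simpa using this.neg
  exact le_of_tendsto hlim (Filter.Eventually.of_forall key)

lemma adj_entry_nonneg {n : ℕ} (P : Matrix (Fin n) (Fin n) ℝ)
    (hP0 : ∀ k l, 0 ≤ P k l) (hP1 : ∀ k, ∑ l, P k l = 1)
    {α : ℝ} (hα0 : 0 < α) (hα1 : α < 1) (i j : Fin n) : 0 ≤ (1 - α • P).adjugate i j := by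
  have hdet : (1 - α • P).det ≠ 0 := det_ne_zero P hP0 hP1 hα0.le hα1
  have hinv : (1 - α • P)⁻¹ i j = ((1 - α • P).det)⁻¹ * (1 - α • P).adjugate i j := by
    rw [Matrix.inv_def, Matrix.smul_apply, smul_eq_mul, Ring.inverse_eq_inv']
  have hpos : 0 < (1 - α • P).det := det_pos P hP0 hP1 hα0 hα1
  have hadj : (1 - α • P).adjugate i j = (1 - α • P).det * (1 - α • P)⁻¹ i j := by
    rw [hinv]; field_simp
  rw [hadj]
  exact mul_nonneg hpos.le (inv_entry_nonneg P hP0 hP1 hα0 hα1 i j)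

lemma det_rows_sum {n : ℕ} (P : Matrix (Fin n) (Fin n) ℝ) (u : Fin n → Fin n → Fin n → ℝ)
    (M : Matrix (Fin n) (Fin n) ℝ) (hM : ∀ k, M k = ∑ l, P k l • u k l) :
    M.det = ∑ φ : Fin n → Fin n, (∏ k, P k (φ k)) * (Matrix.of fun k => u k (φ k)).det := by
  have hMeq : M = Matrix.of fun k => ∑ l, P k l • u k l := by
    ext k m
    rw [show M k m = (M k) m from rfl, hM k]
    rfl
  have hdet : ∀ N : Matrix (Fin n) (Fin n) ℝ,
      N.det = Matrix.detRowAlternating.toMultilinearMap N := fun _ => rfl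
  rw [hMeq, hdet]
  have hms := Matrix.detRowAlternating.toMultilinearMap.map_sum
    (α := fun _ : Fin n => Fin n) (g := fun k l => P k l • u k l)
  rw [show (Matrix.of fun k => ∑ l, P k l • u k l) =
    (fun k => ∑ l, P k l • u k l : Fin n → Fin n → ℝ) from rfl]
  rw [hms]
  apply Finset.sum_congr rfl
  intro φ _
  rw [MultilinearMap.map_smul_univ, smul_eq_mul]
  rfl

/-- The 0/1 pattern matrix of a function. -/
def Pmat (n : ℕ) (φ : Fin n → Fin n) : Matrix (Fin n) (Fin n) ℝ :=
  Matrix.of fun k l => if φ k = l then 1 else 0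

lemma Pmat_nonneg (n : ℕ) (φ : Fin n → Fin n) : ∀ k l, 0 ≤ Pmat n φ k l := by
  intro k l
  simp only [Pmat, Matrix.of_apply]
  split <;> norm_num

lemma Pmat_row_sum (n : ℕ) (φ : Fin n → Fin n) : ∀ k, ∑ l, Pmat n φ k l = 1 := by
  intro k
  simp [Pmat, Finset.sum_ite_eq]

/-- row vector used in the multilinear decomposition -/
def uvec (n : ℕ) (α : ℝ) (k l : Fin n) : Fin n → ℝ :=
  fun m => (if k = m then 1 else 0) - α * (if l = m then 1 else 0)

lemma row_decomp {n : ℕ} (α : ℝ) (P : Matrix (Fin n) (Fin n) ℝ)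
    (hP1 : ∀ k, ∑ l, P k l = 1) (k : Fin n) :
    (1 - α • P) k = ∑ l, P k l • uvec n α k l := by
  funext m
  rw [Finset.sum_apply]
  have hterm : ∀ l : Fin n, (P k l • uvec n α k l) m
      = P k l * (if k = m then 1 else 0) - α * (if l = m then P k l else 0) := by
    intro l
    simp only [Pi.smul_apply, uvec, smul_eq_mul]
    split_ifs <;> ring
  rw [Finset.sum_congr rfl (fun l _ => hterm l), Finset.sum_sub_distrib, ← Finset.sum_mul,
    hP1 k, one_mul, ← Finset.mul_sum, Finset.sum_ite_eq' Finset.univ m (fun l => P k l)]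
  simp [Matrix.sub_apply, Matrix.one_apply, Matrix.smul_apply]

lemma of_uvec {n : ℕ} (α : ℝ) (φ : Fin n → Fin n) :
    (Matrix.of fun k => uvec n α k (φ k)) = 1 - α • Pmat n φ := by
  ext k m
  simp [uvec, Pmat, Matrix.sub_apply, Matrix.one_apply, Matrix.smul_apply]

def uvec' (n : ℕ) (α : ℝ) (i j : Fin n) (k l : Fin n) : Fin n → ℝ :=
  if k = j then Pi.single i 1 else uvec n α k l

lemma row_decomp' {n : ℕ} (α : ℝ) (P : Matrix (Fin n) (Fin n) ℝ)
    (hP1 : ∀ k, ∑ l, P k l = 1) (i j : Fin n) (k : Fin n) :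
    ((1 - α • P).updateRow j (Pi.single i 1)) k = ∑ l, P k l • uvec' n α i j k l := by
  by_cases h : k = j
  · subst h
    rw [Matrix.updateRow_self]
    have : ∀ l : Fin n, uvec' n α i k k l = Pi.single i 1 := fun l => if_pos rfl
    simp_rw [this, ← Finset.sum_smul, hP1 k, one_smul]
  · rw [Matrix.updateRow_ne h]
    have : ∀ l : Fin n, uvec' n α i j k l = uvec n α k l := fun l => if_neg h
    simp_rw [this]
    exact row_decomp α P hP1 k

lemma of_uvec' {n : ℕ} (α : ℝ) (i j : Fin n) (φ : Fin n → Fin n) :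
    (Matrix.of fun k => uvec' n α i j k (φ k))
      = (1 - α • Pmat n φ).updateRow j (Pi.single i 1) := by
  ext k m
  by_cases h : k = j
  · subst h
    simp [uvec', Matrix.updateRow_self]
  · rw [Matrix.of_apply, show uvec' n α i j k (φ k) = uvec n α k (φ k) from if_neg h,
      Matrix.updateRow_ne h]
    simp [uvec, Pmat, Matrix.sub_apply, Matrix.one_apply, Matrix.smul_apply]

lemma det_expand {n : ℕ} (α : ℝ) (P : Matrix (Fin n) (Fin n) ℝ)
    (hP1 : ∀ k, ∑ l, P k l = 1) :
    (1 - α • P).det = ∑ φ : Fin n → Fin n, (∏ k, P k (φ k)) * (1 - α • Pmat n φ).det := by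
  rw [det_rows_sum P (uvec n α) _ (row_decomp α P hP1)]
  exact Finset.sum_congr rfl fun φ _ => by rw [of_uvec]

lemma adj_expand {n : ℕ} (α : ℝ) (P : Matrix (Fin n) (Fin n) ℝ)
    (hP1 : ∀ k, ∑ l, P k l = 1) (i j : Fin n) :
    (1 - α • P).adjugate i j
      = ∑ φ : Fin n → Fin n, (∏ k, P k (φ k)) * (1 - α • Pmat n φ).adjugate i j := by
  rw [Matrix.adjugate_apply, det_rows_sum P (uvec' n α i j) _ (row_decomp' α P hP1 i j)]
  exact Finset.sum_congr rfl fun φ _ => by rw [of_uvec', ← Matrix.adjugate_apply]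

/-- the exponent finsupp of the monomial attached to a function -/
noncomputable def dmon (n : ℕ) (φ : Fin n → Fin n) : (Fin n × Fin n) →₀ ℕ :=
  ∑ k, Finsupp.single (k, φ k) 1

/-- polynomial built from coefficients indexed by functions -/
noncomputable def polyOf (n : ℕ) (c : (Fin n → Fin n) → ℝ) : MvPolynomial (Fin n × Fin n) ℝ :=
  ∑ φ : Fin n → Fin n, MvPolynomial.monomial (dmon n φ) (c φ)

lemma polyOf_totalDegree_le (n : ℕ) (c : (Fin n → Fin n) → ℝ) :
    (polyOf n c).totalDegree ≤ n := by
  refine le_trans (MvPolynomial.totalDegree_finset_sum _ _) (Finset.sup_le ?_)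
  intro φ _
  by_cases h : c φ = 0
  · simp [h]
  · rw [MvPolynomial.totalDegree_monomial _ h, dmon,
      ← Finsupp.sum_finset_sum_index (fun _ => rfl) (fun _ _ _ => rfl)]
    simp [Finsupp.sum_single_index]

lemma polyOf_coeff_nonneg (n : ℕ) (c : (Fin n → Fin n) → ℝ) (hc : ∀ φ, 0 ≤ c φ) :
    ∀ m, 0 ≤ (polyOf n c).coeff m := by
  intro m
  rw [polyOf, MvPolynomial.coeff_sum]
  apply Finset.sum_nonneg
  intro φ _
  rw [MvPolynomial.coeff_monomial]
  split
  · exact hc φ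
  · exact le_refl 0

lemma polyOf_eval (n : ℕ) (c : (Fin n → Fin n) → ℝ) (P : Matrix (Fin n) (Fin n) ℝ) :
    MvPolynomial.eval (fun p : Fin n × Fin n => P p.1 p.2) (polyOf n c)
      = ∑ φ : Fin n → Fin n, c φ * ∏ k, P k (φ k) := by
  rw [polyOf, map_sum]
  apply Finset.sum_congr rfl
  intro φ _
  rw [MvPolynomial.eval_monomial]
  congr 1
  rw [dmon, ← Finsupp.prod_finset_sum_index (fun _ => pow_zero _) (fun _ _ _ => pow_add _ _ _)]
  apply Finset.prod_congr rfl
  intro k _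
  show (Finsupp.single (k, φ k) 1).prod (fun a e => P a.1 a.2 ^ e) = P k (φ k)
  rw [Finsupp.prod_single_index (a := ((k, φ k) : Fin n × Fin n)) (b := 1)
    (h := fun a e => P a.1 a.2 ^ e) (pow_zero (P k (φ k)))]
  exact pow_one _

end Stmt1Aux

open Stmt1Aux in
theorem stmt_1 (n : ℕ) (hn : 1 ≤ n) (i j : Fin n) (α : ℝ) (hα : α ∈ Set.Ioo (0:ℝ) 1) :
    ∃ f g : MvPolynomial (Fin n × Fin n) ℝ,
      f.totalDegree ≤ n ∧ g.totalDegree ≤ n ∧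
      (∀ m, 0 ≤ f.coeff m) ∧ (∀ m, 0 ≤ g.coeff m) ∧
      ∀ P : Matrix (Fin n) (Fin n) ℝ,
        (∀ k l, 0 ≤ P k l) → (∀ k, ∑ l, P k l = 1) →
        0 < MvPolynomial.eval (fun p => P p.1 p.2) g ∧
        (1 - α) * (1 - α • P)⁻¹ i j =
          MvPolynomial.eval (fun p => P p.1 p.2) f /
            MvPolynomial.eval (fun p => P p.1 p.2) g := by
  obtain ⟨hα0, hα1⟩ := hα
  refine ⟨polyOf n (fun φ => (1 - α) * (1 - α • Pmat n φ).adjugate i j),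
    polyOf n (fun φ => (1 - α • Pmat n φ).det),
    polyOf_totalDegree_le n _, polyOf_totalDegree_le n _,
    polyOf_coeff_nonneg n _ (fun φ => mul_nonneg (by linarith)
      (adj_entry_nonneg (Pmat n φ) (Pmat_nonneg n φ) (Pmat_row_sum n φ) hα0 hα1 i j)),
    polyOf_coeff_nonneg n _ (fun φ =>
      (det_pos (Pmat n φ) (Pmat_nonneg n φ) (Pmat_row_sum n φ) hα0 hα1).le), ?_⟩
  intro P hP0 hP1
  have hdetP : 0 < (1 - α • P).det := det_pos P hP0 hP1 hα0 hα1
  have hg : MvPolynomial.eval (fun p : Fin n × Fin n => P p.1 p.2)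
      (polyOf n (fun φ => (1 - α • Pmat n φ).det)) = (1 - α • P).det := by
    rw [polyOf_eval, det_expand α P hP1]
    exact Finset.sum_congr rfl fun φ _ => mul_comm _ _
  have hf : MvPolynomial.eval (fun p : Fin n × Fin n => P p.1 p.2)
      (polyOf n (fun φ => (1 - α) * (1 - α • Pmat n φ).adjugate i j))
        = (1 - α) * (1 - α • P).adjugate i j := by
    rw [polyOf_eval, adj_expand α P hP1 i j, Finset.mul_sum]
    exact Finset.sum_congr rfl fun φ _ => by ring
  refine ⟨by rw [hg]; exact hdetP, ?_⟩
  rw [hf, hg]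
  have hinv : (1 - α • P)⁻¹ i j = ((1 - α • P).det)⁻¹ * (1 - α • P).adjugate i j := by
    rw [Matrix.inv_def, Matrix.smul_apply, smul_eq_mul, Ring.inverse_eq_inv']
  rw [hinv]
  field_simp
end

section
/- Fix n ≥ 1, a state i ∈ {1,…,n}, a discount factor α ∈ (0,1), and a reward vector r ∈ ℝⁿ with nonnegative entries. There exist two polynomials f and g in the n² variables (x_{kℓ})_{1≤k,ℓ≤n}, each of total degree at most n and with nonnegative coefficients, such that for every n×n row-stochastic matrix P one has g(P) > 0 and (1−α)·(((I − α·P)⁻¹) *ᵥ r)_i = f(P)/g(P). -/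
open Matrix

namespace Stmt2Aux

variable {n : ℕ}

/-- The 0/1 stochastic matrix associated to a function `τ`. -/
def Pmat (τ : Fin n → Fin n) : Matrix (Fin n) (Fin n) ℝ :=
  Matrix.of fun k l => if l = τ k then 1 else 0

lemma Pmat_nonneg (τ : Fin n → Fin n) (k l : Fin n) : 0 ≤ Pmat τ k l := by
  unfold Pmat; dsimp only [Matrix.of_apply]; split <;> norm_num

lemma Pmat_rowsum (τ : Fin n → Fin n) (k : Fin n) : ∑ l, Pmat τ k l = 1 := by
  simp [Pmat]

/-- A "row-affine" matrix function of `Q`. -/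
def Mmat (a : Fin n → Fin n → ℝ) (B : Fin n → Matrix (Fin n) (Fin n) ℝ)
    (Q : Matrix (Fin n) (Fin n) ℝ) : Matrix (Fin n) (Fin n) ℝ :=
  Matrix.of fun k l => a k l + ∑ m, Q k m * B k m l

lemma det_updateRow_lin_aux (A : Matrix (Fin n) (Fin n) ℝ) (j : Fin n)
    (s : Finset (Fin n)) (c : Fin n → ℝ) (v : Fin n → Fin n → ℝ) :
    (A.updateRow j (∑ l ∈ s, c l • v l)).det
      = ∑ l ∈ s, c l * (A.updateRow j (v l)).det := by
  classical
  induction s using Finset.induction_on with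
  | empty =>
      have h0 : (0 : Fin n → ℝ) = (0:ℝ) • A j := by simp
      simp only [Finset.sum_empty]
      rw [h0, Matrix.det_updateRow_smul, Matrix.updateRow_eq_self]
      norm_num
  | @insert k s' hk ih =>
      rw [Finset.sum_insert hk, Matrix.det_updateRow_add, Matrix.det_updateRow_smul,
        ih, Finset.sum_insert hk]

lemma det_updateRow_lin (A : Matrix (Fin n) (Fin n) ℝ) (j : Fin n)
    (c : Fin n → ℝ) (v : Fin n → Fin n → ℝ) :
    (A.updateRow j (∑ l, c l • v l)).det
      = ∑ l, c l * (A.updateRow j (v l)).det :=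
  det_updateRow_lin_aux A j Finset.univ c v

lemma Mmat_updateRow (a : Fin n → Fin n → ℝ) (B : Fin n → Matrix (Fin n) (Fin n) ℝ)
    (Q : Matrix (Fin n) (Fin n) ℝ) (j : Fin n) (v : Fin n → ℝ) :
    Mmat a B (Q.updateRow j v)
      = (Mmat a B Q).updateRow j (fun l => a j l + ∑ m, v m * B j m l) := by
  ext k l
  by_cases h : k = j
  · subst h; simp [Mmat]
  · simp [Mmat, Matrix.updateRow_ne h]

/-- Expanding the determinant along one row, using that the row sums to 1. -/
lemma det_Mmat_row (a : Fin n → Fin n → ℝ) (B : Fin n → Matrix (Fin n) (Fin n) ℝ)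
    (Q : Matrix (Fin n) (Fin n) ℝ) (j : Fin n) (h1 : ∑ l, Q j l = 1) :
    (Mmat a B Q).det
      = ∑ l, Q j l *
          (Mmat a B (Q.updateRow j (fun m => if m = l then 1 else 0))).det := by
  classical
  have hrow : (Mmat a B Q) j = ∑ m, Q j m • (fun l => a j l + B j m l) := by
    funext l
    simp only [Mmat, Matrix.of_apply, Finset.sum_apply, Pi.smul_apply, smul_eq_mul]
    rw [Finset.sum_congr rfl (fun m _ => mul_add (Q j m) (a j l) (B j m l)),
      Finset.sum_add_distrib, ← Finset.sum_mul, h1, one_mul]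
  have h2 : (Mmat a B Q).det
      = ((Mmat a B Q).updateRow j (∑ m, Q j m • (fun l => a j l + B j m l))).det := by
    rw [← hrow, Matrix.updateRow_eq_self]
  rw [h2, det_updateRow_lin]
  refine Finset.sum_congr rfl fun l _ => ?_
  congr 1
  have hup : (fun l' => a j l' + B j l l')
      = fun l' => a j l' + ∑ m, (if m = l then (1:ℝ) else 0) * B j m l' := by
    funext l'
    congr 1
    rw [Finset.sum_eq_single l (fun b _ hb => by simp [hb])
      (fun h => absurd (Finset.mem_univ l) h)]
    simp
  rw [Mmat_updateRow, ← hup]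

/-- Matrix interpolating `P` (off `S`) and `Pmat τ` (on `S`). -/
def mix (P : Matrix (Fin n) (Fin n) ℝ) (τ : Fin n → Fin n) (S : Finset (Fin n)) :
    Matrix (Fin n) (Fin n) ℝ :=
  Matrix.of fun k l => if k ∈ S then (if l = τ k then 1 else 0) else P k l

/-- The key expansion: for stochastic `P`, the determinant of a row-affine matrix
function is a convex-type combination of its values at the `0/1` matrices `Pmat τ`. -/
lemma expand (a : Fin n → Fin n → ℝ) (B : Fin n → Matrix (Fin n) (Fin n) ℝ)
    (P : Matrix (Fin n) (Fin n) ℝ) (hrowsum : ∀ k, ∑ l, P k l = 1) :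
    (Mmat a B P).det
      = ∑ τ : Fin n → Fin n, (∏ k, P k (τ k)) * (Mmat a B (Pmat τ)).det := by
  classical
  have main : ∀ S : Finset (Fin n),
      (Mmat a B P).det
        = ∑ τ ∈ Finset.univ.filter (fun τ : Fin n → Fin n => ∀ k ∉ S, τ k = k),
            (∏ k ∈ S, P k (τ k)) * (Mmat a B (mix P τ S)).det := by
    intro S
    induction S using Finset.induction_on with
    | empty =>
        have hfil : (Finset.univ.filter
            (fun τ : Fin n → Fin n => ∀ k ∉ (∅ : Finset (Fin n)), τ k = k))
            = {fun k => k} := by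
          ext τ
          simp [funext_iff]
        rw [hfil]
        have hmix : mix P (fun k => k) (∅ : Finset (Fin n)) = P := by
          ext k l; simp [mix]
        simp [hmix]
    | @insert j S hjS ih =>
        rw [ih]
        have step : ∀ τ ∈ Finset.univ.filter
            (fun τ : Fin n → Fin n => ∀ k ∉ S, τ k = k),
            (∏ k ∈ S, P k (τ k)) * (Mmat a B (mix P τ S)).det
              = ∑ l, (∏ k ∈ insert j S, P k ((Function.update τ j l) k)) *
                  (Mmat a B (mix P (Function.update τ j l) (insert j S))).det := by
          intro τ hτ
          have hQ1 : ∑ l, (mix P τ S) j l = 1 := by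
            have : ∀ l, (mix P τ S) j l = P j l := by
              intro l; simp [mix, hjS]
            simp only [this]; exact hrowsum j
          rw [det_Mmat_row a B (mix P τ S) j hQ1, Finset.mul_sum]
          refine Finset.sum_congr rfl fun l _ => ?_
          have hmix : (mix P τ S).updateRow j (fun m => if m = l then 1 else 0)
              = mix P (Function.update τ j l) (insert j S) := by
            ext k m
            by_cases hk : k = j
            · subst hk
              simp [mix, Matrix.updateRow_self]
            · simp only [Matrix.updateRow_ne hk, mix, Matrix.of_apply,
                Finset.mem_insert]
              by_cases hkS : k ∈ S
              · simp [hkS, hk, Function.update_of_ne hk]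
              · simp [hkS, hk]
          have hprod : ∏ k ∈ insert j S, P k ((Function.update τ j l) k)
              = P j l * ∏ k ∈ S, P k (τ k) := by
            rw [Finset.prod_insert hjS, Function.update_self]
            congr 1
            refine Finset.prod_congr rfl fun k hk => ?_
            rw [Function.update_of_ne (by rintro rfl; exact hjS hk)]
          have hmj : (mix P τ S) j l = P j l := by simp [mix, hjS]
          rw [hmix, hprod, hmj]
          ring
        rw [Finset.sum_congr rfl step]
        rw [← Finset.sum_product']
        refine Finset.sum_bij' (fun p _ => Function.update p.1 j p.2)
          (fun τ' _ => (Function.update τ' j j, τ' j)) ?_ ?_ ?_ ?_ ?_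
        · rintro ⟨τ, l⟩ hp
          dsimp only
          rw [Finset.mem_product] at hp
          have hτ := (Finset.mem_filter.1 hp.1).2
          simp only [Finset.mem_filter, Finset.mem_univ, true_and]
          intro k hk
          simp only [Finset.mem_insert, not_or] at hk
          rw [Function.update_of_ne hk.1]
          exact hτ k hk.2
        · intro τ' hτ'
          have hτ'2 := (Finset.mem_filter.1 hτ').2
          rw [Finset.mem_product]
          refine ⟨Finset.mem_filter.2 ⟨Finset.mem_univ _, ?_⟩, Finset.mem_univ _⟩
          intro k hk
          by_cases hkj : k = j
          · subst hkj; simp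
          · simp only [Function.update_apply, if_neg hkj]
            exact hτ'2 k (by simp [hkj, hk])
        · rintro ⟨τ, l⟩ hp
          dsimp only
          rw [Finset.mem_product] at hp
          have hpj : τ j = j := (Finset.mem_filter.1 hp.1).2 j hjS
          have h1 : Function.update (Function.update τ j l) j j = τ := by
            funext x
            by_cases hx : x = j
            · subst hx; simp [hpj]
            · simp [Function.update_of_ne hx]
          have h2 : (Function.update τ j l) j = l := Function.update_self _ _ _
          simp [h1, h2]
        · intro τ' hτ'
          dsimp only
          funext x
          by_cases hx : x = j
          · subst hx; simp
          · simp [Function.update_of_ne hx]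
        · rintro ⟨τ, l⟩ _
          dsimp only
  have := main Finset.univ
  rw [this]
  refine Finset.sum_congr ?_ fun τ hτ => ?_
  · ext τ; simp
  · have : mix P τ Finset.univ = Pmat τ := by
      ext k l; simp [mix, Pmat]
    rw [this]

lemma mulVec_one_sub_smul (t : ℝ) (P : Matrix (Fin n) (Fin n) ℝ) (v : Fin n → ℝ) (k : Fin n) :
    ((1 - t • P) *ᵥ v) k = v k - t * ∑ l, P k l * v l := by
  simp only [Matrix.mulVec, dotProduct, Matrix.sub_apply, Matrix.smul_apply,
    Matrix.one_apply, smul_eq_mul, sub_mul, ite_mul, one_mul, zero_mul]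
  rw [Finset.sum_sub_distrib, Finset.sum_ite_eq Finset.univ k v, if_pos (Finset.mem_univ k),
    Finset.mul_sum]
  congr 1
  exact Finset.sum_congr rfl fun l _ => by ring

lemma det_one_sub_smul_pos (hn : 1 ≤ n) {α : ℝ} (hα : α ∈ Set.Ioo (0:ℝ) 1)
    (P : Matrix (Fin n) (Fin n) ℝ) (hP : ∀ k l, 0 ≤ P k l) (hrow : ∀ k, ∑ l, P k l = 1) :
    0 < (1 - α • P).det := by
  classical
  obtain ⟨hα0, hα1⟩ := hα
  have hne : ∀ t ∈ Set.Icc (0:ℝ) α, ((1 : Matrix (Fin n) (Fin n) ℝ) - t • P).det ≠ 0 := by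
    rintro t ⟨ht0, htα⟩ hdet
    obtain ⟨v, hv0, hv⟩ := (Matrix.exists_mulVec_eq_zero_iff).2 hdet
    obtain ⟨k₀, _, hk₀⟩ := Finset.exists_max_image Finset.univ (fun k => |v k|)
      ⟨⟨0, hn⟩, Finset.mem_univ _⟩
    have hvk : v k₀ = t * ∑ l, P k₀ l * v l := by
      have h := congrFun hv k₀
      rw [mulVec_one_sub_smul] at h
      simp only [Pi.zero_apply] at h
      linarith
    have hpos : 0 < |v k₀| := by
      obtain ⟨k, hk⟩ := Function.ne_iff.1 hv0
      exact lt_of_lt_of_le (abs_pos.2 hk) (hk₀ k (Finset.mem_univ k))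
    have hb : |v k₀| ≤ t * |v k₀| := by
      calc |v k₀| = t * |∑ l, P k₀ l * v l| := by
            rw [hvk, abs_mul, abs_of_nonneg ht0]
        _ ≤ t * ∑ l, P k₀ l * |v k₀| := by
            refine mul_le_mul_of_nonneg_left ?_ ht0
            refine le_trans (Finset.abs_sum_le_sum_abs _ _) ?_
            refine Finset.sum_le_sum fun l _ => ?_
            rw [abs_mul, abs_of_nonneg (hP k₀ l)]
            exact mul_le_mul_of_nonneg_left (hk₀ l (Finset.mem_univ l)) (hP k₀ l)
        _ = t * |v k₀| := by rw [← Finset.sum_mul, hrow k₀, one_mul]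
    nlinarith
  have hc : Continuous fun t : ℝ => ((1 : Matrix (Fin n) (Fin n) ℝ) - t • P).det :=
    Continuous.matrix_det (continuous_const.sub (continuous_id.smul continuous_const))
  by_contra hle
  push_neg at hle
  have h0 : ((1 : Matrix (Fin n) (Fin n) ℝ) - (0:ℝ) • P).det = 1 := by simp
  have hIVT := intermediate_value_Icc' (le_of_lt hα0) hc.continuousOn
  have h0mem : (0:ℝ) ∈ Set.Icc (((1 : Matrix (Fin n) (Fin n) ℝ) - α • P).det)
      (((1 : Matrix (Fin n) (Fin n) ℝ) - (0:ℝ) • P).det) := ⟨hle, by rw [h0]; norm_num⟩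
  obtain ⟨t, ht, hdet⟩ := hIVT h0mem
  exact hne t ht hdet

lemma inv_mulVec_nonneg (hn : 1 ≤ n) {α : ℝ} (hα : α ∈ Set.Ioo (0:ℝ) 1)
    (r : Fin n → ℝ) (hr : ∀ k, 0 ≤ r k)
    (P : Matrix (Fin n) (Fin n) ℝ) (hP : ∀ k l, 0 ≤ P k l) (hrow : ∀ k, ∑ l, P k l = 1) :
    ∀ k, 0 ≤ ((1 - α • P)⁻¹ *ᵥ r) k := by
  classical
  obtain ⟨hα0, hα1⟩ := hα
  have hdet : IsUnit ((1 : Matrix (Fin n) (Fin n) ℝ) - α • P).det :=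
    isUnit_iff_ne_zero.2 (ne_of_gt (det_one_sub_smul_pos hn ⟨hα0, hα1⟩ P hP hrow))
  set v := ((1 : Matrix (Fin n) (Fin n) ℝ) - α • P)⁻¹ *ᵥ r with hvdef
  have hAv : ((1 : Matrix (Fin n) (Fin n) ℝ) - α • P) *ᵥ v = r := by
    rw [hvdef, Matrix.mulVec_mulVec, Matrix.mul_nonsing_inv _ hdet, Matrix.one_mulVec]
  have hvk : ∀ k, v k = r k + α * ∑ l, P k l * v l := by
    intro k
    have h := congrFun hAv k
    rw [mulVec_one_sub_smul] at h
    linarith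
  obtain ⟨k₀, _, hk₀⟩ := Finset.exists_min_image Finset.univ v ⟨⟨0, hn⟩, Finset.mem_univ _⟩
  have hsum : v k₀ ≤ ∑ l, P k₀ l * v l := by
    calc v k₀ = ∑ l, P k₀ l * v k₀ := by rw [← Finset.sum_mul, hrow k₀, one_mul]
      _ ≤ ∑ l, P k₀ l * v l :=
          Finset.sum_le_sum fun l _ => mul_le_mul_of_nonneg_left
            (hk₀ l (Finset.mem_univ l)) (hP k₀ l)
  have h0 : 0 ≤ v k₀ := by nlinarith [hvk k₀, hr k₀]
  intro k
  exact le_trans h0 (hk₀ k (Finset.mem_univ k))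

lemma det_updateColumn_eq (A : Matrix (Fin n) (Fin n) ℝ) (hA : A.det ≠ 0)
    (b : Fin n → ℝ) (i : Fin n) :
    (A.updateCol i b).det = A.det * (A⁻¹ *ᵥ b) i := by
  have h1 : A⁻¹ *ᵥ b = A.det⁻¹ • Matrix.cramer A b := by
    rw [Matrix.inv_def, Matrix.smul_mulVec, ← Matrix.cramer_eq_adjugate_mulVec,
      Ring.inverse_eq_inv']
  rw [← Matrix.cramer_apply, h1]
  simp only [Pi.smul_apply, smul_eq_mul]
  field_simp

end Stmt2Aux

theorem stmt_2 (n : ℕ) (hn : 1 ≤ n) (i : Fin n) (α : ℝ) (hα : α ∈ Set.Ioo (0:ℝ) 1)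
    (r : Fin n → ℝ) (hr : ∀ k, 0 ≤ r k) :
    ∃ f g : MvPolynomial (Fin n × Fin n) ℝ,
      f.totalDegree ≤ n ∧ g.totalDegree ≤ n ∧
      (∀ m, 0 ≤ f.coeff m) ∧ (∀ m, 0 ≤ g.coeff m) ∧
      ∀ P : Matrix (Fin n) (Fin n) ℝ,
        (∀ k l, 0 ≤ P k l) → (∀ k, ∑ l, P k l = 1) →
        0 < MvPolynomial.eval (fun p => P p.1 p.2) g ∧
        (1 - α) * ((1 - α • P)⁻¹ *ᵥ r) i =
          MvPolynomial.eval (fun p => P p.1 p.2) f /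
            MvPolynomial.eval (fun p => P p.1 p.2) g := by
  classical
  obtain ⟨hα0, hα1⟩ := hα
  -- row-affine data describing `1 - α • Q`
  set ag : Fin n → Fin n → ℝ := fun k l => if l = k then 1 else 0 with hag
  set Bg : Fin n → Matrix (Fin n) (Fin n) ℝ :=
    fun _ => Matrix.of fun m l => if l = m then -α else 0 with hBg
  have hMg : ∀ Q : Matrix (Fin n) (Fin n) ℝ, Stmt2Aux.Mmat ag Bg Q = 1 - α • Q := by
    intro Q
    ext k l
    simp only [Stmt2Aux.Mmat, Matrix.of_apply, Matrix.sub_apply, Matrix.smul_apply,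
      Matrix.one_apply, smul_eq_mul, hag, hBg]
    rw [Finset.sum_eq_single l (fun b _ hb => by simp [Ne.symm hb])
      (fun h => absurd (Finset.mem_univ l) h)]
    by_cases hkl : k = l
    · subst hkl; simp only [if_pos rfl, if_true]; ring
    · rw [if_neg (Ne.symm hkl), if_neg hkl]; simp only [if_pos rfl, if_true]; ring
  -- row-affine data describing `(1 - α • Q).updateCol i r`
  set af : Fin n → Fin n → ℝ :=
    fun k l => if l = i then r k else if l = k then 1 else 0 with haf
  set Bf : Fin n → Matrix (Fin n) (Fin n) ℝ :=
    fun _ => Matrix.of fun m l => if l = i then 0 else if l = m then -α else 0 with hBf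
  have hMf : ∀ Q : Matrix (Fin n) (Fin n) ℝ,
      Stmt2Aux.Mmat af Bf Q = (1 - α • Q).updateCol i r := by
    intro Q
    ext k l
    simp only [Stmt2Aux.Mmat, Matrix.of_apply, Matrix.updateCol_apply,
      Matrix.sub_apply, Matrix.smul_apply, Matrix.one_apply, smul_eq_mul, haf, hBf]
    by_cases hli : l = i
    · simp [hli]
    · simp only [if_neg hli]
      rw [Finset.sum_eq_single l (fun b _ hb => by simp [hli, Ne.symm hb])
        (fun h => absurd (Finset.mem_univ l) h)]
      simp only [if_neg hli, if_pos rfl]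
      by_cases hkl : k = l
      · subst hkl; simp only [if_pos rfl, if_true]; ring
      · rw [if_neg (Ne.symm hkl), if_neg hkl]; simp only [if_pos rfl, if_true]; ring
  -- the weights
  set wg : (Fin n → Fin n) → ℝ :=
    fun τ => ((1 : Matrix (Fin n) (Fin n) ℝ) - α • Stmt2Aux.Pmat τ).det with hwg
  set wf : (Fin n → Fin n) → ℝ :=
    fun τ => (1 - α) *
      (((1 : Matrix (Fin n) (Fin n) ℝ) - α • Stmt2Aux.Pmat τ).updateCol i r).det with hwf
  have hwg_pos : ∀ τ, 0 < wg τ := fun τ =>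
    Stmt2Aux.det_one_sub_smul_pos hn ⟨hα0, hα1⟩ (Stmt2Aux.Pmat τ)
      (Stmt2Aux.Pmat_nonneg τ) (Stmt2Aux.Pmat_rowsum τ)
  have hwf_nonneg : ∀ τ, 0 ≤ wf τ := by
    intro τ
    have hpos := hwg_pos τ
    rw [hwf]
    dsimp only
    rw [Stmt2Aux.det_updateColumn_eq _ (ne_of_gt hpos) r i]
    refine mul_nonneg (by linarith) (mul_nonneg (le_of_lt hpos) ?_)
    exact Stmt2Aux.inv_mulVec_nonneg hn ⟨hα0, hα1⟩ r hr (Stmt2Aux.Pmat τ)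
      (Stmt2Aux.Pmat_nonneg τ) (Stmt2Aux.Pmat_rowsum τ) i
  -- the polynomials
  set F : ((Fin n → Fin n) → ℝ) → MvPolynomial (Fin n × Fin n) ℝ :=
    fun w => ∑ τ : Fin n → Fin n, MvPolynomial.C (w τ) *
      ∏ k, MvPolynomial.X (k, τ k) with hF
  have heval : ∀ (w : (Fin n → Fin n) → ℝ) (P : Matrix (Fin n) (Fin n) ℝ),
      MvPolynomial.eval (fun p => P p.1 p.2) (F w)
        = ∑ τ : Fin n → Fin n, w τ * ∏ k, P k (τ k) := by
    intro w P
    rw [hF]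
    dsimp only
    rw [map_sum]
    refine Finset.sum_congr rfl fun τ _ => ?_
    rw [_root_.map_mul, MvPolynomial.eval_C, _root_.map_prod]
    simp [MvPolynomial.eval_X]
  have hdeg : ∀ w, (F w).totalDegree ≤ n := by
    intro w
    refine MvPolynomial.totalDegree_finsetSum_le fun τ _ => ?_
    refine le_trans (MvPolynomial.totalDegree_mul _ _) ?_
    rw [MvPolynomial.totalDegree_C, zero_add]
    refine le_trans (MvPolynomial.totalDegree_finset_prod _ _) ?_
    calc ∑ k : Fin n, (MvPolynomial.X (k, τ k) :
            MvPolynomial (Fin n × Fin n) ℝ).totalDegree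
        = ∑ _k : Fin n, 1 := by
          refine Finset.sum_congr rfl fun k _ => ?_
          exact MvPolynomial.totalDegree_X _
      _ ≤ n := by simp
  have hcoeff : ∀ (w : (Fin n → Fin n) → ℝ), (∀ τ, 0 ≤ w τ) →
      ∀ m, 0 ≤ MvPolynomial.coeff m (F w) := by
    intro w hw m
    rw [hF]
    dsimp only
    rw [MvPolynomial.coeff_sum]
    refine Finset.sum_nonneg fun τ _ => ?_
    rw [MvPolynomial.coeff_C_mul]
    refine mul_nonneg (hw τ) ?_
    have hprod : ∀ m', 0 ≤ MvPolynomial.coeff m'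
        (∏ k, (MvPolynomial.X (k, τ k) : MvPolynomial (Fin n × Fin n) ℝ)) := by
      refine Finset.prod_induction _ (fun q => ∀ m', 0 ≤ MvPolynomial.coeff m' q)
        ?_ ?_ ?_
      · intro q1 q2 h1 h2 m'
        rw [MvPolynomial.coeff_mul]
        exact Finset.sum_nonneg fun p _ => mul_nonneg (h1 p.1) (h2 p.2)
      · intro m'
        rw [MvPolynomial.coeff_one]
        split <;> norm_num
      · intro k _ m'
        rw [MvPolynomial.coeff_X']
        split <;> norm_num
    exact hprod m
  refine ⟨F wf, F wg, hdeg wf, hdeg wg, hcoeff wf hwf_nonneg,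
    hcoeff wg fun τ => le_of_lt (hwg_pos τ), ?_⟩
  intro P hP hrow
  have hdetpos : 0 < ((1 : Matrix (Fin n) (Fin n) ℝ) - α • P).det :=
    Stmt2Aux.det_one_sub_smul_pos hn ⟨hα0, hα1⟩ P hP hrow
  have hg_eval : MvPolynomial.eval (fun p => P p.1 p.2) (F wg)
      = ((1 : Matrix (Fin n) (Fin n) ℝ) - α • P).det := by
    rw [heval wg P]
    have hexp := Stmt2Aux.expand ag Bg P hrow
    rw [hMg P] at hexp
    rw [hexp]
    refine Finset.sum_congr rfl fun τ _ => ?_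
    rw [hMg (Stmt2Aux.Pmat τ)]
    ring
  have hf_eval : MvPolynomial.eval (fun p => P p.1 p.2) (F wf)
      = (1 - α) * (((1 : Matrix (Fin n) (Fin n) ℝ) - α • P).updateCol i r).det := by
    rw [heval wf P]
    have hexp := Stmt2Aux.expand af Bf P hrow
    rw [hMf P] at hexp
    rw [hexp, Finset.mul_sum]
    refine Finset.sum_congr rfl fun τ _ => ?_
    rw [hwf]
    dsimp only
    rw [hMf (Stmt2Aux.Pmat τ)]
    ring
  constructor
  · rw [hg_eval]; exact hdetpos
  · rw [hg_eval, hf_eval,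
      Stmt2Aux.det_updateColumn_eq _ (ne_of_gt hdetpos) r i]
    field_simp
end

section
/- Let α, ε ∈ (0,1), let P₁, P₂ be n×n row-stochastic matrices and r₁, r₂ ∈ ℝⁿ reward vectors, and let i ∈ {1,…,n}. Assume: (A1) P₁ and P₂ have the same support, i.e. for all k, ℓ, (P₁)_{kℓ} > 0 ↔ (P₂)_{kℓ} > 0; (A2) for all k, ℓ with (P₁)_{kℓ} > 0 and (P₂)_{kℓ} > 0, max((P₁)_{kℓ}/(P₂)_{kℓ}, (P₂)_{kℓ}/(P₁)_{kℓ}) − 1 ≤ ε/(8n); (A3) for all k, |(r₁)_k − (r₂)_k| ≤ ε/2. Then, writing v₁ = (I − α·P₁)⁻¹ *ᵥ r₁ and v₂ = (I − α·P₂)⁻¹ *ᵥ r₂, one has (1−α)·|(v₁)_i − (v₂)_i| ≤ ε/2 + (ε/2)·(max_k |(r₁)_k|). -/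
open Matrix


namespace Stmt3Aux

variable {n : ℕ}

/-- Neumann series inverse of `1 - α • M`, defined entrywise. -/
noncomputable def geomInv (α : ℝ) (M : Matrix (Fin n) (Fin n) ℝ) : Matrix (Fin n) (Fin n) ℝ :=
  Matrix.of fun i j => ∑' t : ℕ, ((α • M) ^ t) i j

section basic

variable {α : ℝ} {M : Matrix (Fin n) (Fin n) ℝ}
variable (hα0 : 0 < α) (hα1 : α < 1) (hM : ∀ i j, 0 ≤ M i j) (hMrow : ∀ i, ∑ j, M i j ≤ 1)

include hα0 hM in
lemma pow_entry_nonneg : ∀ (t : ℕ) (i j : Fin n), 0 ≤ ((α • M) ^ t) i j := by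
  intro t
  induction t with
  | zero =>
    intro i j
    simp only [pow_zero]
    by_cases h : i = j <;> simp [Matrix.one_apply, h]
  | succ t ih =>
    intro i j
    rw [pow_succ, Matrix.mul_apply]
    exact Finset.sum_nonneg fun l _ => mul_nonneg (ih i l)
      (by simpa using mul_nonneg hα0.le (hM l j))

include hα0 hα1 hM hMrow in
lemma pow_row_le : ∀ (t : ℕ) (i : Fin n), ∑ j, ((α • M) ^ t) i j ≤ α ^ t := by
  intro t
  induction t with
  | zero => intro i; simp [Matrix.one_apply]
  | succ t ih =>
    intro i
    have : ∑ j, ((α • M) ^ (t + 1)) i j = ∑ l, ((α • M) ^ t) i l * (α * ∑ j, M l j) := by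
      calc ∑ j, ((α • M) ^ (t + 1)) i j
          = ∑ j, ∑ l, ((α • M) ^ t) i l * (α * M l j) := by
            simp [pow_succ, Matrix.mul_apply, Matrix.smul_apply, smul_eq_mul]
        _ = ∑ l, ∑ j, ((α • M) ^ t) i l * (α * M l j) := Finset.sum_comm
        _ = ∑ l, ((α • M) ^ t) i l * (α * ∑ j, M l j) := by
            refine Finset.sum_congr rfl fun l _ => ?_
            rw [Finset.mul_sum, Finset.mul_sum]
    rw [this, pow_succ]
    calc ∑ l, ((α • M) ^ t) i l * (α * ∑ j, M l j)
        ≤ ∑ l, ((α • M) ^ t) i l * α := by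
          refine Finset.sum_le_sum fun l _ => ?_
          exact mul_le_mul_of_nonneg_left
            (by nlinarith [hMrow l, hα0.le]) (pow_entry_nonneg hα0 hM t i l)
      _ = (∑ l, ((α • M) ^ t) i l) * α := by rw [← Finset.sum_mul]
      _ ≤ α ^ t * α := mul_le_mul_of_nonneg_right (ih i) hα0.le

include hα0 hα1 hM hMrow in
lemma summable_pow_entry (i j : Fin n) : Summable fun t : ℕ => ((α • M) ^ t) i j := by
  refine Summable.of_nonneg_of_le (fun t => pow_entry_nonneg hα0 hM t i j) (fun t => ?_)
    (summable_geometric_of_lt_one hα0.le hα1)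
  calc ((α • M) ^ t) i j ≤ ∑ l, ((α • M) ^ t) i l :=
        Finset.single_le_sum (fun l _ => pow_entry_nonneg hα0 hM t i l) (Finset.mem_univ j)
    _ ≤ α ^ t := pow_row_le hα0 hα1 hM hMrow t i

include hα0 hM in
lemma geomInv_nonneg (i j : Fin n) :
    0 ≤ geomInv α M i j :=
  tsum_nonneg fun t => pow_entry_nonneg hα0 hM t i j

include hα0 hα1 hM hMrow in
lemma geomInv_diag_ge_one (j : Fin n) : 1 ≤ geomInv α M j j := by
  have h := Summable.le_tsum (summable_pow_entry hα0 hα1 hM hMrow j j) 0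
    (fun t _ => pow_entry_nonneg hα0 hM t j j)
  simpa [Matrix.one_apply, geomInv] using h

include hα0 hα1 hM hMrow in
lemma geomInv_row_le (i : Fin n) : ∑ j, geomInv α M i j ≤ (1 - α)⁻¹ := by
  have hswap : ∑ j, geomInv α M i j = ∑' t : ℕ, ∑ j, ((α • M) ^ t) i j := by
    rw [geomInv]
    exact (Summable.tsum_finsetSum fun j _ => summable_pow_entry hα0 hα1 hM hMrow i j).symm
  rw [hswap, ← tsum_geometric_of_lt_one hα0.le hα1]
  refine Summable.tsum_le_tsum (fun t => pow_row_le hα0 hα1 hM hMrow t i) ?_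
    (summable_geometric_of_lt_one hα0.le hα1)
  · refine Summable.of_nonneg_of_le (fun t => Finset.sum_nonneg fun j _ =>
      pow_entry_nonneg hα0 hM t i j) (fun t => pow_row_le hα0 hα1 hM hMrow t i)
      (summable_geometric_of_lt_one hα0.le hα1)

include hα0 hα1 hM in
lemma pow_row_eq (hMrow' : ∀ i, ∑ j, M i j = 1) :
    ∀ (t : ℕ) (i : Fin n), ∑ j, ((α • M) ^ t) i j = α ^ t := by
  intro t
  induction t with
  | zero => intro i; simp [Matrix.one_apply]
  | succ t ih =>
    intro i
    have : ∑ j, ((α • M) ^ (t + 1)) i j = ∑ l, ((α • M) ^ t) i l * (α * ∑ j, M l j) := by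
      calc ∑ j, ((α • M) ^ (t + 1)) i j
          = ∑ j, ∑ l, ((α • M) ^ t) i l * (α * M l j) := by
            simp [pow_succ, Matrix.mul_apply, Matrix.smul_apply, smul_eq_mul]
        _ = ∑ l, ∑ j, ((α • M) ^ t) i l * (α * M l j) := Finset.sum_comm
        _ = ∑ l, ((α • M) ^ t) i l * (α * ∑ j, M l j) := by
            refine Finset.sum_congr rfl fun l _ => ?_
            rw [Finset.mul_sum, Finset.mul_sum]
    rw [this, pow_succ]
    simp only [hMrow', mul_one]
    rw [← Finset.sum_mul, ih i]

include hα0 hα1 hM in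
lemma geomInv_row_eq (hMrow' : ∀ i, ∑ j, M i j = 1) (i : Fin n) :
    ∑ j, geomInv α M i j = (1 - α)⁻¹ := by
  have hMrow : ∀ i, ∑ j, M i j ≤ 1 := fun i => (hMrow' i).le
  have hswap : ∑ j, geomInv α M i j = ∑' t : ℕ, ∑ j, ((α • M) ^ t) i j := by
    rw [geomInv]
    exact (Summable.tsum_finsetSum fun j _ => summable_pow_entry hα0 hα1 hM hMrow i j).symm
  rw [hswap]
  have : (fun t : ℕ => ∑ j, ((α • M) ^ t) i j) = fun t : ℕ => α ^ t := by
    ext t; exact pow_row_eq hα0 hα1 hM hMrow' t i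
  rw [this, tsum_geometric_of_lt_one hα0.le hα1]

set_option maxHeartbeats 1000000 in
include hα0 hα1 hM hMrow in
lemma one_sub_mul_geomInv : (1 - α • M) * geomInv α M = 1 := by
  ext i j
  have hsum : ∀ l j, Summable fun t : ℕ => ((α • M) ^ t) l j :=
    fun l j => summable_pow_entry hα0 hα1 hM hMrow l j
  have step1 : ((1 - α • M) * geomInv α M) i j
      = ∑ l, ∑' t : ℕ, (1 - α • M) i l * ((α • M) ^ t) l j := by
    rw [Matrix.mul_apply]
    refine Finset.sum_congr rfl fun l _ => ?_
    rw [geomInv, Matrix.of_apply, ← tsum_mul_left]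
  have step2 : ∑ l, ∑' t : ℕ, (1 - α • M) i l * ((α • M) ^ t) l j
      = ∑' t : ℕ, ∑ l, (1 - α • M) i l * ((α • M) ^ t) l j :=
    (Summable.tsum_finsetSum fun l _ => (hsum l j).mul_left _).symm
  have step3 : ∀ t : ℕ, ∑ l, (1 - α • M) i l * ((α • M) ^ t) l j
      = ((α • M) ^ t) i j - ((α • M) ^ (t + 1)) i j := by
    intro t
    have : ((1 - α • M) * (α • M) ^ t) i j = ((α • M) ^ t) i j - ((α • M) ^ (t + 1)) i j := by
      rw [sub_mul, one_mul, ← pow_succ', Matrix.sub_apply]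
    rw [← this, Matrix.mul_apply]
  have hshift : Summable fun t : ℕ => ((α • M) ^ (t + 1)) i j :=
    (summable_nat_add_iff (f := fun t => ((α • M) ^ t) i j) 1).mpr (hsum i j)
  have step4 : ∑' t : ℕ, (((α • M) ^ t) i j - ((α • M) ^ (t + 1)) i j)
      = ((α • M) ^ 0) i j := by
    rw [Summable.tsum_sub (hsum i j) hshift]
    have := Summable.tsum_eq_zero_add (hsum i j)
    linarith
  rw [step1, step2]
  calc ∑' t : ℕ, ∑ l, (1 - α • M) i l * ((α • M) ^ t) l j
      = ∑' t : ℕ, (((α • M) ^ t) i j - ((α • M) ^ (t + 1)) i j) := by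
        exact tsum_congr step3
    _ = ((α • M) ^ 0) i j := step4
    _ = (1 : Matrix (Fin n) (Fin n) ℝ) i j := by rw [pow_zero]

include hα0 hα1 hM hMrow in
lemma geomInv_mul_one_sub : geomInv α M * (1 - α • M) = 1 :=
  mul_eq_one_comm.mpr (one_sub_mul_geomInv hα0 hα1 hM hMrow)

include hα0 hα1 hM hMrow in
lemma inv_eq_geomInv : (1 - α • M)⁻¹ = geomInv α M :=
  Matrix.inv_eq_right_inv (one_sub_mul_geomInv hα0 hα1 hM hMrow)

end basic

/-- `P` with row `k` zeroed out. -/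
def Qof (P : Matrix (Fin n) (Fin n) ℝ) (k : Fin n) : Matrix (Fin n) (Fin n) ℝ :=
  Matrix.of fun a b => if a = k then 0 else P a b

section repr

variable {α : ℝ} {P : Matrix (Fin n) (Fin n) ℝ}

lemma Qof_nonneg (hP : ∀ a b, 0 ≤ P a b) (k : Fin n) : ∀ a b, 0 ≤ Qof P k a b := by
  intro a b
  by_cases h : a = k <;> simp [Qof, h, hP a b]

lemma Qof_row_le (hP : ∀ a b, 0 ≤ P a b) (hProw : ∀ a, ∑ b, P a b = 1) (k : Fin n) :
    ∀ a, ∑ b, Qof P k a b ≤ 1 := by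
  intro a
  by_cases h : a = k <;> simp [Qof, h, (hProw a).le]

lemma repr_lemma (hα0 : 0 < α) (hα1 : α < 1)
    (hP : ∀ a b, 0 ≤ P a b) (hProw : ∀ a, ∑ b, P a b = 1) (k i j : Fin n) :
    geomInv α P i j = geomInv α (Qof P k) i j
      + α * geomInv α P i k * ∑ l, P k l * geomInv α (Qof P k) l j := by
  set A := geomInv α P with hA
  set W := geomInv α (Qof P k) with hW
  set X := (1 - α • Qof P k) with hX
  have hQ0 : ∀ a b, 0 ≤ Qof P k a b := Qof_nonneg hP k
  have hQrow : ∀ a, ∑ b, Qof P k a b ≤ 1 := Qof_row_le hP hProw k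
  have hAmul : A * (1 - α • P) = 1 := geomInv_mul_one_sub hα0 hα1 hP (fun a => (hProw a).le)
  have hWmul : X * W = 1 := one_sub_mul_geomInv hα0 hα1 hQ0 hQrow
  have star : ∀ jj, ∑ l, A i l * X l jj
      = (1 : Matrix (Fin n) (Fin n) ℝ) i jj + α * A i k * P k jj := by
    intro jj
    have h1 : ∑ l, A i l * (1 - α • P) l jj = (1 : Matrix (Fin n) (Fin n) ℝ) i jj := by
      rw [← Matrix.mul_apply, hAmul]
    have h2 : ∀ l, X l jj
        = (1 - α • P) l jj + α * (if l = k then P k jj else 0) := by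
      intro l
      by_cases h : l = k <;>
        simp [hX, Qof, Matrix.sub_apply, Matrix.smul_apply, Matrix.one_apply, h, smul_eq_mul]
    calc ∑ l, A i l * X l jj
        = ∑ l, (A i l * (1 - α • P) l jj
            + α * (if l = k then A i l * P k jj else 0)) := by
          refine Finset.sum_congr rfl fun l _ => ?_
          rw [h2]
          by_cases h : l = k <;> simp [h] <;> ring
      _ = (∑ l, A i l * (1 - α • P) l jj)
            + α * ∑ l, (if l = k then A i l * P k jj else 0) := by
          rw [Finset.sum_add_distrib, Finset.mul_sum]
      _ = (1 : Matrix (Fin n) (Fin n) ℝ) i jj + α * A i k * P k jj := by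
          rw [h1, Finset.sum_ite_eq' Finset.univ k (fun l => A i l * P k jj)]
          simp [mul_assoc]
  have key : A i j = ∑ jj, (∑ l, A i l * X l jj) * W jj j := by
    have swap : ∑ jj, (∑ l, A i l * X l jj) * W jj j
        = ∑ l, A i l * ∑ jj, X l jj * W jj j := by
      calc ∑ jj, (∑ l, A i l * X l jj) * W jj j
          = ∑ jj, ∑ l, A i l * (X l jj * W jj j) := by
            refine Finset.sum_congr rfl fun jj _ => ?_
            rw [Finset.sum_mul]
            exact Finset.sum_congr rfl fun l _ => by ring
        _ = ∑ l, ∑ jj, A i l * (X l jj * W jj j) := Finset.sum_comm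
        _ = ∑ l, A i l * ∑ jj, X l jj * W jj j := by
            exact Finset.sum_congr rfl fun l _ => (Finset.mul_sum _ _ _).symm
    have hid : ∀ l, ∑ jj, X l jj * W jj j = (1 : Matrix (Fin n) (Fin n) ℝ) l j := by
      intro l; rw [← Matrix.mul_apply, hWmul]
    rw [swap]
    simp only [hid, Matrix.one_apply]
    rw [Finset.sum_congr rfl (fun l _ => by
      rw [mul_ite, mul_one, mul_zero] :
      ∀ l ∈ Finset.univ, A i l * (if l = j then (1:ℝ) else 0)
        = if l = j then A i l else 0)]
    rw [Finset.sum_ite_eq' Finset.univ j (fun l => A i l)]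
    simp
  calc A i j = ∑ jj, (∑ l, A i l * X l jj) * W jj j := key
    _ = ∑ jj, ((1 : Matrix (Fin n) (Fin n) ℝ) i jj * W jj j
          + α * A i k * (P k jj * W jj j)) := by
        refine Finset.sum_congr rfl fun jj _ => ?_
        rw [star jj]; ring
    _ = W i j + α * A i k * ∑ jj, P k jj * W jj j := by
        rw [Finset.sum_add_distrib, ← Finset.mul_sum]
        congr 1
        simp only [Matrix.one_apply]
        rw [Finset.sum_congr rfl (fun jj _ => by
          rw [ite_mul, one_mul, zero_mul] :
          ∀ jj ∈ Finset.univ, (if i = jj then (1:ℝ) else 0) * W jj j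
            = if i = jj then W jj j else 0)]
        simp

end repr

lemma row_perturb {α : ℝ} (hα0 : 0 < α) (hα1 : α < 1)
    {P₁ P₂ : Matrix (Fin n) (Fin n) ℝ}
    (hP₁ : ∀ a b, 0 ≤ P₁ a b) (hP₁row : ∀ a, ∑ b, P₁ a b = 1)
    (hP₂ : ∀ a b, 0 ≤ P₂ a b) (hP₂row : ∀ a, ∑ b, P₂ a b = 1)
    (k : Fin n) (hoff : ∀ a b, a ≠ k → P₁ a b = P₂ a b)
    {c : ℝ} (hc : 1 ≤ c)
    (h12 : ∀ l, P₁ k l ≤ c * P₂ k l) (h21 : ∀ l, P₂ k l ≤ c * P₁ k l)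
    (i j : Fin n) :
    geomInv α P₂ i j ≤ c ^ 2 * geomInv α P₁ i j := by
  have hQeq : Qof P₂ k = Qof P₁ k := by
    ext a b
    by_cases h : a = k
    · simp [Qof, h]
    · simp only [Qof, Matrix.of_apply, if_neg h]
      exact (hoff a b h).symm
  set A₁ := geomInv α P₁ with hA₁
  set A₂ := geomInv α P₂ with hA₂
  set W := geomInv α (Qof P₁ k) with hWdef
  have hQ0 : ∀ a b, 0 ≤ Qof P₁ k a b := Qof_nonneg hP₁ k
  have hQrow : ∀ a, ∑ b, Qof P₁ k a b ≤ 1 := Qof_row_le hP₁ hP₁row k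
  have hWnn : ∀ a b, 0 ≤ W a b := fun a b => geomInv_nonneg hα0 hQ0 a b
  have hWdiag : ∀ a, 1 ≤ W a a := fun a => geomInv_diag_ge_one hα0 hα1 hQ0 hQrow a
  set g₁ : Fin n → ℝ := fun j => ∑ l, P₁ k l * W l j with hg₁
  set g₂ : Fin n → ℝ := fun j => ∑ l, P₂ k l * W l j with hg₂
  set t₁ : ℝ := α * A₁ i k with ht₁def
  set t₂ : ℝ := α * A₂ i k with ht₂def
  have rep₁ : ∀ jj, A₁ i jj = W i jj + t₁ * g₁ jj := fun jj =>
    repr_lemma hα0 hα1 hP₁ hP₁row k i jj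
  have rep₂ : ∀ jj, A₂ i jj = W i jj + t₂ * g₂ jj := by
    intro jj
    have := repr_lemma hα0 hα1 hP₂ hP₂row k i jj
    rwa [hQeq] at this
  have ht₁nn : 0 ≤ t₁ := mul_nonneg hα0.le (geomInv_nonneg hα0 hP₁ i k)
  have ht₂nn : 0 ≤ t₂ := mul_nonneg hα0.le (geomInv_nonneg hα0 hP₂ i k)
  have hg₁nn : ∀ jj, 0 ≤ g₁ jj := fun jj =>
    Finset.sum_nonneg fun l _ => mul_nonneg (hP₁ k l) (hWnn l jj)
  have hg₂nn : ∀ jj, 0 ≤ g₂ jj := fun jj =>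
    Finset.sum_nonneg fun l _ => mul_nonneg (hP₂ k l) (hWnn l jj)
  set G₁ : ℝ := ∑ jj, g₁ jj with hG₁def
  set G₂ : ℝ := ∑ jj, g₂ jj with hG₂def
  have hsum₁ : (1 - α)⁻¹ = (∑ jj, W i jj) + t₁ * G₁ := by
    rw [← geomInv_row_eq hα0 hα1 hP₁ hP₁row i, Finset.sum_congr rfl fun jj _ => rep₁ jj,
      Finset.sum_add_distrib, ← Finset.mul_sum]
  have hsum₂ : (1 - α)⁻¹ = (∑ jj, W i jj) + t₂ * G₂ := by
    rw [← geomInv_row_eq hα0 hα1 hP₂ hP₂row i, Finset.sum_congr rfl fun jj _ => rep₂ jj,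
      Finset.sum_add_distrib, ← Finset.mul_sum]
  have heq : t₁ * G₁ = t₂ * G₂ := by linarith
  have hgP₂ : ∀ jj, P₂ k jj ≤ g₂ jj := by
    intro jj
    calc P₂ k jj = P₂ k jj * 1 := (mul_one _).symm
      _ ≤ P₂ k jj * W jj jj := by
          exact mul_le_mul_of_nonneg_left (hWdiag jj) (hP₂ k jj)
      _ ≤ ∑ l, P₂ k l * W l jj :=
          Finset.single_le_sum (fun l _ => mul_nonneg (hP₂ k l) (hWnn l jj))
            (Finset.mem_univ jj)
  have hG₂pos : (0:ℝ) < G₂ := by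
    have : (1:ℝ) ≤ G₂ := by
      rw [hG₂def, ← hP₂row k]
      exact Finset.sum_le_sum fun jj _ => hgP₂ jj
    linarith
  have hg21 : ∀ jj, g₂ jj ≤ c * g₁ jj := by
    intro jj
    rw [hg₁, Finset.mul_sum]
    refine Finset.sum_le_sum fun l _ => ?_
    calc P₂ k l * W l jj ≤ (c * P₁ k l) * W l jj :=
          mul_le_mul_of_nonneg_right (h21 l) (hWnn l jj)
      _ = c * (P₁ k l * W l jj) := by ring
  have hg12 : ∀ jj, g₁ jj ≤ c * g₂ jj := by
    intro jj
    rw [hg₂, Finset.mul_sum]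
    refine Finset.sum_le_sum fun l _ => ?_
    calc P₁ k l * W l jj ≤ (c * P₂ k l) * W l jj :=
          mul_le_mul_of_nonneg_right (h12 l) (hWnn l jj)
      _ = c * (P₂ k l * W l jj) := by ring
  have hG12 : G₁ ≤ c * G₂ := by
    rw [hG₁def, hG₂def, Finset.mul_sum]
    exact Finset.sum_le_sum fun jj _ => hg12 jj
  have ht₂le : t₂ ≤ c * t₁ := by
    have h1 : t₂ * G₂ ≤ (c * t₁) * G₂ := by
      calc t₂ * G₂ = t₁ * G₁ := heq.symm
        _ ≤ t₁ * (c * G₂) := mul_le_mul_of_nonneg_left hG12 ht₁nn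
        _ = (c * t₁) * G₂ := by ring
    exact le_of_mul_le_mul_right h1 hG₂pos
  rw [rep₂ j, rep₁ j]
  have hprod : t₂ * g₂ j ≤ (c * t₁) * (c * g₁ j) :=
    mul_le_mul ht₂le (hg21 j) (hg₂nn j) (by positivity)
  have hWij : 0 ≤ W i j := hWnn i j
  have hc2 : (1:ℝ) ≤ c ^ 2 := by nlinarith
  nlinarith [mul_nonneg ht₁nn (hg₁nn j), hprod, hWij]

/-- Hybrid matrix: rows with index `< m` from `P₂`, the rest from `P₁`. -/
def Pmix (P₁ P₂ : Matrix (Fin n) (Fin n) ℝ) (m : ℕ) : Matrix (Fin n) (Fin n) ℝ :=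
  Matrix.of fun a b => if (a : ℕ) < m then P₂ a b else P₁ a b

lemma chain {α : ℝ} (hα0 : 0 < α) (hα1 : α < 1)
    {P₁ P₂ : Matrix (Fin n) (Fin n) ℝ}
    (hP₁ : ∀ a b, 0 ≤ P₁ a b) (hP₁row : ∀ a, ∑ b, P₁ a b = 1)
    (hP₂ : ∀ a b, 0 ≤ P₂ a b) (hP₂row : ∀ a, ∑ b, P₂ a b = 1)
    {c : ℝ} (hc : 1 ≤ c)
    (hcmp : ∀ k l, P₁ k l ≤ c * P₂ k l ∧ P₂ k l ≤ c * P₁ k l) (i j : Fin n) :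
    geomInv α P₂ i j ≤ c ^ (2 * n) * geomInv α P₁ i j ∧
    geomInv α P₁ i j ≤ c ^ (2 * n) * geomInv α P₂ i j := by
  have hc0 : (0:ℝ) < c := lt_of_lt_of_le one_pos hc
  have hmix0 : Pmix P₁ P₂ 0 = P₁ := by
    ext a b; simp [Pmix]
  have hmixn : Pmix P₁ P₂ n = P₂ := by
    ext a b; simp [Pmix, a.isLt]
  have hmixnn : ∀ m a b, 0 ≤ Pmix P₁ P₂ m a b := by
    intro m a b
    by_cases h : (a:ℕ) < m <;> simp [Pmix, h, hP₁ a b, hP₂ a b]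
  have hmixrow : ∀ m a, ∑ b, Pmix P₁ P₂ m a b = 1 := by
    intro m a
    by_cases h : (a:ℕ) < m <;> simp [Pmix, h, hP₁row a, hP₂row a]
  have main : ∀ m : ℕ, ∀ i j : Fin n,
      geomInv α (Pmix P₁ P₂ m) i j ≤ c ^ (2 * m) * geomInv α P₁ i j ∧
      geomInv α P₁ i j ≤ c ^ (2 * m) * geomInv α (Pmix P₁ P₂ m) i j := by
    intro m
    induction m with
    | zero => intro i j; rw [hmix0]; norm_num
    | succ m ih =>
      intro i j
      have hpowpos : (0:ℝ) < c ^ (2 * m) := pow_pos hc0 _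
      have hpoweq : c ^ (2 * (m + 1)) = c ^ 2 * c ^ (2 * m) := by ring
      by_cases hm : m < n
      · set k : Fin n := ⟨m, hm⟩ with hk
        have hrowm : ∀ b, Pmix P₁ P₂ m k b = P₁ k b := by
          intro b; simp [Pmix, hk]
        have hrowm1 : ∀ b, Pmix P₁ P₂ (m + 1) k b = P₂ k b := by
          intro b; simp [Pmix, hk]
        have hoff : ∀ a b, a ≠ k → Pmix P₁ P₂ m a b = Pmix P₁ P₂ (m + 1) a b := by
          intro a b ha
          have hane : (a:ℕ) ≠ m := fun h => ha (Fin.ext h)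
          have hiff : ((a:ℕ) < m) ↔ ((a:ℕ) < m + 1) := by omega
          simp [Pmix, hiff]
        have step1 : ∀ i j, geomInv α (Pmix P₁ P₂ (m+1)) i j
            ≤ c ^ 2 * geomInv α (Pmix P₁ P₂ m) i j := by
          intro i j
          refine row_perturb hα0 hα1 (hmixnn m) (hmixrow m) (hmixnn (m+1)) (hmixrow (m+1))
            k hoff hc (fun l => ?_) (fun l => ?_) i j
          · rw [hrowm l, hrowm1 l]; exact (hcmp k l).1
          · rw [hrowm l, hrowm1 l]; exact (hcmp k l).2
        have step2 : ∀ i j, geomInv α (Pmix P₁ P₂ m) i j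
            ≤ c ^ 2 * geomInv α (Pmix P₁ P₂ (m+1)) i j := by
          intro i j
          refine row_perturb hα0 hα1 (hmixnn (m+1)) (hmixrow (m+1)) (hmixnn m) (hmixrow m)
            k (fun a b ha => (hoff a b ha).symm) hc (fun l => ?_) (fun l => ?_) i j
          · rw [hrowm l, hrowm1 l]; exact (hcmp k l).2
          · rw [hrowm l, hrowm1 l]; exact (hcmp k l).1
        constructor
        · calc geomInv α (Pmix P₁ P₂ (m+1)) i j ≤ c ^ 2 * geomInv α (Pmix P₁ P₂ m) i j :=
              step1 i j
            _ ≤ c ^ 2 * (c ^ (2*m) * geomInv α P₁ i j) :=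
              mul_le_mul_of_nonneg_left (ih i j).1 (by positivity)
            _ = c ^ (2 * (m+1)) * geomInv α P₁ i j := by rw [hpoweq]; ring
        · calc geomInv α P₁ i j ≤ c ^ (2*m) * geomInv α (Pmix P₁ P₂ m) i j := (ih i j).2
            _ ≤ c ^ (2*m) * (c ^ 2 * geomInv α (Pmix P₁ P₂ (m+1)) i j) :=
              mul_le_mul_of_nonneg_left (step2 i j) (by positivity)
            _ = c ^ (2 * (m+1)) * geomInv α (Pmix P₁ P₂ (m+1)) i j := by rw [hpoweq]; ring
      · have heqm : Pmix P₁ P₂ (m + 1) = Pmix P₁ P₂ m := by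
          ext a b
          have h1 : (a:ℕ) < m := lt_of_lt_of_le a.isLt (le_of_not_gt hm)
          have h2 : (a:ℕ) < m + 1 := by omega
          simp only [Pmix, Matrix.of_apply, if_pos h1, if_pos h2]
        rw [heqm]
        have hle : c ^ (2*m) ≤ c ^ (2*(m+1)) := by
          apply pow_le_pow_right₀ hc
          omega
        constructor
        · calc geomInv α (Pmix P₁ P₂ m) i j ≤ c ^ (2*m) * geomInv α P₁ i j := (ih i j).1
            _ ≤ c ^ (2*(m+1)) * geomInv α P₁ i j :=
              mul_le_mul_of_nonneg_right hle (geomInv_nonneg hα0 hP₁ i j)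
        · calc geomInv α P₁ i j ≤ c ^ (2*m) * geomInv α (Pmix P₁ P₂ m) i j := (ih i j).2
            _ ≤ c ^ (2*(m+1)) * geomInv α (Pmix P₁ P₂ m) i j :=
              mul_le_mul_of_nonneg_right hle (geomInv_nonneg hα0 (hmixnn m) i j)
  have := main n i j
  rwa [hmixn] at this

end Stmt3Aux


open Stmt3Aux

theorem stmt_3 (n : ℕ) (α ε : ℝ) (hα : α ∈ Set.Ioo (0:ℝ) 1) (hε : ε ∈ Set.Ioo (0:ℝ) 1)
    (P₁ P₂ : Matrix (Fin n) (Fin n) ℝ)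
    (hP₁ : ∀ k l, 0 ≤ P₁ k l) (hP₁row : ∀ k, ∑ l, P₁ k l = 1)
    (hP₂ : ∀ k l, 0 ≤ P₂ k l) (hP₂row : ∀ k, ∑ l, P₂ k l = 1)
    (r₁ r₂ : Fin n → ℝ) (i : Fin n)
    (hA1 : ∀ k l, 0 < P₁ k l ↔ 0 < P₂ k l)
    (hA2 : ∀ k l, 0 < P₁ k l → 0 < P₂ k l →
      max (P₁ k l / P₂ k l) (P₂ k l / P₁ k l) - 1 ≤ ε / (8 * n))
    (hA3 : ∀ k, |r₁ k - r₂ k| ≤ ε / 2) :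
    (1 - α) * |((1 - α • P₁)⁻¹ *ᵥ r₁) i - ((1 - α • P₂)⁻¹ *ᵥ r₂) i| ≤
      ε / 2 + ε / 2 *
        Finset.univ.sup' ⟨i, Finset.mem_univ i⟩ (fun k => |r₁ k|) := by
  obtain ⟨hα0, hα1⟩ := hα
  obtain ⟨hε0, hε1⟩ := hε
  have hn : 0 < n := i.pos
  have hn' : (0:ℝ) < n := by exact_mod_cast hn
  set c : ℝ := 1 + ε / (8 * n) with hcdef
  have hc : 1 ≤ c := by
    have h : 0 ≤ ε / (8 * n) := by positivity
    rw [hcdef]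
    linarith
  -- entrywise two-sided comparison of P₁ and P₂
  have hcmp : ∀ k l, P₁ k l ≤ c * P₂ k l ∧ P₂ k l ≤ c * P₁ k l := by
    intro k l
    rcases eq_or_lt_of_le (hP₁ k l) with h0 | hpos
    · have h2 : P₂ k l = 0 := by
        by_contra h2
        have hpos2 : 0 < P₂ k l := lt_of_le_of_ne (hP₂ k l) (Ne.symm h2)
        have := (hA1 k l).mpr hpos2
        rw [← h0] at this
        exact lt_irrefl 0 this
      rw [← h0, h2]
      norm_num
    · have hpos2 : 0 < P₂ k l := (hA1 k l).mp hpos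
      have hmax := hA2 k l hpos hpos2
      have hd1 : P₁ k l / P₂ k l ≤ c := by
        have := le_max_left (P₁ k l / P₂ k l) (P₂ k l / P₁ k l)
        rw [hcdef]; linarith
      have hd2 : P₂ k l / P₁ k l ≤ c := by
        have := le_max_right (P₁ k l / P₂ k l) (P₂ k l / P₁ k l)
        rw [hcdef]; linarith
      constructor
      · rw [div_le_iff₀ hpos2] at hd1; linarith
      · rw [div_le_iff₀ hpos] at hd2; linarith
  set A₁ := geomInv α P₁ with hA₁def
  set A₂ := geomInv α P₂ with hA₂def
  have hA₁nn : ∀ a b, 0 ≤ A₁ a b := fun a b => geomInv_nonneg hα0 hP₁ a b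
  have hA₂nn : ∀ a b, 0 ≤ A₂ a b := fun a b => geomInv_nonneg hα0 hP₂ a b
  have hinv₁ : (1 - α • P₁)⁻¹ = A₁ :=
    inv_eq_geomInv hα0 hα1 hP₁ (fun a => (hP₁row a).le)
  have hinv₂ : (1 - α • P₂)⁻¹ = A₂ :=
    inv_eq_geomInv hα0 hα1 hP₂ (fun a => (hP₂row a).le)
  rw [hinv₁, hinv₂]
  have hmv₁ : (A₁ *ᵥ r₁) i = ∑ j, A₁ i j * r₁ j := by
    simp [Matrix.mulVec, dotProduct]
  have hmv₂ : (A₂ *ᵥ r₂) i = ∑ j, A₂ i j * r₂ j := by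
    simp [Matrix.mulVec, dotProduct]
  rw [hmv₁, hmv₂]
  set R := Finset.univ.sup' ⟨i, Finset.mem_univ i⟩ (fun k => |r₁ k|) with hRdef
  have hR : ∀ j, |r₁ j| ≤ R := fun j =>
    Finset.le_sup' (fun k => |r₁ k|) (Finset.mem_univ j)
  have hR0 : 0 ≤ R := le_trans (abs_nonneg _) (hR i)
  set C : ℝ := c ^ (2 * n) with hCdef
  have hC1 : 1 ≤ C := one_le_pow₀ hc
  have hC0 : (0:ℝ) < C := lt_of_lt_of_le one_pos hC1
  have hchain := chain hα0 hα1 hP₁ hP₁row hP₂ hP₂row hc hcmp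
  -- entrywise bound on the difference of the inverses
  have habs : ∀ j, |A₁ i j - A₂ i j| ≤ (C - 1) * A₁ i j := by
    intro j
    have h1 := (hchain i j).1
    have h2 := (hchain i j).2
    have ha1 := hA₁nn i j
    have ha2 := hA₂nn i j
    rw [abs_sub_le_iff]
    constructor
    · nlinarith [mul_nonneg ha1 (sq_nonneg (C - 1))]
    · nlinarith
  -- numeric bound : C - 1 ≤ ε / 2
  have hnum : C - 1 ≤ ε / 2 := by
    have h1 : c ≤ Real.exp (ε / (8 * n)) := by
      have := Real.add_one_le_exp (ε / (8 * n))
      rw [hcdef]; linarith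
    have h2 : C ≤ Real.exp (ε / (8 * n)) ^ (2 * n) := by
      rw [hCdef]
      exact pow_le_pow_left₀ (by positivity) h1 _
    have h3 : Real.exp (ε / (8 * n)) ^ (2 * n) = Real.exp ((2 * n : ℕ) * (ε / (8 * n))) := by
      rw [Real.exp_nat_mul]
    have h4 : ((2 * n : ℕ) : ℝ) * (ε / (8 * n)) = ε / 4 := by
      push_cast
      field_simp
      ring
    have h5 : Real.exp (ε / 4) ≤ 1 + ε / 2 := by
      have hx : 1 - ε / 4 ≤ Real.exp (-(ε / 4)) := by
        have := Real.add_one_le_exp (-(ε / 4))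
        linarith
      have hmul : Real.exp (ε / 4) * Real.exp (-(ε / 4)) = 1 := by
        rw [← Real.exp_add]; norm_num
      have hep : 0 < Real.exp (ε / 4) := Real.exp_pos _
      nlinarith [mul_le_mul_of_nonneg_left hx hep.le]
    rw [h3, h4] at h2
    linarith
  -- decompose the difference
  have hdecomp : ∑ j, A₁ i j * r₁ j - ∑ j, A₂ i j * r₂ j
      = (∑ j, (A₁ i j - A₂ i j) * r₁ j) + ∑ j, A₂ i j * (r₁ j - r₂ j) := by
    rw [← Finset.sum_add_distrib, ← Finset.sum_sub_distrib]
    refine Finset.sum_congr rfl fun j _ => by ring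
  have hrow₁ : ∑ j, A₁ i j = (1 - α)⁻¹ := geomInv_row_eq hα0 hα1 hP₁ hP₁row i
  have hrow₂ : ∑ j, A₂ i j = (1 - α)⁻¹ := geomInv_row_eq hα0 hα1 hP₂ hP₂row i
  have hb1 : |∑ j, (A₁ i j - A₂ i j) * r₁ j| ≤ (C - 1) * R * (1 - α)⁻¹ := by
    calc |∑ j, (A₁ i j - A₂ i j) * r₁ j| ≤ ∑ j, |(A₁ i j - A₂ i j) * r₁ j| :=
          Finset.abs_sum_le_sum_abs _ _
      _ ≤ ∑ j, ((C - 1) * A₁ i j) * R := by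
          refine Finset.sum_le_sum fun j _ => ?_
          rw [abs_mul]
          exact mul_le_mul (habs j) (hR j) (abs_nonneg _)
            (mul_nonneg (by linarith) (hA₁nn i j))
      _ = (C - 1) * R * ∑ j, A₁ i j := by
          rw [Finset.mul_sum]
          exact Finset.sum_congr rfl fun j _ => by ring
      _ = (C - 1) * R * (1 - α)⁻¹ := by rw [hrow₁]
  have hb2 : |∑ j, A₂ i j * (r₁ j - r₂ j)| ≤ ε / 2 * (1 - α)⁻¹ := by
    calc |∑ j, A₂ i j * (r₁ j - r₂ j)| ≤ ∑ j, |A₂ i j * (r₁ j - r₂ j)| :=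
          Finset.abs_sum_le_sum_abs _ _
      _ ≤ ∑ j, A₂ i j * (ε / 2) := by
          refine Finset.sum_le_sum fun j _ => ?_
          rw [abs_mul, abs_of_nonneg (hA₂nn i j)]
          exact mul_le_mul_of_nonneg_left (hA3 j) (hA₂nn i j)
      _ = ε / 2 * ∑ j, A₂ i j := by
          rw [Finset.mul_sum]
          exact Finset.sum_congr rfl fun j _ => by ring
      _ = ε / 2 * (1 - α)⁻¹ := by rw [hrow₂]
  have htotal : |∑ j, A₁ i j * r₁ j - ∑ j, A₂ i j * r₂ j|
      ≤ (C - 1) * R * (1 - α)⁻¹ + ε / 2 * (1 - α)⁻¹ := by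
    rw [hdecomp]
    exact le_trans (abs_add_le _ _) (add_le_add hb1 hb2)
  have h1α : (0:ℝ) < 1 - α := by linarith
  calc (1 - α) * |∑ j, A₁ i j * r₁ j - ∑ j, A₂ i j * r₂ j|
      ≤ (1 - α) * ((C - 1) * R * (1 - α)⁻¹ + ε / 2 * (1 - α)⁻¹) :=
        mul_le_mul_of_nonneg_left htotal h1α.le
    _ = (C - 1) * R + ε / 2 := by
        field_simp
    _ ≤ ε / 2 + ε / 2 * R := by
        have : (C - 1) * R ≤ ε / 2 * R := mul_le_mul_of_nonneg_right hnum hR0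
        linarith
end

section
/- Let α, ε ∈ (0,1), let P₁, P₂ be n×n row-stochastic matrices and r₁, r₂ ∈ ℝⁿ reward vectors with (r₁)_k ∈ [0,1] for all k, and let i ∈ {1,…,n}. Assume: (A1) for all k, ℓ, (P₁)_{kℓ} > 0 ↔ (P₂)_{kℓ} > 0; (A2) for all k, ℓ with (P₁)_{kℓ} > 0 and (P₂)_{kℓ} > 0, max((P₁)_{kℓ}/(P₂)_{kℓ}, (P₂)_{kℓ}/(P₁)_{kℓ}) − 1 ≤ ε/(8n); (A3) for all k, |(r₁)_k − (r₂)_k| ≤ ε/2. Then, writing v₁ = (I − α·P₁)⁻¹ *ᵥ r₁ and v₂ = (I − α·P₂)⁻¹ *ᵥ r₂, one has (1−α)·|(v₁)_i − (v₂)_i| ≤ ε. -/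
open Matrix

namespace Stmt4

open BigOperators Finset

variable {n : ℕ}

/-- One step of the partial function `c`, on `Option`. -/
def cstep (c : Fin n → Option (Fin n)) : Option (Fin n) → Option (Fin n) := fun o => o.bind c

/-- 0/1 matrix of the partial function `c`. -/
def Nmat (c : Fin n → Option (Fin n)) : Matrix (Fin n) (Fin n) ℝ :=
  Matrix.of fun k l => if c k = some l then 1 else 0

def HasCycle (c : Fin n → Option (Fin n)) : Prop :=
  ∃ (k : Fin n) (m : ℕ), 0 < m ∧ (cstep c)^[m] (some k) = some k

lemma cstep_none (c : Fin n → Option (Fin n)) (m : ℕ) : (cstep c)^[m] none = none := by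
  induction m with
  | zero => rfl
  | succ m ih => rw [Function.iterate_succ_apply', ih]; rfl

lemma Nmat_nonneg (c : Fin n → Option (Fin n)) (k l : Fin n) : 0 ≤ Nmat c k l := by
  unfold Nmat; dsimp; split <;> norm_num

lemma Nmat_pow_apply (c : Fin n → Option (Fin n)) (m : ℕ) (k l : Fin n) :
    (Nmat c ^ m) k l = if (cstep c)^[m] (some k) = some l then 1 else 0 := by
  induction m generalizing l with
  | zero =>
    simp only [pow_zero, Function.iterate_zero_apply, Matrix.one_apply, Option.some.injEq]
  | succ m ih =>
    rw [pow_succ, Matrix.mul_apply, Function.iterate_succ_apply']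
    cases h : (cstep c)^[m] (some k) with
    | none =>
      simp only [ih, h]
      simp [cstep]
    | some t =>
      simp only [ih, h]
      rw [Finset.sum_eq_single t]
      · simp [Nmat, cstep]; congr
      · intro b _ hb
        simp [Option.some_inj, Ne.symm hb]
      · simp

lemma Nmat_pow_eq_zero (c : Fin n → Option (Fin n)) (hc : ¬ HasCycle c) : Nmat c ^ n = 0 := by
  ext k l
  rw [Nmat_pow_apply, Matrix.zero_apply, if_neg]
  intro h
  -- all iterates up to n are `some`
  set g : ℕ → Fin n := fun t => ((cstep c)^[t] (some k)).getD k with hg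
  have hsome : ∀ t, t ≤ n → (cstep c)^[t] (some k) = some (g t) := by
    intro t ht
    cases ht' : (cstep c)^[t] (some k) with
    | none =>
      exfalso
      have hn : (cstep c)^[n] (some k) = none := by
        calc (cstep c)^[n] (some k) = (cstep c)^[(n-t)+t] (some k) := by congr 1; omega
        _ = none := by rw [Function.iterate_add_apply, ht', cstep_none]
      rw [h] at hn; exact Option.some_ne_none l hn
    | some u => simp [hg, ht']
  have hcard : Fintype.card (Fin n) < (Finset.range (n+1)).card := by
    simp
  obtain ⟨a, ha, b, hb, hab, heq⟩ :=
    Finset.exists_ne_map_eq_of_card_lt_of_maps_to hcard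
      (fun t (_ : t ∈ Finset.range (n+1)) => Finset.mem_univ (g t))
  rw [Finset.mem_range] at ha hb
  -- wlog a < b
  rcases Nat.lt_or_ge a b with hlt | hge
  · apply hc
    refine ⟨g a, b - a, by omega, ?_⟩
    have h1 : (cstep c)^[b] (some k) = (cstep c)^[b - a] (some (g a)) := by
      rw [← hsome a (by omega), ← Function.iterate_add_apply]
      congr 1; omega
    rw [← h1, hsome b (by omega), heq]
  · have hlt : b < a := by omega
    apply hc
    refine ⟨g b, a - b, by omega, ?_⟩
    have h1 : (cstep c)^[a] (some k) = (cstep c)^[a - b] (some (g b)) := by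
      rw [← hsome b (by omega), ← Function.iterate_add_apply]
      congr 1; omega
    rw [← h1, hsome a (by omega), heq]

/-- determinant of `1 - N` for `N` with `N ^ n = 0`. -/
lemma det_one_sub_of_pow_eq_zero {N : Matrix (Fin n) (Fin n) ℝ} (h : N ^ n = 0) :
    Matrix.det (1 - N) = 1 := by
  classical
  set f : ℝ →+* Polynomial ℝ := Polynomial.C
  set Np : Matrix (Fin n) (Fin n) (Polynomial ℝ) := f.mapMatrix N with hNp
  set x : Matrix (Fin n) (Fin n) (Polynomial ℝ) := (Polynomial.X : Polynomial ℝ) • Np with hx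
  have hxn : x ^ n = 0 := by
    rw [hx, smul_pow]
    have : Np ^ n = 0 := by
      rw [hNp, ← map_pow, h]; simp
    rw [this, smul_zero]
  have hgeom : (∑ t ∈ Finset.range n, x ^ t) * (1 - x) = 1 := by
    have := geom_sum_mul x n
    rw [hxn] at this
    rw [show (1 : Matrix (Fin n) (Fin n) (Polynomial ℝ)) - x = -(x - 1) by rw [neg_sub], mul_neg, this]
    rw [zero_sub, neg_neg]
  have hdet : Matrix.det (∑ t ∈ Finset.range n, x ^ t) * Matrix.det (1 - x) = 1 := by
    rw [← Matrix.det_mul, hgeom, Matrix.det_one]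
  have hunit : IsUnit (Matrix.det (1 - x)) := IsUnit.of_mul_eq_one _ (by rw [mul_comm] at hdet; exact hdet)
  obtain ⟨r, -, hr⟩ := Polynomial.isUnit_iff.mp hunit
  -- evaluate at 0 and 1
  have hmap : ∀ y : ℝ, (Polynomial.evalRingHom y).mapMatrix (1 - x) = 1 - y • N := by
    intro y
    ext k l
    simp only [RingHom.mapMatrix_apply, Matrix.map_apply, Matrix.sub_apply, Matrix.smul_apply,
      Matrix.one_apply, hx, hNp, smul_eq_mul]
    split
    · rw [map_sub, _root_.map_mul, _root_.map_one]
      simp [f, Polynomial.coe_evalRingHom]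
    · rw [map_sub, _root_.map_mul, _root_.map_zero]
      simp [f, Polynomial.coe_evalRingHom]
  have hev : ∀ y : ℝ, Matrix.det (1 - y • N) = r := by
    intro y
    rw [← hmap y, ← RingHom.map_det, ← hr]
    simp
  have h0 := hev 0
  have h1 := hev 1
  rw [zero_smul, sub_zero, Matrix.det_one] at h0
  rw [one_smul] at h1
  rw [h1, ← h0]

lemma pow_entries_nonneg {N : Matrix (Fin n) (Fin n) ℝ} (hN : ∀ k l, 0 ≤ N k l) (t : ℕ) :
    ∀ k l, 0 ≤ (N ^ t) k l := by
  induction t with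
  | zero => intro k l; rw [pow_zero]; rw [Matrix.one_apply]; split <;> norm_num
  | succ t ih =>
    intro k l
    rw [pow_succ, Matrix.mul_apply]
    exact Finset.sum_nonneg fun b _ => mul_nonneg (ih k b) (hN b l)

lemma adjugate_one_sub_nonneg {N : Matrix (Fin n) (Fin n) ℝ} (h : N ^ n = 0)
    (hN : ∀ k l, 0 ≤ N k l) (k l : Fin n) : 0 ≤ (1 - N).adjugate k l := by
  have hK : (1 - N) * (∑ t ∈ Finset.range n, N ^ t) = 1 := by
    have := mul_geom_sum N n
    rw [h] at this
    rw [show (1 : Matrix (Fin n) (Fin n) ℝ) - N = -(N - 1) by rw [neg_sub], neg_mul, this]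
    rw [zero_sub, neg_neg]
  have hdet : (1 - N).det = 1 := det_one_sub_of_pow_eq_zero h
  have hinv : (1 - N)⁻¹ = ∑ t ∈ Finset.range n, N ^ t := Matrix.inv_eq_right_inv hK
  have hadj : (1 - N).adjugate = ∑ t ∈ Finset.range n, N ^ t := by
    rw [← hinv, Matrix.inv_def, hdet]
    simp
  rw [hadj, Matrix.sum_apply]
  exact Finset.sum_nonneg fun t _ => pow_entries_nonneg hN t k l

lemma det_eq_zero_of_cycle (c : Fin n → Option (Fin n)) (hc : HasCycle c)
    (M : Matrix (Fin n) (Fin n) ℝ)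
    (hrows : ∀ k : Fin n, (∃ mm, 0 < mm ∧ (cstep c)^[mm] (some k) = some k) →
       ∀ l, M k l = (if k = l then (1:ℝ) else 0) - (if c k = some l then (1:ℝ) else 0)) :
    M.det = 0 := by
  classical
  obtain ⟨k₀, m₀, hm₀, hcyc₀⟩ := hc
  have hex : ∃ m, 0 < m ∧ (cstep c)^[m] (some k₀) = some k₀ := ⟨m₀, hm₀, hcyc₀⟩
  set m := Nat.find hex with hmdef
  obtain ⟨hm, hcyc⟩ : 0 < m ∧ (cstep c)^[m] (some k₀) = some k₀ := Nat.find_spec hex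
  have hmin : ∀ p, 0 < p → p < m → (cstep c)^[p] (some k₀) ≠ some k₀ := by
    intro p hp hpm hcon
    exact (Nat.find_min hex hpm) ⟨hp, hcon⟩
  set x : ℕ → Option (Fin n) := fun t => (cstep c)^[t] (some k₀) with hxdef
  have hxadd : ∀ a b, x (a + b) = (cstep c)^[a] (x b) := by
    intro a b; rw [hxdef]; exact Function.iterate_add_apply _ a b _
  have hmul : ∀ j : ℕ, x (m * j) = some k₀ := by
    intro j; induction j with
    | zero => simp [hxdef]
    | succ j ih =>
      have h1 : m * (j + 1) = m + m * j := by ring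
      rw [h1, hxadd, ih]
      exact hcyc
  have hxsome : ∀ t, x t ≠ none := by
    intro t hnone
    have hge : t + 1 ≤ m * (t + 1) := Nat.le_mul_of_pos_left (t + 1) hm
    have h1 : m * (t + 1) = (m * (t + 1) - t) + t := by omega
    have h2 := hmul (t + 1)
    rw [h1, hxadd, hnone, cstep_none] at h2
    exact nomatch h2
  set g : ℕ → Fin n := fun t => (x t).getD k₀ with hgdef
  have hxg : ∀ t, x t = some (g t) := by
    intro t
    cases h : x t with
    | none => exact absurd h (hxsome t)
    | some u => simp [hgdef, h]
  have hinj : ∀ a b, a < b → b ≤ m → b - a < m → g a ≠ g b := by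
    intro a b hab hbm hbam hcon
    have hxab : x b = x a := by rw [hxg a, hxg b, hcon]
    have h1 : x (m - b + b) = x (m - b + a) := by rw [hxadd, hxadd, hxab]
    have h2 : m - b + b = m := by omega
    rw [h2] at h1
    have h3 : x (m - b + a) = some k₀ := by rw [← h1]; exact hcyc
    exact hmin (m - b + a) (by omega) (by omega) h3
  set C : Finset (Fin n) := (Finset.range m).image g with hC
  have hg0m : g m = g 0 := by
    have h1 : x m = some k₀ := hcyc
    have h2 : x 0 = some k₀ := rfl
    have h3 := (hxg m).symm.trans h1
    have h4 := (hxg 0).symm.trans h2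
    exact Option.some_inj.mp (h3.trans h4.symm)
  have hmem : ∀ t, t ≤ m → g t ∈ C := by
    intro t ht
    rcases Nat.lt_or_ge t m with h | h
    · exact Finset.mem_image.mpr ⟨t, Finset.mem_range.mpr h, rfl⟩
    · have : t = m := by omega
      rw [this, hg0m]
      exact Finset.mem_image.mpr ⟨0, Finset.mem_range.mpr hm, rfl⟩
  have hcycmem : ∀ k, k ∈ C → ∃ mm, 0 < mm ∧ (cstep c)^[mm] (some k) = some k := by
    intro k hk
    obtain ⟨t, ht, hgt⟩ := Finset.mem_image.mp hk
    refine ⟨m, hm, ?_⟩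
    have h1 : x (m + t) = (cstep c)^[m] (some (g t)) := by rw [hxadd, hxg t]
    have h2 : x (m + t) = x t := by
      rw [show m + t = t + m by ring, hxadd, show x m = some k₀ from hcyc]
    rw [← hgt, ← h1, h2, hxg t]
  have hsucc : ∀ t, c (g t) = some (g (t + 1)) := by
    intro t
    have h1 : x (t + 1) = cstep c (x t) := by
      rw [show t + 1 = 1 + t by ring, hxadd]; rfl
    rw [hxg t, hxg (t+1)] at h1
    exact h1.symm
  set v : Fin n → ℝ := fun l => if l ∈ C then 1 else 0 with hv
  have hv0 : v ≠ 0 := by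
    intro h
    have := congrFun h (g 0)
    simp [hv, hmem 0 (by omega)] at this
  have hginj : Set.InjOn g (Finset.range m) := by
    intro a ha b hb hab
    rw [Finset.coe_range, Set.mem_Iio] at ha hb
    by_contra hne
    rcases Nat.lt_or_ge a b with h | h
    · exact hinj a b h (by omega) (by omega) hab
    · exact hinj b a (by omega) (by omega) (by omega) hab.symm
  have hvM : Matrix.vecMul v M = 0 := by
    funext l
    have hexp : Matrix.vecMul v M l = ∑ k, v k * M k l := by
      simp [Matrix.vecMul, dotProduct]
    rw [hexp]
    have h1 : ∀ k : Fin n, v k * M k l = if k ∈ C then M k l else 0 := by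
      intro k; rw [hv]; dsimp only; split <;> simp
    rw [Finset.sum_congr rfl (fun k _ => h1 k), Finset.sum_ite_mem, Finset.univ_inter]
    have h2 : ∀ k ∈ C, M k l =
        (if k = l then (1:ℝ) else 0) - (if c k = some l then (1:ℝ) else 0) := by
      intro k hk; exact hrows k (hcycmem k hk) l
    rw [Finset.sum_congr rfl h2, Finset.sum_sub_distrib]
    have hS1 : (∑ k ∈ C, if k = l then (1:ℝ) else 0) = if l ∈ C then 1 else 0 := by
      rw [Finset.sum_ite_eq' C l (fun _ => (1:ℝ))]
    have hS2 : (∑ k ∈ C, if c k = some l then (1:ℝ) else 0) = if l ∈ C then 1 else 0 := by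
      rw [hC, Finset.sum_image (fun a ha b hb => hginj ha hb)]
      have h3 : ∀ t, (if c (g t) = some l then (1:ℝ) else 0) = if g (t+1) = l then 1 else 0 := by
        intro t; rw [hsucc t]; simp
      rw [Finset.sum_congr rfl (fun t _ => h3 t)]
      by_cases hl : l ∈ C
      · rw [if_pos hl]
        obtain ⟨s, hs, hgs⟩ := Finset.mem_image.mp hl
        rw [Finset.mem_range] at hs
        set t₀ : ℕ := if s = 0 then m - 1 else s - 1 with ht₀
        have ht₀m : t₀ ∈ Finset.range m := by
          rw [Finset.mem_range, ht₀]; split <;> omega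
        have hgt₀ : g (t₀ + 1) = l := by
          rw [ht₀]
          by_cases hs0 : s = 0
          · rw [if_pos hs0, show m - 1 + 1 = m by omega, hg0m, ← hgs, hs0]
          · rw [if_neg hs0, show s - 1 + 1 = s by omega, hgs]
        rw [Finset.sum_eq_single t₀]
        · rw [if_pos hgt₀]
        · intro t ht htne
          rw [Finset.mem_range] at ht
          rw [if_neg]
          intro hcon
          have heq2 : g (t + 1) = g (t₀ + 1) := by rw [hcon, hgt₀]
          rw [Finset.mem_range] at ht₀m
          rcases Nat.lt_or_ge (t+1) (t₀+1) with h | h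
          · exact hinj (t+1) (t₀+1) h (by omega) (by omega) heq2
          · have : t₀ + 1 < t + 1 := by omega
            exact hinj (t₀+1) (t+1) this (by omega) (by omega) heq2.symm
        · intro hcon; exact absurd ht₀m hcon
      · rw [if_neg hl]
        apply Finset.sum_eq_zero
        intro t ht
        rw [Finset.mem_range] at ht
        rw [if_neg]
        intro hcon
        exact hl (hcon ▸ hmem (t+1) (by omega))
    rw [hS1, hS2, sub_self]
    simp
  rw [← Matrix.exists_vecMul_eq_zero_iff]
  exact ⟨v, hv0, hvM⟩

/-- generic multilinear expansion of a determinant whose rows decompose as sums -/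
lemma det_expand (w : Fin n → Option (Fin n) → ℝ) (u : Fin n → Option (Fin n) → (Fin n → ℝ))
    (M : Matrix (Fin n) (Fin n) ℝ) (hM : ∀ k, M k = ∑ o : Option (Fin n), w k o • u k o) :
    M.det = ∑ c : Fin n → Option (Fin n),
      (∏ k, w k (c k)) * (Matrix.of fun k => u k (c k)).det := by
  classical
  have h0 : M = Matrix.of (fun k => ∑ o : Option (Fin n), w k o • u k o) := by
    ext k l
    rw [show M k l = (M k) l from rfl, hM k]
    rfl
  have h1 : M.det
      = Matrix.detRowAlternating.toMultilinearMap
        (fun k => ∑ o : Option (Fin n), w k o • u k o) := by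
    rw [h0]; rfl
  rw [h1, MultilinearMap.map_sum]
  apply Finset.sum_congr rfl
  intro c _
  have h2 : Matrix.detRowAlternating.toMultilinearMap (fun k => w k (c k) • u k (c k))
      = (∏ k, w k (c k)) • Matrix.detRowAlternating.toMultilinearMap (fun k => u k (c k)) :=
    MultilinearMap.map_smul_univ _ _ _
  rw [h2, smul_eq_mul]
  rfl

/-- the 0/1 basis rows -/
def urow (k : Fin n) (o : Option (Fin n)) : Fin n → ℝ :=
  Option.elim o (Pi.single k 1) (fun l => Pi.single k 1 - Pi.single l 1)

lemma of_urow_eq (c : Fin n → Option (Fin n)) :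
    (Matrix.of fun k => urow k (c k)) = 1 - Nmat c := by
  ext k l
  show urow k (c k) l = (1 - Nmat c) k l
  rw [Matrix.sub_apply, Matrix.one_apply]
  cases h : c k with
  | none =>
    simp [urow, h, Nmat, Pi.single_apply, eq_comm]
  | some t =>
    simp only [urow, h, Option.elim, Pi.sub_apply, Pi.single_apply, Nmat, Matrix.of_apply,
      Option.some.injEq]
    by_cases h1 : l = k <;> by_cases h2 : l = t <;>
      simp_all [eq_comm]

/-- row decomposition of `1 - α • P` for a row-stochastic `P` -/
lemma row_decomp (a : ℝ) (P : Matrix (Fin n) (Fin n) ℝ) (hProw : ∀ k, ∑ l, P k l = 1)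
    (k : Fin n) :
    (1 - a • P) k = ∑ o : Option (Fin n),
      (Option.elim o (1 - a) (fun l => a * P k l)) • urow k o := by
  funext q
  have hLHS : (1 - a • P) k q = (if q = k then 1 else 0) - a * P k q := by
    show ((1 : Matrix (Fin n) (Fin n) ℝ) - a • P) k q = _
    rw [Matrix.sub_apply, Matrix.smul_apply, Matrix.one_apply, smul_eq_mul]
    congr 1
    simp [eq_comm]
  rw [show (∑ o : Option (Fin n), (Option.elim o (1 - a) (fun l => a * P k l)) • urow k o) q
      = ∑ o : Option (Fin n), (Option.elim o (1 - a) (fun l => a * P k l)) * urow k o q by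
    rw [Finset.sum_apply]; rfl]
  rw [Fintype.sum_option, hLHS]
  simp only [Option.elim, urow, Pi.sub_apply, Pi.single_apply]
  have hS : ∀ l : Fin n, a * P k l * ((if q = k then (1:ℝ) else 0) - (if q = l then 1 else 0))
      = a * P k l * (if q = k then (1:ℝ) else 0) - a * P k l * (if q = l then 1 else 0) := by
    intro l; ring
  rw [Finset.sum_congr rfl (fun l _ => hS l), Finset.sum_sub_distrib]
  have hSa : ∑ l : Fin n, a * P k l * (if q = k then (1:ℝ) else 0)
      = a * (if q = k then (1:ℝ) else 0) := by
    rw [← Finset.sum_mul, ← Finset.mul_sum, hProw k, mul_one]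
  have hSb : ∑ l : Fin n, a * P k l * (if q = l then (1:ℝ) else 0) = a * P k q := by
    have h1 : ∀ l : Fin n, a * P k l * (if q = l then (1:ℝ) else 0)
        = if q = l then a * P k l else 0 := by
      intro l; split <;> simp
    rw [Finset.sum_congr rfl (fun l _ => h1 l), Finset.sum_ite_eq]
    simp
  rw [hSa, hSb]
  ring


/-- weight functions -/
def wfun (a : ℝ) (P : Matrix (Fin n) (Fin n) ℝ) (k : Fin n) (o : Option (Fin n)) : ℝ :=
  Option.elim o (1 - a) (fun l => a * P k l)

def wfunU (a : ℝ) (P : Matrix (Fin n) (Fin n) ℝ) (j : Fin n) (k : Fin n)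
    (o : Option (Fin n)) : ℝ :=
  if k = j then (if o = none then 1 else 0) else wfun a P k o

def urowU (i j : Fin n) (k : Fin n) (o : Option (Fin n)) : Fin n → ℝ :=
  if k = j then Pi.single i 1 else urow k o

lemma det_expansion (a : ℝ) (P : Matrix (Fin n) (Fin n) ℝ) (hProw : ∀ k, ∑ l, P k l = 1) :
    (1 - a • P).det = ∑ c : Fin n → Option (Fin n),
      (∏ k, wfun a P k (c k)) * (1 - Nmat c).det := by
  rw [det_expand (wfun a P) urow _ (fun k => row_decomp a P hProw k)]
  exact Finset.sum_congr rfl fun c _ => by rw [of_urow_eq]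

lemma rowU_decomp (a : ℝ) (P : Matrix (Fin n) (Fin n) ℝ) (hProw : ∀ k, ∑ l, P k l = 1)
    (i j : Fin n) (k : Fin n) :
    (Matrix.updateRow (1 - a • P) j (Pi.single i 1)) k
      = ∑ o : Option (Fin n), wfunU a P j k o • urowU i j k o := by
  by_cases hk : k = j
  · subst hk
    rw [Matrix.updateRow_self]
    simp only [wfunU, urowU, if_pos rfl]
    rw [Fintype.sum_option]
    simp
  · rw [Matrix.updateRow_ne hk]
    simp only [wfunU, urowU, if_neg hk]
    exact row_decomp a P hProw k

lemma adj_expansion (a : ℝ) (P : Matrix (Fin n) (Fin n) ℝ) (hProw : ∀ k, ∑ l, P k l = 1)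
    (i j : Fin n) :
    Matrix.adjugate (1 - a • P) i j = ∑ c : Fin n → Option (Fin n),
      (∏ k, wfunU a P j k (c k)) * (Matrix.of fun k => urowU i j k (c k)).det := by
  rw [Matrix.adjugate_apply]
  exact det_expand (wfunU a P j) (urowU i j) _ (fun k => rowU_decomp a P hProw i j k)

lemma kappa_nonneg (c : Fin n → Option (Fin n)) : 0 ≤ (1 - Nmat c).det := by
  by_cases hc : HasCycle c
  · have h := det_eq_zero_of_cycle c hc (1 - Nmat c) ?_
    · rw [h]
    · intro k _ l
      rw [Matrix.sub_apply, Matrix.one_apply]; rfl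
  · rw [det_one_sub_of_pow_eq_zero (Nmat_pow_eq_zero c hc)]
    norm_num

lemma kappa_none : (1 - Nmat (fun _ : Fin n => none)).det = 1 := by
  have h : Nmat (fun _ : Fin n => none) = 0 := by
    ext k l; simp [Nmat]
  rw [h, sub_zero, Matrix.det_one]

lemma cstep_eq_none_of_none (c : Fin n → Option (Fin n)) (j : Fin n) (hcj : c j = none)
    (mm : ℕ) (hmm : 0 < mm) : (cstep c)^[mm] (some j) = none := by
  have h1 : mm = (mm - 1) + 1 := by omega
  rw [h1, Function.iterate_succ_apply]
  have h2 : cstep c (some j) = none := by simp [cstep, hcj]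
  rw [h2, cstep_none]

lemma kappaU_nonneg (i j : Fin n) (c : Fin n → Option (Fin n)) (hcj : c j = none) :
    0 ≤ (Matrix.of fun k => urowU i j k (c k)).det := by
  have hM : (Matrix.of fun k => urowU i j k (c k))
      = Matrix.updateRow (1 - Nmat c) j (Pi.single i 1) := by
    ext k l
    show urowU i j k (c k) l = _
    by_cases hk : k = j
    · subst hk
      rw [Matrix.updateRow_self]
      simp [urowU]
    · rw [Matrix.updateRow_ne hk]
      simp only [urowU, if_neg hk]
      rw [← of_urow_eq c]
      rfl
  by_cases hc : HasCycle c
  · have h := det_eq_zero_of_cycle c hc (Matrix.of fun k => urowU i j k (c k)) ?_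
    · rw [h]
    · intro k hk l
      obtain ⟨mm, hmm, hcym⟩ := hk
      have hkj : k ≠ j := by
        intro hkj; subst hkj
        rw [cstep_eq_none_of_none c k hcj mm hmm] at hcym
        exact nomatch hcym
      show urowU i j k (c k) l = _
      simp only [urowU, if_neg hkj]
      have h1 : urow k (c k) l = (1 - Nmat c) k l := congrFun (congrFun (of_urow_eq c) k) l
      have h2 : (1 - Nmat c) k l
          = (if k = l then (1:ℝ) else 0) - (if c k = some l then 1 else 0) := by
        rw [Matrix.sub_apply, Matrix.one_apply]; rfl
      exact h1.trans h2
  · rw [hM, ← Matrix.adjugate_apply]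
    exact adjugate_one_sub_nonneg (Nmat_pow_eq_zero c hc) (Nmat_nonneg c) i j

lemma prod_compare (δ : ℝ) (hδ : 0 ≤ δ) (f g : Fin n → ℝ) (h0 : ∀ k, 0 ≤ f k)
    (hle : ∀ k, f k ≤ (1 + δ) * g k) :
    ∏ k, f k ≤ (1 + δ) ^ n * ∏ k, g k := by
  calc ∏ k, f k ≤ ∏ k, ((1 + δ) * g k) :=
        Finset.prod_le_prod (fun k _ => h0 k) (fun k _ => hle k)
    _ = (1 + δ) ^ n * ∏ k, g k := by
        rw [Finset.prod_mul_distrib, Finset.prod_const, Finset.card_univ, Fintype.card_fin]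

lemma wfun_nonneg (a : ℝ) (ha0 : 0 ≤ a) (ha1 : a ≤ 1) (P : Matrix (Fin n) (Fin n) ℝ)
    (hP : ∀ k l, 0 ≤ P k l) (k : Fin n) (o : Option (Fin n)) : 0 ≤ wfun a P k o := by
  cases o with
  | none => simp [wfun]; linarith
  | some l => simp only [wfun, Option.elim]; exact mul_nonneg ha0 (hP k l)

lemma wfunU_nonneg (a : ℝ) (ha0 : 0 ≤ a) (ha1 : a ≤ 1) (P : Matrix (Fin n) (Fin n) ℝ)
    (hP : ∀ k l, 0 ≤ P k l) (j k : Fin n) (o : Option (Fin n)) : 0 ≤ wfunU a P j k o := by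
  rw [wfunU]
  split
  · split <;> norm_num
  · exact wfun_nonneg a ha0 ha1 P hP k o

lemma wfun_le (a δ : ℝ) (ha0 : 0 ≤ a) (ha1 : a ≤ 1) (hδ : 0 ≤ δ)
    (P₁ P₂ : Matrix (Fin n) (Fin n) ℝ)
    (hcomp : ∀ k l, P₁ k l ≤ (1 + δ) * P₂ k l) (k : Fin n) (o : Option (Fin n)) :
    wfun a P₁ k o ≤ (1 + δ) * wfun a P₂ k o := by
  cases o with
  | none => simp only [wfun, Option.elim]; nlinarith
  | some l =>
    simp only [wfun, Option.elim]
    calc a * P₁ k l ≤ a * ((1 + δ) * P₂ k l) :=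
          mul_le_mul_of_nonneg_left (hcomp k l) ha0
      _ = (1 + δ) * (a * P₂ k l) := by ring

lemma wfunU_le (a δ : ℝ) (ha0 : 0 ≤ a) (ha1 : a ≤ 1) (hδ : 0 ≤ δ)
    (P₁ P₂ : Matrix (Fin n) (Fin n) ℝ)
    (hcomp : ∀ k l, P₁ k l ≤ (1 + δ) * P₂ k l) (j k : Fin n) (o : Option (Fin n)) :
    wfunU a P₁ j k o ≤ (1 + δ) * wfunU a P₂ j k o := by
  rw [wfunU, wfunU]
  split
  · split <;> nlinarith
  · exact wfun_le a δ ha0 ha1 hδ P₁ P₂ hcomp k o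

lemma det_compare (a δ : ℝ) (ha0 : 0 ≤ a) (ha1 : a ≤ 1) (hδ : 0 ≤ δ)
    (P₁ P₂ : Matrix (Fin n) (Fin n) ℝ) (h1row : ∀ k, ∑ l, P₁ k l = 1)
    (h2row : ∀ k, ∑ l, P₂ k l = 1) (hP₁ : ∀ k l, 0 ≤ P₁ k l)
    (hcomp : ∀ k l, P₁ k l ≤ (1 + δ) * P₂ k l) :
    (1 - a • P₁).det ≤ (1 + δ) ^ n * (1 - a • P₂).det := by
  rw [det_expansion a P₁ h1row, det_expansion a P₂ h2row, Finset.mul_sum]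
  apply Finset.sum_le_sum
  intro c _
  have hk := kappa_nonneg c
  have h := prod_compare δ hδ (fun k => wfun a P₁ k (c k)) (fun k => wfun a P₂ k (c k))
    (fun k => wfun_nonneg a ha0 ha1 P₁ hP₁ k (c k))
    (fun k => wfun_le a δ ha0 ha1 hδ P₁ P₂ hcomp k (c k))
  calc (∏ k, wfun a P₁ k (c k)) * (1 - Nmat c).det
      ≤ ((1 + δ) ^ n * ∏ k, wfun a P₂ k (c k)) * (1 - Nmat c).det :=
        mul_le_mul_of_nonneg_right h hk
    _ = (1 + δ) ^ n * ((∏ k, wfun a P₂ k (c k)) * (1 - Nmat c).det) := by ring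

lemma det_lb (a : ℝ) (ha0 : 0 ≤ a) (ha1 : a ≤ 1) (P : Matrix (Fin n) (Fin n) ℝ)
    (hProw : ∀ k, ∑ l, P k l = 1) (hP : ∀ k l, 0 ≤ P k l) :
    (1 - a) ^ n ≤ (1 - a • P).det := by
  rw [det_expansion a P hProw]
  have h0 : ∀ c : Fin n → Option (Fin n),
      0 ≤ (∏ k, wfun a P k (c k)) * (1 - Nmat c).det := fun c =>
    mul_nonneg (Finset.prod_nonneg fun k _ => wfun_nonneg a ha0 ha1 P hP k (c k))
      (kappa_nonneg c)
  have hmem : (fun _ : Fin n => (none : Option (Fin n))) ∈ (Finset.univ : Finset (Fin n → Option (Fin n))) :=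
    Finset.mem_univ _
  have h1 := Finset.single_le_sum (f := fun c : Fin n → Option (Fin n) =>
    (∏ k, wfun a P k (c k)) * (1 - Nmat c).det) (fun c _ => h0 c) hmem
  have h2 : (∏ k : Fin n, wfun a P k none) * (1 - Nmat (fun _ : Fin n => none)).det
      = (1 - a) ^ n := by
    rw [kappa_none, mul_one]
    simp [wfun, Finset.prod_const, Finset.card_univ]
  rw [← h2]
  exact h1

lemma adj_nonneg (a : ℝ) (ha0 : 0 ≤ a) (ha1 : a ≤ 1) (P : Matrix (Fin n) (Fin n) ℝ)
    (hProw : ∀ k, ∑ l, P k l = 1) (hP : ∀ k l, 0 ≤ P k l) (i j : Fin n) :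
    0 ≤ Matrix.adjugate (1 - a • P) i j := by
  rw [adj_expansion a P hProw i j]
  apply Finset.sum_nonneg
  intro c _
  by_cases hcj : c j = none
  · exact mul_nonneg (Finset.prod_nonneg fun k _ => wfunU_nonneg a ha0 ha1 P hP j k (c k))
      (kappaU_nonneg i j c hcj)
  · rw [Finset.prod_eq_zero (Finset.mem_univ j) (by simp [wfunU, hcj]), zero_mul]

lemma adj_compare (a δ : ℝ) (ha0 : 0 ≤ a) (ha1 : a ≤ 1) (hδ : 0 ≤ δ)
    (P₁ P₂ : Matrix (Fin n) (Fin n) ℝ) (h1row : ∀ k, ∑ l, P₁ k l = 1)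
    (h2row : ∀ k, ∑ l, P₂ k l = 1) (hP₁ : ∀ k l, 0 ≤ P₁ k l)
    (hcomp : ∀ k l, P₁ k l ≤ (1 + δ) * P₂ k l) (i j : Fin n) :
    Matrix.adjugate (1 - a • P₁) i j ≤ (1 + δ) ^ n * Matrix.adjugate (1 - a • P₂) i j := by
  rw [adj_expansion a P₁ h1row i j, adj_expansion a P₂ h2row i j, Finset.mul_sum]
  apply Finset.sum_le_sum
  intro c _
  by_cases hcj : c j = none
  · have hk := kappaU_nonneg i j c hcj
    have h := prod_compare δ hδ (fun k => wfunU a P₁ j k (c k)) (fun k => wfunU a P₂ j k (c k))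
      (fun k => wfunU_nonneg a ha0 ha1 P₁ hP₁ j k (c k))
      (fun k => wfunU_le a δ ha0 ha1 hδ P₁ P₂ hcomp j k (c k))
    calc (∏ k, wfunU a P₁ j k (c k)) * (Matrix.of fun k => urowU i j k (c k)).det
        ≤ ((1 + δ) ^ n * ∏ k, wfunU a P₂ j k (c k)) * (Matrix.of fun k => urowU i j k (c k)).det :=
          mul_le_mul_of_nonneg_right h hk
      _ = (1 + δ) ^ n * ((∏ k, wfunU a P₂ j k (c k)) * (Matrix.of fun k => urowU i j k (c k)).det) := by
          ring
  · rw [Finset.prod_eq_zero (Finset.mem_univ j) (show wfunU a P₁ j j (c j) = 0 by simp [wfunU, hcj]),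
      Finset.prod_eq_zero (Finset.mem_univ j) (show wfunU a P₂ j j (c j) = 0 by simp [wfunU, hcj])]
    simp

lemma adj_row_sum (a : ℝ) (P : Matrix (Fin n) (Fin n) ℝ) (hProw : ∀ k, ∑ l, P k l = 1)
    (i : Fin n) :
    (1 - a) * ∑ j, Matrix.adjugate (1 - a • P) i j = (1 - a • P).det := by
  have h := Matrix.adjugate_mul (1 - a • P)
  have key : ∑ t, ((Matrix.adjugate (1 - a • P) * (1 - a • P) : Matrix (Fin n) (Fin n) ℝ)) i t
      = ∑ t, ((1 - a • P).det • (1 : Matrix (Fin n) (Fin n) ℝ)) i t := by rw [h]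
  have hrow : ∀ jj, ∑ t, (1 - a • P) jj t = 1 - a := by
    intro jj
    have : ∀ t, (1 - a • P) jj t = (if jj = t then (1:ℝ) else 0) - a * P jj t := by
      intro t
      show ((1 : Matrix (Fin n) (Fin n) ℝ) - a • P) jj t = _
      rw [Matrix.sub_apply, Matrix.smul_apply, Matrix.one_apply, smul_eq_mul]
    rw [Finset.sum_congr rfl (fun t _ => this t), Finset.sum_sub_distrib]
    rw [Finset.sum_ite_eq, ← Finset.mul_sum, hProw jj]
    simp
  have hL : ∑ t, ((Matrix.adjugate (1 - a • P) * (1 - a • P) : Matrix (Fin n) (Fin n) ℝ)) i t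
      = ∑ j, Matrix.adjugate (1 - a • P) i j * (1 - a) := by
    simp only [Matrix.mul_apply]
    rw [Finset.sum_comm]
    apply Finset.sum_congr rfl
    intro j _
    rw [← Finset.mul_sum, hrow j]
  have hR : ∑ t, ((1 - a • P).det • (1 : Matrix (Fin n) (Fin n) ℝ)) i t = (1 - a • P).det := by
    simp only [Matrix.smul_apply, Matrix.one_apply, smul_eq_mul]
    rw [← Finset.mul_sum, Finset.sum_ite_eq]
    simp
  rw [hL, hR] at key
  rw [mul_comm, Finset.sum_mul]
  exact key

end Stmt4


namespace Stmt4

lemma rho_bound (n : ℕ) (ε : ℝ) (hε0 : 0 < ε) (hε1 : ε < 1) (hn : 0 < n) :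
    ((1 + ε / (8 * n)) ^ n) ^ 2 - 1 ≤ ε / 2 := by
  have hnR : (1:ℝ) ≤ (n:ℝ) := by exact_mod_cast hn
  set δ : ℝ := ε / (8 * n) with hδdef
  have hδ0 : 0 < δ := by
    apply div_pos hε0; positivity
  have hδle : δ ≤ 1 / 8 := by
    rw [hδdef, div_le_div_iff₀ (by positivity) (by norm_num)]
    nlinarith
  have h2n : ((1 + δ) ^ n) ^ 2 = (1 + δ) ^ (2 * n) := by rw [← pow_mul, mul_comm]
  have hbern : 1 - ε / 4 ≤ (1 - δ) ^ (2 * n) := by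
    have h := one_add_mul_le_pow (a := -δ) (by linarith : (-2:ℝ) ≤ -δ) (2 * n)
    have hcast : 1 + (2 * n : ℕ) * (-δ) = 1 - ε / 4 := by
      push_cast
      rw [hδdef]
      have hne : (n:ℝ) ≠ 0 := by positivity
      field_simp
      ring
    rw [hcast] at h
    have h17 : (1:ℝ) + -δ = 1 - δ := by ring
    rw [h17] at h
    exact h
  have hmulp : (1 + δ) ^ (2 * n) * (1 - δ) ^ (2 * n) ≤ 1 := by
    rw [← mul_pow]
    have hid : (1 + δ) * (1 - δ) = 1 - δ ^ 2 := by ring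
    rw [hid]
    apply pow_le_one₀ (by nlinarith) (by nlinarith)
  have hρ1 : (1:ℝ) ≤ (1 + δ) ^ n := one_le_pow₀ (by linarith)
  have hb0 : (0:ℝ) < (1 - δ) ^ (2 * n) := pow_pos (by linarith) _
  have h5 : ((1 + δ) ^ n) ^ 2 * (1 - ε / 4) ≤ ((1 + δ) ^ n) ^ 2 * (1 - δ) ^ (2 * n) :=
    mul_le_mul_of_nonneg_left hbern (by positivity)
  have h6 : ((1 + δ) ^ n) ^ 2 * (1 - δ) ^ (2 * n) ≤ 1 := by
    rw [h2n]
    exact hmulp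
  nlinarith [h5, h6, hρ1]

end Stmt4

open Stmt4

theorem stmt_4 (n : ℕ) (α ε : ℝ) (hα : α ∈ Set.Ioo (0:ℝ) 1) (hε : ε ∈ Set.Ioo (0:ℝ) 1)
    (P₁ P₂ : Matrix (Fin n) (Fin n) ℝ)
    (hP₁ : ∀ k l, 0 ≤ P₁ k l) (hP₁row : ∀ k, ∑ l, P₁ k l = 1)
    (hP₂ : ∀ k l, 0 ≤ P₂ k l) (hP₂row : ∀ k, ∑ l, P₂ k l = 1)
    (r₁ r₂ : Fin n → ℝ) (hr₁ : ∀ k, r₁ k ∈ Set.Icc (0:ℝ) 1) (i : Fin n)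
    (hA1 : ∀ k l, 0 < P₁ k l ↔ 0 < P₂ k l)
    (hA2 : ∀ k l, 0 < P₁ k l → 0 < P₂ k l →
      max (P₁ k l / P₂ k l) (P₂ k l / P₁ k l) - 1 ≤ ε / (8 * n))
    (hA3 : ∀ k, |r₁ k - r₂ k| ≤ ε / 2) :
    (1 - α) * |((1 - α • P₁)⁻¹ *ᵥ r₁) i - ((1 - α • P₂)⁻¹ *ᵥ r₂) i| ≤ ε := by
  classical
  obtain ⟨hα0, hα1⟩ := hα
  obtain ⟨hε0, hε1⟩ := hε
  have hn : 0 < n := i.pos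
  have hnR : (1:ℝ) ≤ (n:ℝ) := by exact_mod_cast hn
  set δ : ℝ := ε / (8 * n) with hδdef
  have hδ0 : 0 < δ := by
    apply div_pos hε0; positivity
  have hδle : δ ≤ 1 / 8 := by
    rw [hδdef, div_le_div_iff₀ (by positivity) (by norm_num)]
    nlinarith
  have ha0 : (0:ℝ) ≤ α := le_of_lt hα0
  have ha1 : α ≤ 1 := le_of_lt hα1
  have h1α : 0 < 1 - α := by linarith
  have hδ0' : (0:ℝ) ≤ δ := le_of_lt hδ0
  -- entrywise multiplicative comparisons
  have hc12 : ∀ k l, P₁ k l ≤ (1 + δ) * P₂ k l := by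
    intro k l
    by_cases h : 0 < P₁ k l
    · have hRp := (hA1 k l).mp h
      have h2 := hA2 k l h hRp
      have h3 : P₁ k l / P₂ k l - 1 ≤ δ := by
        have := le_max_left (P₁ k l / P₂ k l) (P₂ k l / P₁ k l)
        linarith
      rw [show P₁ k l / P₂ k l - 1 ≤ δ ↔ P₁ k l / P₂ k l ≤ 1 + δ by constructor <;> intro <;> linarith] at h3
      rw [div_le_iff₀ hRp] at h3
      linarith
    · have hq0 : P₁ k l = 0 := le_antisymm (not_lt.mp h) (hP₁ k l)
      rw [hq0]
      exact mul_nonneg (by linarith) (hP₂ k l)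
  have hc21 : ∀ k l, P₂ k l ≤ (1 + δ) * P₁ k l := by
    intro k l
    by_cases h : 0 < P₂ k l
    · have hRp := (hA1 k l).mpr h
      have h2 := hA2 k l hRp h
      have h3 : P₂ k l / P₁ k l - 1 ≤ δ := by
        have := le_max_right (P₁ k l / P₂ k l) (P₂ k l / P₁ k l)
        linarith
      have h3' : P₂ k l / P₁ k l ≤ 1 + δ := by linarith
      rw [div_le_iff₀ hRp] at h3'
      linarith
    · have hq0 : P₂ k l = 0 := le_antisymm (not_lt.mp h) (hP₂ k l)
      rw [hq0]
      exact mul_nonneg (by linarith) (hP₁ k l)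
  set ρ : ℝ := (1 + δ) ^ n with hρdef
  have hρ1 : (1:ℝ) ≤ ρ := one_le_pow₀ (by linarith)
  have hρ0 : (0:ℝ) < ρ := by positivity
  have hd1 : 0 < (1 - α • P₁).det :=
    lt_of_lt_of_le (pow_pos h1α n) (det_lb α ha0 ha1 P₁ hP₁row hP₁)
  have hd2 : 0 < (1 - α • P₂).det :=
    lt_of_lt_of_le (pow_pos h1α n) (det_lb α ha0 ha1 P₂ hP₂row hP₂)
  -- value formula
  have hv : ∀ (P : Matrix (Fin n) (Fin n) ℝ) (r : Fin n → ℝ),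
      ((1 - α • P)⁻¹ *ᵥ r) i
        = ((1 - α • P).det)⁻¹ * ∑ j, Matrix.adjugate (1 - α • P) i j * r j := by
    intro P r
    rw [Matrix.inv_def, Ring.inverse_eq_inv, Matrix.smul_mulVec, Pi.smul_apply,
      smul_eq_mul]
    congr 1
  set μ₁ : Fin n → ℝ := fun j => (1 - α) * Matrix.adjugate (1 - α • P₁) i j / (1 - α • P₁).det
    with hμ₁
  set μ₂ : Fin n → ℝ := fun j => (1 - α) * Matrix.adjugate (1 - α • P₂) i j / (1 - α • P₂).det
    with hμ₂
  have hμ₁0 : ∀ j, 0 ≤ μ₁ j := fun j =>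
    div_nonneg (mul_nonneg (le_of_lt h1α) (adj_nonneg α ha0 ha1 P₁ hP₁row hP₁ i j))
      (le_of_lt hd1)
  have hμ₂0 : ∀ j, 0 ≤ μ₂ j := fun j =>
    div_nonneg (mul_nonneg (le_of_lt h1α) (adj_nonneg α ha0 ha1 P₂ hP₂row hP₂ i j))
      (le_of_lt hd2)
  have hμ₁sum : ∑ j, μ₁ j = 1 := by
    rw [hμ₁, ← Finset.sum_div, ← Finset.mul_sum, adj_row_sum α P₁ hP₁row i,
      div_self (ne_of_gt hd1)]
  have hμ₂sum : ∑ j, μ₂ j = 1 := by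
    rw [hμ₂, ← Finset.sum_div, ← Finset.mul_sum, adj_row_sum α P₂ hP₂row i,
      div_self (ne_of_gt hd2)]
  have hratio12 : ∀ j, μ₁ j ≤ ρ ^ 2 * μ₂ j := by
    intro j
    have hA := adj_compare α δ ha0 ha1 hδ0' P₁ P₂ hP₁row hP₂row hP₁ hc12 i j
    have hD := det_compare α δ ha0 ha1 hδ0' P₂ P₁ hP₂row hP₁row hP₂ hc21
    have hA₂0 := adj_nonneg α ha0 ha1 P₂ hP₂row hP₂ i j
    have key0 : Matrix.adjugate (1 - α • P₁) i j * (1 - α • P₂).det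
        ≤ (ρ * Matrix.adjugate (1 - α • P₂) i j) * (ρ * (1 - α • P₁).det) := by
      rw [← hρdef] at hA hD
      exact mul_le_mul hA hD (le_of_lt hd2) (mul_nonneg (le_of_lt hρ0) hA₂0)
    simp only [hμ₁, hμ₂]
    calc (1 - α) * Matrix.adjugate (1 - α • P₁) i j / (1 - α • P₁).det
        ≤ (ρ ^ 2 * ((1 - α) * Matrix.adjugate (1 - α • P₂) i j)) / (1 - α • P₂).det := by
          rw [div_le_div_iff₀ hd1 hd2]
          nlinarith [mul_le_mul_of_nonneg_left key0 (le_of_lt h1α)]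
      _ = ρ ^ 2 * ((1 - α) * Matrix.adjugate (1 - α • P₂) i j / (1 - α • P₂).det) := by
          rw [mul_div_assoc]
  have hratio21 : ∀ j, μ₂ j ≤ ρ ^ 2 * μ₁ j := by
    intro j
    have hA := adj_compare α δ ha0 ha1 hδ0' P₂ P₁ hP₂row hP₁row hP₂ hc21 i j
    have hD := det_compare α δ ha0 ha1 hδ0' P₁ P₂ hP₁row hP₂row hP₁ hc12
    have hA₁0 := adj_nonneg α ha0 ha1 P₁ hP₁row hP₁ i j
    have key0 : Matrix.adjugate (1 - α • P₂) i j * (1 - α • P₁).det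
        ≤ (ρ * Matrix.adjugate (1 - α • P₁) i j) * (ρ * (1 - α • P₂).det) := by
      rw [← hρdef] at hA hD
      exact mul_le_mul hA hD (le_of_lt hd1) (mul_nonneg (le_of_lt hρ0) hA₁0)
    simp only [hμ₁, hμ₂]
    calc (1 - α) * Matrix.adjugate (1 - α • P₂) i j / (1 - α • P₂).det
        ≤ (ρ ^ 2 * ((1 - α) * Matrix.adjugate (1 - α • P₁) i j)) / (1 - α • P₁).det := by
          rw [div_le_div_iff₀ hd2 hd1]
          nlinarith [mul_le_mul_of_nonneg_left key0 (le_of_lt h1α)]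
      _ = ρ ^ 2 * ((1 - α) * Matrix.adjugate (1 - α • P₁) i j / (1 - α • P₁).det) := by
          rw [mul_div_assoc]
  -- value identities
  have hval1 : (1 - α) * (((1 - α • P₁)⁻¹ *ᵥ r₁) i) = ∑ j, μ₁ j * r₁ j := by
    rw [hv P₁ r₁, hμ₁, Finset.mul_sum]
    rw [Finset.mul_sum]
    apply Finset.sum_congr rfl
    intro j _
    field_simp
  have hval2 : (1 - α) * (((1 - α • P₂)⁻¹ *ᵥ r₂) i) = ∑ j, μ₂ j * r₂ j := by
    rw [hv P₂ r₂, hμ₂, Finset.mul_sum]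
    rw [Finset.mul_sum]
    apply Finset.sum_congr rfl
    intro j _
    field_simp
  -- main estimates
  have hρ2m1 : (0:ℝ) ≤ ρ ^ 2 - 1 := by nlinarith [hρ1]
  have hst : |(∑ j, μ₁ j * r₁ j) - ∑ j, μ₂ j * r₁ j| ≤ ρ ^ 2 - 1 := by
    rw [← Finset.sum_sub_distrib, abs_le]
    constructor
    · have hpt : ∀ j, -((ρ ^ 2 - 1) * μ₁ j) ≤ μ₁ j * r₁ j - μ₂ j * r₁ j := by
        intro j
        obtain ⟨hr0, hr1'⟩ := hr₁ j
        rcases le_total (μ₂ j) (μ₁ j) with h | h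
        · linarith [mul_nonneg (sub_nonneg.mpr h) hr0, mul_nonneg hρ2m1 (hμ₁0 j)]
        · linarith [hratio21 j, mul_nonneg (sub_nonneg.mpr h) (sub_nonneg.mpr hr1')]
      have hsumeq : ∑ j, -((ρ ^ 2 - 1) * μ₁ j) = -(ρ ^ 2 - 1) := by
        rw [Finset.sum_neg_distrib, ← Finset.mul_sum, hμ₁sum, mul_one]
      calc -(ρ ^ 2 - 1) = ∑ j, -((ρ ^ 2 - 1) * μ₁ j) := hsumeq.symm
        _ ≤ ∑ j, (μ₁ j * r₁ j - μ₂ j * r₁ j) := Finset.sum_le_sum fun j _ => hpt j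
    · have hpt : ∀ j, μ₁ j * r₁ j - μ₂ j * r₁ j ≤ (ρ ^ 2 - 1) * μ₂ j := by
        intro j
        obtain ⟨hr0, hr1'⟩ := hr₁ j
        rcases le_total (μ₂ j) (μ₁ j) with h | h
        · linarith [hratio12 j, mul_nonneg (sub_nonneg.mpr h) (sub_nonneg.mpr hr1')]
        · linarith [mul_nonneg (sub_nonneg.mpr h) hr0, mul_nonneg hρ2m1 (hμ₂0 j)]
      calc ∑ j, (μ₁ j * r₁ j - μ₂ j * r₁ j) ≤ ∑ j, (ρ ^ 2 - 1) * μ₂ j :=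
            Finset.sum_le_sum fun j _ => hpt j
        _ = ρ ^ 2 - 1 := by rw [← Finset.mul_sum, hμ₂sum, mul_one]
  have htu : |(∑ j, μ₂ j * r₁ j) - ∑ j, μ₂ j * r₂ j| ≤ ε / 2 := by
    rw [← Finset.sum_sub_distrib]
    refine (Finset.abs_sum_le_sum_abs _ _).trans ?_
    have hpt : ∀ j, |μ₂ j * r₁ j - μ₂ j * r₂ j| ≤ μ₂ j * (ε / 2) := by
      intro j
      rw [← mul_sub, abs_mul, abs_of_nonneg (hμ₂0 j)]
      exact mul_le_mul_of_nonneg_left (hA3 j) (hμ₂0 j)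
    calc ∑ j, |μ₂ j * r₁ j - μ₂ j * r₂ j| ≤ ∑ j, μ₂ j * (ε / 2) :=
          Finset.sum_le_sum fun j _ => hpt j
      _ = ε / 2 := by rw [← Finset.sum_mul, hμ₂sum, one_mul]
  -- numeric bound on ρ² - 1
  have hρsq : ρ ^ 2 - 1 ≤ ε / 2 := by
    rw [hρdef, hδdef]
    exact Stmt4.rho_bound n ε hε0 hε1 hn
  -- conclude
  have hgoal : (1 - α) * |((1 - α • P₁)⁻¹ *ᵥ r₁) i - ((1 - α • P₂)⁻¹ *ᵥ r₂) i|
      = |(∑ j, μ₁ j * r₁ j) - ∑ j, μ₂ j * r₂ j| := by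
    rw [← hval1, ← hval2, ← mul_sub, abs_mul, abs_of_pos h1α]
  rw [hgoal]
  calc |(∑ j, μ₁ j * r₁ j) - ∑ j, μ₂ j * r₂ j|
      ≤ |(∑ j, μ₁ j * r₁ j) - ∑ j, μ₂ j * r₁ j|
        + |(∑ j, μ₂ j * r₁ j) - ∑ j, μ₂ j * r₂ j| := abs_sub_le _ _ _
    _ ≤ (ρ ^ 2 - 1) + ε / 2 := add_le_add hst htu
    _ ≤ ε / 2 + ε / 2 := by linarith [hρsq]
    _ = ε := by ring
end

section
/- Let ε ∈ (0,1), let P₁, P₂ be n×n row-stochastic matrices and r₁, r₂ ∈ ℝⁿ reward vectors, and let i ∈ {1,…,n}. Assume: (A1) for all k, ℓ, (P₁)_{kℓ} > 0 ↔ (P₂)_{kℓ} > 0; (A2) for all k, ℓ with (P₁)_{kℓ} > 0 and (P₂)_{kℓ} > 0, max((P₁)_{kℓ}/(P₂)_{kℓ}, (P₂)_{kℓ}/(P₁)_{kℓ}) − 1 ≤ ε/(8n); (A3) for all k, |(r₁)_k − (r₂)_k| ≤ ε/2. Let φ₁, φ₂ ∈ ℝ be such that (1−α)·(((I − α·P₁)⁻¹)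 *ᵥ r₁)_i → φ₁ and (1−α)·(((I − α·P₂)⁻¹) *ᵥ r₂)_i → φ₂ as α → 1 from the left. Then |φ₁ − φ₂| ≤ ε/2 + (ε/2)·(max_k |(r₁)_k|). -/
open Matrix Filter

namespace Stmt5Aux
variable {n : ℕ}

lemma vec_nonneg (Q : Matrix (Fin n) (Fin n) ℝ) (hQ : ∀ k l, 0 ≤ Q k l)
    (hrow : ∀ k, ∑ l, Q k l < 1) (v c : Fin n → ℝ) (hc : ∀ k, 0 ≤ c k)
    (hv : ∀ k, v k = (Q *ᵥ v) k + c k) : ∀ k, 0 ≤ v k := by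
  by_contra h
  push_neg at h
  obtain ⟨k₀, hk₀⟩ := h
  obtain ⟨j, -, hj⟩ := Finset.exists_min_image Finset.univ v ⟨k₀, Finset.mem_univ k₀⟩
  have hm : v j < 0 := lt_of_le_of_lt (hj k₀ (Finset.mem_univ k₀)) hk₀
  have h1 : (∑ l, Q j l) * v j ≤ (Q *ᵥ v) j := by
    rw [Matrix.mulVec, dotProduct, Finset.sum_mul]
    exact Finset.sum_le_sum fun l _ => by nlinarith [hQ j l, hj l (Finset.mem_univ l)]
  have h2 := hv j
  have h3 := hc j
  have h4 := hrow j
  nlinarith [mul_pos (neg_pos.2 hm) (sub_pos.2 h4)]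

lemma det_ne_zero (Q : Matrix (Fin n) (Fin n) ℝ) (hQ : ∀ k l, 0 ≤ Q k l)
    (hrow : ∀ k, ∑ l, Q k l < 1) : ((1 : Matrix (Fin n) (Fin n) ℝ) - Q).det ≠ 0 := by
  intro hdet
  obtain ⟨v, hv0, hv⟩ := (Matrix.exists_mulVec_eq_zero_iff).2 hdet
  have key : ∀ (w : Fin n → ℝ), ((1 : Matrix (Fin n) (Fin n) ℝ) - Q) *ᵥ w = 0 →
      ∀ k, w k = (Q *ᵥ w) k := by
    intro w hw k
    have := congrFun hw k
    rw [Matrix.sub_mulVec, Matrix.one_mulVec] at this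
    have : w k - (Q *ᵥ w) k = 0 := this
    linarith
  have hp : ∀ k, 0 ≤ v k := by
    refine vec_nonneg Q hQ hrow v 0 (fun k => le_refl 0) (fun k => ?_)
    simpa using key v hv k
  have hneg : ∀ k, 0 ≤ (-v) k := by
    refine vec_nonneg Q hQ hrow (-v) 0 (fun k => le_refl 0) (fun k => ?_)
    have hv' : ((1 : Matrix (Fin n) (Fin n) ℝ) - Q) *ᵥ (-v) = 0 := by
      rw [Matrix.mulVec_neg, hv, neg_zero]
    simpa using key (-v) hv' k
  apply hv0
  funext k
  have h1 := hp k
  have h2 := hneg k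
  simp only [Pi.neg_apply] at h2
  have : v k = 0 := le_antisymm (by linarith) h1
  simpa using this

lemma smul_row_lt (Q : Matrix (Fin n) (Fin n) ℝ) (hrow : ∀ k, ∑ l, Q k l < 1)
    {t : ℝ} (ht : t ∈ Set.Icc (0:ℝ) 1) : ∀ k, ∑ l, (t • Q) k l < 1 := by
  intro k
  have hs := hrow k
  have h : ∑ l, (t • Q) k l = t * ∑ l, Q k l := by
    simp [Matrix.smul_apply, Finset.mul_sum, smul_eq_mul]
  rw [h]
  rcases le_or_gt (∑ l, Q k l) 0 with hc | hc
  · nlinarith [ht.1, ht.2]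
  · nlinarith [ht.1, ht.2]

lemma det_pos (Q : Matrix (Fin n) (Fin n) ℝ) (hQ : ∀ k l, 0 ≤ Q k l)
    (hrow : ∀ k, ∑ l, Q k l < 1) : 0 < ((1 : Matrix (Fin n) (Fin n) ℝ) - Q).det := by
  set F : ℝ → ℝ := fun t => ((1 : Matrix (Fin n) (Fin n) ℝ) - t • Q).det with hF
  have hcont : Continuous F := by
    apply Continuous.matrix_det
    exact continuous_const.sub (continuous_id.smul continuous_const)
  have hne : ∀ t ∈ Set.Icc (0:ℝ) 1, F t ≠ 0 := by
    intro t ht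
    exact det_ne_zero (t • Q) (fun k l => by
      simpa [Matrix.smul_apply, smul_eq_mul] using mul_nonneg ht.1 (hQ k l))
      (smul_row_lt Q hrow ht)
  have hF0 : F 0 = 1 := by simp [hF]
  have hF1 : F 1 = ((1 : Matrix (Fin n) (Fin n) ℝ) - Q).det := by simp [hF]
  by_contra hle
  push_neg at hle
  have hlt : F 1 < 0 := lt_of_le_of_ne (by rw [hF1]; exact hle) (hne 1 (by norm_num))
  have hmem : (0:ℝ) ∈ Set.Icc (F 1) (F 0) := ⟨hlt.le, by rw [hF0]; norm_num⟩
  have := intermediate_value_Icc' (by norm_num : (0:ℝ) ≤ 1) hcont.continuousOn hmem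
  obtain ⟨t, ht, hFt⟩ := this
  exact hne t ht hFt

lemma inv_nonneg (Q : Matrix (Fin n) (Fin n) ℝ) (hQ : ∀ k l, 0 ≤ Q k l)
    (hrow : ∀ k, ∑ l, Q k l < 1) :
    ∀ a b, 0 ≤ ((1 : Matrix (Fin n) (Fin n) ℝ) - Q)⁻¹ a b := by
  intro a b
  set B := (1 : Matrix (Fin n) (Fin n) ℝ) - Q with hB
  have hdet : IsUnit B.det := isUnit_iff_ne_zero.2 (det_ne_zero Q hQ hrow)
  set c : Fin n → ℝ := Pi.single b 1 with hc
  set v : Fin n → ℝ := B⁻¹ *ᵥ c with hv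
  have hBv : B *ᵥ v = c := by
    rw [hv, Matrix.mulVec_mulVec, Matrix.mul_nonsing_inv _ hdet, Matrix.one_mulVec]
  have hvk : ∀ k, v k = (Q *ᵥ v) k + c k := by
    intro k
    have := congrFun hBv k
    rw [hB, Matrix.sub_mulVec, Matrix.one_mulVec] at this
    have h' : v k - (Q *ᵥ v) k = c k := this
    linarith
  have := vec_nonneg Q hQ hrow v c
    (fun k => by rw [hc]; by_cases hk : k = b <;> simp [hk, Pi.single_apply]) hvk a
  have hva : v a = B⁻¹ a b := by
    rw [hv, hc, Matrix.mulVec_single]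
    simp
  rwa [hva] at this

lemma adjugate_eq_det_smul_inv (B : Matrix (Fin n) (Fin n) ℝ) (h : B.det ≠ 0) (a b : Fin n) :
    B.adjugate a b = B.det * B⁻¹ a b := by
  rw [Matrix.inv_def, Ring.inverse_eq_inv']
  simp only [Matrix.smul_apply, smul_eq_mul]
  field_simp

lemma adj_nonneg_strict (Q : Matrix (Fin n) (Fin n) ℝ) (hQ : ∀ k l, 0 ≤ Q k l)
    (hrow : ∀ k, ∑ l, Q k l < 1) (a b : Fin n) :
    0 ≤ ((1 : Matrix (Fin n) (Fin n) ℝ) - Q).adjugate a b := by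
  rw [adjugate_eq_det_smul_inv _ (det_ne_zero Q hQ hrow)]
  exact mul_nonneg (det_pos Q hQ hrow).le (inv_nonneg Q hQ hrow a b)

lemma smul_row_lt' (N : Matrix (Fin n) (Fin n) ℝ) (hN : ∀ k l, 0 ≤ N k l)
    (hrow : ∀ k, ∑ l, N k l ≤ 1) {t : ℝ} (ht : t ∈ Set.Ioo (0:ℝ) 1) :
    ∀ k, ∑ l, (t • N) k l < 1 := by
  intro k
  have h1 : ∑ l, (t • N) k l = t * ∑ l, N k l := by
    simp [Matrix.smul_apply, Finset.mul_sum, smul_eq_mul]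
  rw [h1]
  have h2 : 0 ≤ ∑ l, N k l := Finset.sum_nonneg fun l _ => hN k l
  nlinarith [ht.1, ht.2, hrow k]

lemma adj_nonneg (N : Matrix (Fin n) (Fin n) ℝ) (hN : ∀ k l, 0 ≤ N k l)
    (hrow : ∀ k, ∑ l, N k l ≤ 1) (a b : Fin n) :
    0 ≤ ((1 : Matrix (Fin n) (Fin n) ℝ) - N).adjugate a b := by
  have hcont : Continuous fun t : ℝ => ((1 : Matrix (Fin n) (Fin n) ℝ) - t • N).adjugate a b :=
    Continuous.matrix_elem (Continuous.matrix_adjugate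
      (continuous_const.sub (continuous_id.smul continuous_const))) a b
  have htend : Tendsto (fun t : ℝ => ((1 : Matrix (Fin n) (Fin n) ℝ) - t • N).adjugate a b)
      (nhdsWithin 1 (Set.Iio 1)) (nhds (((1 : Matrix (Fin n) (Fin n) ℝ) - N).adjugate a b)) := by
    have := hcont.tendsto 1
    simp only [one_smul] at this
    exact this.mono_left nhdsWithin_le_nhds
  refine ge_of_tendsto htend ?_
  filter_upwards [Ioo_mem_nhdsLT_of_mem (show (1:ℝ) ∈ Set.Ioc (0:ℝ) 1 by norm_num)] with t ht
  exact adj_nonneg_strict (t • N)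
    (fun k l => by simpa [Matrix.smul_apply, smul_eq_mul] using mul_nonneg ht.1.le (hN k l))
    (smul_row_lt' N hN hrow ht) a b

lemma det_nonneg (N : Matrix (Fin n) (Fin n) ℝ) (hN : ∀ k l, 0 ≤ N k l)
    (hrow : ∀ k, ∑ l, N k l ≤ 1) :
    0 ≤ ((1 : Matrix (Fin n) (Fin n) ℝ) - N).det := by
  have hcont : Continuous fun t : ℝ => ((1 : Matrix (Fin n) (Fin n) ℝ) - t • N).det :=
    Continuous.matrix_det (continuous_const.sub (continuous_id.smul continuous_const))
  have htend : Tendsto (fun t : ℝ => ((1 : Matrix (Fin n) (Fin n) ℝ) - t • N).det)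
      (nhdsWithin 1 (Set.Iio 1)) (nhds (((1 : Matrix (Fin n) (Fin n) ℝ) - N).det)) := by
    have := hcont.tendsto 1
    simp only [one_smul] at this
    exact this.mono_left nhdsWithin_le_nhds
  refine ge_of_tendsto htend ?_
  filter_upwards [Ioo_mem_nhdsLT_of_mem (show (1:ℝ) ∈ Set.Ioc (0:ℝ) 1 by norm_num)] with t ht
  exact (det_pos (t • N)
    (fun k l => by simpa [Matrix.smul_apply, smul_eq_mul] using mul_nonneg ht.1.le (hN k l))
    (smul_row_lt' N hN hrow ht)).le

def wgt (α : ℝ) (P : Matrix (Fin n) (Fin n) ℝ) (sp : Finset (Fin n)) (k : Fin n) :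
    Option (Fin n) → ℝ
  | none => if k ∈ sp then 1 else 1 - α
  | some m => if k ∈ sp then 0 else α * P k m

def vrow (i : Fin n) (sp : Finset (Fin n)) (k : Fin n) : Option (Fin n) → (Fin n → ℝ)
  | none => if k ∈ sp then Pi.single i 1 else Pi.single k 1
  | some m => if k ∈ sp then 0 else Pi.single k 1 - Pi.single m 1

lemma row_eq (α : ℝ) (P : Matrix (Fin n) (Fin n) ℝ) (i : Fin n) (sp : Finset (Fin n))
    (k : Fin n) (hrow : ∑ l, P k l = 1) :
    (if k ∈ sp then (Pi.single i 1 : Fin n → ℝ) else Pi.single k 1 - α • P k)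
      = ∑ j : Option (Fin n), wgt α P sp k j • vrow i sp k j := by
  rw [Fintype.sum_option]
  by_cases hsp : k ∈ sp
  · simp [wgt, vrow, hsp]
  · simp only [wgt, vrow, if_neg hsp]
    have h1 : ∀ m : Fin n, (α * P k m) • (Pi.single k 1 - Pi.single m 1 : Fin n → ℝ)
        = (α * P k m) • (Pi.single k 1 : Fin n → ℝ) - Pi.single m (α * P k m) := by
      intro m
      rw [smul_sub]
      congr 1
      rw [← Pi.single_smul, smul_eq_mul, mul_one]
    simp only [h1, Finset.sum_sub_distrib]
    rw [← Finset.sum_smul, ← Finset.mul_sum, hrow, mul_one,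
      Finset.univ_sum_single (f := fun m => α * P k m)]
    have h2 : (fun m => α * P k m) = α • P k := by
      funext l; simp [smul_eq_mul]
    rw [h2]
    module

lemma det_expand (α : ℝ) (P : Matrix (Fin n) (Fin n) ℝ) (i : Fin n) (sp : Finset (Fin n))
    (hP : ∀ k, ∑ l, P k l = 1) :
    (Matrix.of fun k => if k ∈ sp then (Pi.single i 1 : Fin n → ℝ)
        else Pi.single k 1 - α • P k).det
    = ∑ g : Fin n → Option (Fin n),
        (∏ k, wgt α P sp k (g k)) * (Matrix.of fun k => vrow i sp k (g k)).det := by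
  have hdet : ∀ (M : Matrix (Fin n) (Fin n) ℝ),
      M.det = (Matrix.detRowAlternating (R := ℝ) (n := Fin n)).toMultilinearMap M := fun _ => rfl
  rw [hdet]
  have hrows : (Matrix.of fun k => if k ∈ sp then (Pi.single i 1 : Fin n → ℝ)
      else Pi.single k 1 - α • P k)
      = fun k => ∑ j : Option (Fin n), wgt α P sp k j • vrow i sp k j := by
    funext k
    exact row_eq α P i sp k (hP k)
  rw [hrows]
  rw [MultilinearMap.map_sum]
  refine Finset.sum_congr rfl fun g _ => ?_
  rw [MultilinearMap.map_smul_univ, smul_eq_mul]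
  rfl

def Ng (g : Fin n → Option (Fin n)) : Matrix (Fin n) (Fin n) ℝ :=
  Matrix.of fun k => (g k).elim (0 : Fin n → ℝ) (fun m => Pi.single m 1)

lemma Ng_nonneg (g : Fin n → Option (Fin n)) : ∀ k l, 0 ≤ Ng g k l := by
  intro k l
  cases h : g k <;> simp [Ng, h, Pi.single_apply] <;> positivity

lemma Ng_row (g : Fin n → Option (Fin n)) : ∀ k, ∑ l, Ng g k l ≤ 1 := by
  intro k
  cases h : g k with
  | none => simp [Ng, h]
  | some m => simp [Ng, h, Pi.single_apply]

lemma coeff_nonneg_empty (i : Fin n) (g : Fin n → Option (Fin n)) :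
    0 ≤ (Matrix.of fun k => vrow i ∅ k (g k)).det := by
  have h : (Matrix.of fun k => vrow i ∅ k (g k)) = (1 : Matrix (Fin n) (Fin n) ℝ) - Ng g := by
    funext k l
    cases h : g k <;>
      simp [vrow, Ng, h, Matrix.one_apply, Pi.single_apply, eq_comm, Matrix.sub_apply]
  rw [h]
  exact det_nonneg (Ng g) (Ng_nonneg g) (Ng_row g)

lemma coeff_nonneg_single (i l₀ : Fin n) (g : Fin n → Option (Fin n)) :
    0 ≤ (Matrix.of fun k => vrow i {l₀} k (g k)).det := by
  cases h : g l₀ with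
  | some m =>
    have h0 : (Matrix.of fun k => vrow i {l₀} k (g k)).det = 0 := by
      apply Matrix.det_eq_zero_of_row_eq_zero l₀
      intro j
      simp [vrow, h]
    rw [h0]
  | none =>
    have heq : (Matrix.of fun k => vrow i {l₀} k (g k))
        = ((1 : Matrix (Fin n) (Fin n) ℝ) - Ng g).updateRow l₀ (Pi.single i 1) := by
      funext k l
      by_cases hk : k = l₀
      · subst hk
        simp [vrow, h, Matrix.updateRow_self]
      · rw [Matrix.updateRow_ne hk]
        have hk' : ¬ l₀ = k := fun hh => hk hh.symm
        cases h' : g k <;>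
          simp [vrow, Ng, h', hk, hk', Matrix.one_apply, Pi.single_apply, eq_comm,
            Matrix.sub_apply]
    rw [heq, ← Matrix.adjugate_apply]
    exact adj_nonneg (Ng g) (Ng_nonneg g) (Ng_row g) i l₀

lemma wgt_nonneg {α : ℝ} (hα : α ∈ Set.Ioo (0:ℝ) 1) (P : Matrix (Fin n) (Fin n) ℝ)
    (hP : ∀ k l, 0 ≤ P k l) (sp : Finset (Fin n)) (k : Fin n) (j : Option (Fin n)) :
    0 ≤ wgt α P sp k j := by
  cases j <;> by_cases hk : k ∈ sp <;>
    simp [wgt, hk] <;> nlinarith [hα.1, hα.2, hP k ‹_›]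

lemma wgt_le {α γ : ℝ} (hα : α ∈ Set.Ioo (0:ℝ) 1) (hγ : 1 ≤ γ)
    (P₁ P₂ : Matrix (Fin n) (Fin n) ℝ) (h12 : ∀ k l, P₁ k l ≤ γ * P₂ k l)
    (sp : Finset (Fin n)) (k : Fin n) (j : Option (Fin n)) :
    wgt α P₁ sp k j ≤ γ * wgt α P₂ sp k j := by
  cases j with
  | none =>
    by_cases hk : k ∈ sp <;> simp [wgt, hk] <;> nlinarith [hα.1, hα.2]
  | some m =>
    by_cases hk : k ∈ sp <;> simp [wgt, hk]
    calc α * P₁ k m ≤ α * (γ * P₂ k m) := mul_le_mul_of_nonneg_left (h12 k m) hα.1.le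
      _ = γ * (α * P₂ k m) := by ring

lemma sum_expand_le {α γ : ℝ} (hα : α ∈ Set.Ioo (0:ℝ) 1) (hγ : 1 ≤ γ)
    (P₁ P₂ : Matrix (Fin n) (Fin n) ℝ)
    (hP₁ : ∀ k l, 0 ≤ P₁ k l) (hP₁row : ∀ k, ∑ l, P₁ k l = 1)
    (hP₂row : ∀ k, ∑ l, P₂ k l = 1)
    (h12 : ∀ k l, P₁ k l ≤ γ * P₂ k l) (i : Fin n) (sp : Finset (Fin n))
    (hc : ∀ g : Fin n → Option (Fin n), 0 ≤ (Matrix.of fun k => vrow i sp k (g k)).det) :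
    (Matrix.of fun k => if k ∈ sp then (Pi.single i 1 : Fin n → ℝ)
        else Pi.single k 1 - α • P₁ k).det
    ≤ γ ^ n * (Matrix.of fun k => if k ∈ sp then (Pi.single i 1 : Fin n → ℝ)
        else Pi.single k 1 - α • P₂ k).det := by
  rw [det_expand α P₁ i sp hP₁row, det_expand α P₂ i sp hP₂row, Finset.mul_sum]
  refine Finset.sum_le_sum fun g _ => ?_
  have hprod : (∏ k, wgt α P₁ sp k (g k)) ≤ γ ^ n * ∏ k, wgt α P₂ sp k (g k) := by
    calc (∏ k, wgt α P₁ sp k (g k)) ≤ ∏ k, γ * wgt α P₂ sp k (g k) :=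
        Finset.prod_le_prod (fun k _ => wgt_nonneg hα P₁ hP₁ sp k (g k))
          (fun k _ => wgt_le hα hγ P₁ P₂ h12 sp k (g k))
      _ = γ ^ n * ∏ k, wgt α P₂ sp k (g k) := by
          rw [Finset.prod_mul_distrib, Finset.prod_const, Finset.card_univ, Fintype.card_fin]
  calc (∏ k, wgt α P₁ sp k (g k)) * (Matrix.of fun k => vrow i sp k (g k)).det
      ≤ (γ ^ n * ∏ k, wgt α P₂ sp k (g k)) * (Matrix.of fun k => vrow i sp k (g k)).det :=
        mul_le_mul_of_nonneg_right hprod (hc g)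
    _ = γ ^ n * ((∏ k, wgt α P₂ sp k (g k)) * (Matrix.of fun k => vrow i sp k (g k)).det) := by
        ring

lemma one_sub_eq (α : ℝ) (P : Matrix (Fin n) (Fin n) ℝ) (i : Fin n) :
    (1 : Matrix (Fin n) (Fin n) ℝ) - α • P
    = Matrix.of fun k => if k ∈ (∅ : Finset (Fin n)) then (Pi.single i 1 : Fin n → ℝ)
        else Pi.single k 1 - α • P k := by
  funext k l
  simp [Matrix.sub_apply, Matrix.one_apply, Pi.single_apply, eq_comm,
    Matrix.smul_apply, smul_eq_mul]

lemma upd_eq (α : ℝ) (P : Matrix (Fin n) (Fin n) ℝ) (i l₀ : Fin n) :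
    ((1 : Matrix (Fin n) (Fin n) ℝ) - α • P).updateRow l₀ (Pi.single i 1)
    = Matrix.of fun k => if k ∈ ({l₀} : Finset (Fin n)) then (Pi.single i 1 : Fin n → ℝ)
        else Pi.single k 1 - α • P k := by
  funext k l
  by_cases hk : k = l₀
  · subst hk; simp [Matrix.updateRow_self]
  · rw [Matrix.updateRow_ne hk]
    have hk' : ¬ k ∈ ({l₀} : Finset (Fin n)) := by simp [hk]
    simp only [Matrix.of_apply, if_neg hk']
    simp [Matrix.sub_apply, Matrix.one_apply, Pi.single_apply, eq_comm,
      Matrix.smul_apply, smul_eq_mul]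



lemma smul_stoch_nonneg {α : ℝ} (hα : 0 ≤ α) (P : Matrix (Fin n) (Fin n) ℝ)
    (hP : ∀ k l, 0 ≤ P k l) : ∀ k l, 0 ≤ (α • P) k l := fun k l => by
  simpa [Matrix.smul_apply, smul_eq_mul] using mul_nonneg hα (hP k l)

lemma smul_stoch_row {α : ℝ} (hα : α ∈ Set.Ioo (0:ℝ) 1) (P : Matrix (Fin n) (Fin n) ℝ)
    (hProw : ∀ k, ∑ l, P k l = 1) : ∀ k, ∑ l, (α • P) k l < 1 := fun k => by
  have h : ∑ l, (α • P) k l = α := by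
    simp [Matrix.smul_apply, smul_eq_mul, ← Finset.mul_sum, hProw k]
  rw [h]; exact hα.2

lemma smul_stoch_row_le {α : ℝ} (hα : α ∈ Set.Ioo (0:ℝ) 1) (P : Matrix (Fin n) (Fin n) ℝ)
    (hProw : ∀ k, ∑ l, P k l = 1) : ∀ k, ∑ l, (α • P) k l ≤ 1 :=
  fun k => (smul_stoch_row hα P hProw k).le

lemma det_le {α γ : ℝ} (hα : α ∈ Set.Ioo (0:ℝ) 1) (hγ : 1 ≤ γ)
    (P₁ P₂ : Matrix (Fin n) (Fin n) ℝ)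
    (hP₁ : ∀ k l, 0 ≤ P₁ k l) (hP₁row : ∀ k, ∑ l, P₁ k l = 1)
    (hP₂row : ∀ k, ∑ l, P₂ k l = 1)
    (h12 : ∀ k l, P₁ k l ≤ γ * P₂ k l) (i : Fin n) :
    ((1 : Matrix (Fin n) (Fin n) ℝ) - α • P₁).det
      ≤ γ ^ n * ((1 : Matrix (Fin n) (Fin n) ℝ) - α • P₂).det := by
  rw [one_sub_eq α P₁ i, one_sub_eq α P₂ i]
  exact sum_expand_le hα hγ P₁ P₂ hP₁ hP₁row hP₂row h12 i ∅ (coeff_nonneg_empty i)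

lemma adj_le {α γ : ℝ} (hα : α ∈ Set.Ioo (0:ℝ) 1) (hγ : 1 ≤ γ)
    (P₁ P₂ : Matrix (Fin n) (Fin n) ℝ)
    (hP₁ : ∀ k l, 0 ≤ P₁ k l) (hP₁row : ∀ k, ∑ l, P₁ k l = 1)
    (hP₂row : ∀ k, ∑ l, P₂ k l = 1)
    (h12 : ∀ k l, P₁ k l ≤ γ * P₂ k l) (i l : Fin n) :
    ((1 : Matrix (Fin n) (Fin n) ℝ) - α • P₁).adjugate i l
      ≤ γ ^ n * ((1 : Matrix (Fin n) (Fin n) ℝ) - α • P₂).adjugate i l := by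
  rw [Matrix.adjugate_apply, Matrix.adjugate_apply, upd_eq α P₁ i l, upd_eq α P₂ i l]
  exact sum_expand_le hα hγ P₁ P₂ hP₁ hP₁row hP₂row h12 i {l} (coeff_nonneg_single i l)

lemma inv_entry_le {α γ : ℝ} (hα : α ∈ Set.Ioo (0:ℝ) 1) (hγ : 1 ≤ γ)
    (P₁ P₂ : Matrix (Fin n) (Fin n) ℝ)
    (hP₁ : ∀ k l, 0 ≤ P₁ k l) (hP₁row : ∀ k, ∑ l, P₁ k l = 1)
    (hP₂ : ∀ k l, 0 ≤ P₂ k l) (hP₂row : ∀ k, ∑ l, P₂ k l = 1)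
    (h12 : ∀ k l, P₁ k l ≤ γ * P₂ k l) (h21 : ∀ k l, P₂ k l ≤ γ * P₁ k l) (i l : Fin n) :
    ((1 : Matrix (Fin n) (Fin n) ℝ) - α • P₁)⁻¹ i l
      ≤ (γ ^ n * γ ^ n) * ((1 : Matrix (Fin n) (Fin n) ℝ) - α • P₂)⁻¹ i l := by
  set B₁ := (1 : Matrix (Fin n) (Fin n) ℝ) - α • P₁ with hB₁
  set B₂ := (1 : Matrix (Fin n) (Fin n) ℝ) - α • P₂ with hB₂
  have hd₁ : 0 < B₁.det :=
    det_pos _ (smul_stoch_nonneg hα.1.le P₁ hP₁) (smul_stoch_row hα P₁ hP₁row)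
  have hd₂ : 0 < B₂.det :=
    det_pos _ (smul_stoch_nonneg hα.1.le P₂ hP₂) (smul_stoch_row hα P₂ hP₂row)
  have hA₂nn : 0 ≤ B₂.adjugate i l :=
    adj_nonneg _ (smul_stoch_nonneg hα.1.le P₂ hP₂) (smul_stoch_row_le hα P₂ hP₂row) i l
  have hA12 : B₁.adjugate i l ≤ γ ^ n * B₂.adjugate i l :=
    adj_le hα hγ P₁ P₂ hP₁ hP₁row hP₂row h12 i l
  have hD21 : B₂.det ≤ γ ^ n * B₁.det :=
    det_le hα hγ P₂ P₁ hP₂ hP₂row hP₁row h21 i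
  have e₁ : B₁⁻¹ i l = B₁.adjugate i l / B₁.det := by
    have h := adjugate_eq_det_smul_inv B₁ hd₁.ne' i l
    rw [eq_div_iff hd₁.ne']
    linarith [h]
  have e₂ : B₂⁻¹ i l = B₂.adjugate i l / B₂.det := by
    have h := adjugate_eq_det_smul_inv B₂ hd₂.ne' i l
    rw [eq_div_iff hd₂.ne']
    linarith [h]
  rw [e₁, e₂, ← mul_div_assoc, div_le_div_iff₀ hd₁ hd₂]
  calc B₁.adjugate i l * B₂.det ≤ (γ ^ n * B₂.adjugate i l) * B₂.det :=
        mul_le_mul_of_nonneg_right hA12 hd₂.le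
    _ ≤ (γ ^ n * B₂.adjugate i l) * (γ ^ n * B₁.det) :=
        mul_le_mul_of_nonneg_left hD21 (mul_nonneg (pow_nonneg (by linarith) n) hA₂nn)
    _ = γ ^ n * γ ^ n * B₂.adjugate i l * B₁.det := by ring

lemma inv_row_sum {α : ℝ} (hα : α ∈ Set.Ioo (0:ℝ) 1) (P : Matrix (Fin n) (Fin n) ℝ)
    (hP : ∀ k l, 0 ≤ P k l) (hProw : ∀ k, ∑ l, P k l = 1) (i : Fin n) :
    ∑ l, ((1 : Matrix (Fin n) (Fin n) ℝ) - α • P)⁻¹ i l = (1 - α)⁻¹ := by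
  set B := (1 : Matrix (Fin n) (Fin n) ℝ) - α • P with hB
  have hdet : IsUnit B.det := isUnit_iff_ne_zero.2
    (det_ne_zero _ (smul_stoch_nonneg hα.1.le P hP) (smul_stoch_row hα P hProw))
  have h1α : (1:ℝ) - α ≠ 0 := by have := hα.2; intro h; linarith
  have hBv : B *ᵥ (fun _ => (1 - α)⁻¹) = (fun _ => (1:ℝ)) := by
    funext k
    have h1 : (B *ᵥ fun _ => (1 - α)⁻¹) k = ∑ l, B k l * (1 - α)⁻¹ := by
      simp [Matrix.mulVec, dotProduct]
    rw [h1, ← Finset.sum_mul]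
    have h2 : ∑ l, B k l = 1 - α := by
      rw [hB]
      simp only [Matrix.sub_apply, Matrix.one_apply, Matrix.smul_apply, smul_eq_mul,
        Finset.sum_sub_distrib, ← Finset.mul_sum, hProw k]
      simp
    rw [h2]
    field_simp
  have hv : (fun _ => (1 - α)⁻¹ : Fin n → ℝ) = B⁻¹ *ᵥ (fun _ => (1:ℝ)) := by
    rw [← hBv, Matrix.mulVec_mulVec, Matrix.nonsing_inv_mul _ hdet, Matrix.one_mulVec]
  have h3 := congrFun hv i
  simp only [Matrix.mulVec, dotProduct, mul_one] at h3
  exact h3.symm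

lemma Kbound {ε : ℝ} (hε0 : 0 < ε) (hε1 : ε < 1) {n : ℕ} (hn : 0 < n) :
    (1 + ε / (8 * n)) ^ n * (1 + ε / (8 * n)) ^ n - 1 ≤ ε / 2 := by
  set δ : ℝ := ε / (8 * n) with hδ
  have hn' : (0:ℝ) < n := by exact_mod_cast hn
  have hn1 : (1:ℝ) ≤ n := by exact_mod_cast hn
  have hδ0 : 0 < δ := by positivity
  have hδ8 : δ ≤ 1/8 := by
    rw [hδ, div_le_div_iff₀ (by positivity) (by norm_num)]
    nlinarith
  have hb : 1 - (2*(n:ℝ))*δ ≤ (1-δ)^(2*n) := by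
    have h := one_add_mul_le_pow (a := -δ) (by linarith) (2*n)
    calc 1 - (2*(n:ℝ))*δ = 1 + (↑(2*n) : ℝ) * (-δ) := by push_cast; ring
      _ ≤ (1 + -δ)^(2*n) := h
      _ = (1-δ)^(2*n) := by ring_nf
  have hid : (2*(n:ℝ))*δ = ε/4 := by
    rw [hδ]; field_simp; ring
  have hprod : ((1+δ)^n*(1+δ)^n) * (1-δ)^(2*n) ≤ 1 := by
    have h1 : (1+δ)^n*(1+δ)^n = (1+δ)^(2*n) := by
      rw [← pow_add]; congr 1; ring
    rw [h1, ← mul_pow]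
    have h2 : (1+δ)*(1-δ) = 1 - δ^2 := by ring
    rw [h2]
    apply pow_le_one₀ (by nlinarith) (by nlinarith)
  set K := (1+δ)^n*(1+δ)^n with hK
  have hK0 : 0 ≤ K := by positivity
  have h3 : K * (1 - ε/4) ≤ 1 := by
    calc K * (1-ε/4) ≤ K * (1-δ)^(2*n) := by
          apply mul_le_mul_of_nonneg_left _ hK0
          rw [← hid]; linarith [hb]
      _ ≤ 1 := hprod
  nlinarith [h3, hK0, hε0, hε1]

end Stmt5Aux

open Stmt5Aux in
theorem stmt_5 (n : ℕ) (ε : ℝ) (hε : ε ∈ Set.Ioo (0:ℝ) 1)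
    (P₁ P₂ : Matrix (Fin n) (Fin n) ℝ)
    (hP₁ : ∀ k l, 0 ≤ P₁ k l) (hP₁row : ∀ k, ∑ l, P₁ k l = 1)
    (hP₂ : ∀ k l, 0 ≤ P₂ k l) (hP₂row : ∀ k, ∑ l, P₂ k l = 1)
    (r₁ r₂ : Fin n → ℝ) (i : Fin n)
    (hA1 : ∀ k l, 0 < P₁ k l ↔ 0 < P₂ k l)
    (hA2 : ∀ k l, 0 < P₁ k l → 0 < P₂ k l →
      max (P₁ k l / P₂ k l) (P₂ k l / P₁ k l) - 1 ≤ ε / (8 * n))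
    (hA3 : ∀ k, |r₁ k - r₂ k| ≤ ε / 2)
    (φ₁ φ₂ : ℝ)
    (hφ₁ : Tendsto (fun α : ℝ => (1 - α) * ((1 - α • P₁)⁻¹ *ᵥ r₁) i)
      (nhdsWithin 1 (Set.Iio 1)) (nhds φ₁))
    (hφ₂ : Tendsto (fun α : ℝ => (1 - α) * ((1 - α • P₂)⁻¹ *ᵥ r₂) i)
      (nhdsWithin 1 (Set.Iio 1)) (nhds φ₂)) :
    |φ₁ - φ₂| ≤ ε / 2 + ε / 2 *
      Finset.univ.sup' ⟨i, Finset.mem_univ i⟩ (fun k => |r₁ k|) := by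
  obtain ⟨hε0, hε1⟩ := hε
  have hn : 0 < n := i.pos
  have hn' : (0:ℝ) < n := by exact_mod_cast hn
  set δ : ℝ := ε / (8 * n) with hδdef
  set γ : ℝ := 1 + δ with hγdef
  have hδ0 : 0 < δ := by positivity
  have hγ1 : 1 ≤ γ := by rw [hγdef]; linarith
  set M : ℝ := Finset.univ.sup' ⟨i, Finset.mem_univ i⟩ (fun k => |r₁ k|) with hM
  have hMk : ∀ k, |r₁ k| ≤ M := fun k => Finset.le_sup' (fun k => |r₁ k|) (Finset.mem_univ k)
  have hM0 : 0 ≤ M := le_trans (abs_nonneg (r₁ i)) (hMk i)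
  -- entrywise ratio comparisons
  have hcmp : ∀ (Q₁ Q₂ : Matrix (Fin n) (Fin n) ℝ), (∀ k l, 0 ≤ Q₁ k l) → (∀ k l, 0 ≤ Q₂ k l) →
      (∀ k l, 0 < Q₁ k l ↔ 0 < Q₂ k l) →
      (∀ k l, 0 < Q₁ k l → 0 < Q₂ k l → Q₁ k l / Q₂ k l - 1 ≤ δ) →
      ∀ k l, Q₁ k l ≤ γ * Q₂ k l := by
    intro Q₁ Q₂ h1 h2 hiff hrat k l
    by_cases h : 0 < Q₂ k l
    · have hq1 : 0 < Q₁ k l := (hiff k l).2 h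
      have h3 : Q₁ k l / Q₂ k l ≤ γ := by
        have := hrat k l hq1 h
        rw [hγdef]; linarith
      calc Q₁ k l = (Q₁ k l / Q₂ k l) * Q₂ k l := by field_simp
        _ ≤ γ * Q₂ k l := mul_le_mul_of_nonneg_right h3 h.le
    · have h2z : Q₂ k l = 0 := le_antisymm (not_lt.1 h) (h2 k l)
      have h1z : Q₁ k l = 0 := by
        by_contra hne
        exact h ((hiff k l).1 (lt_of_le_of_ne (h1 k l) (Ne.symm hne)))
      rw [h1z, h2z, mul_zero]
  have h12 : ∀ k l, P₁ k l ≤ γ * P₂ k l :=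
    hcmp P₁ P₂ hP₁ hP₂ hA1 (fun k l hk hl => by
      have := hA2 k l hk hl
      have hle := le_max_left (P₁ k l / P₂ k l) (P₂ k l / P₁ k l)
      linarith)
  have h21 : ∀ k l, P₂ k l ≤ γ * P₁ k l :=
    hcmp P₂ P₁ hP₂ hP₁ (fun k l => (hA1 k l).symm) (fun k l hk hl => by
      have := hA2 l  -- dummy
      have h2 := hA2 k l hl hk
      have hle := le_max_right (P₁ k l / P₂ k l) (P₂ k l / P₁ k l)
      linarith)
  set K : ℝ := γ ^ n * γ ^ n with hKdef
  have hγn1 : 1 ≤ γ ^ n := one_le_pow₀ hγ1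
  have hK1 : 1 ≤ K := by rw [hKdef]; nlinarith
  have hKe : K - 1 ≤ ε / 2 := by
    rw [hKdef, hγdef, hδdef]
    exact Kbound hε0 hε1 hn
  -- pointwise bound, valid for all discount factors in (0,1)
  have key : ∀ a : ℝ, a ∈ Set.Ioo (0:ℝ) 1 →
      |(1 - a) * ((1 - a • P₁)⁻¹ *ᵥ r₁) i - (1 - a) * ((1 - a • P₂)⁻¹ *ᵥ r₂) i|
        ≤ ε / 2 + ε / 2 * M := by
    intro a ha
    have h1a : (0:ℝ) < 1 - a := by have := ha.2; linarith
    set B₁ : Matrix (Fin n) (Fin n) ℝ := 1 - a • P₁ with hB₁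
    set B₂ : Matrix (Fin n) (Fin n) ℝ := 1 - a • P₂ with hB₂
    set w₁ : Fin n → ℝ := fun l => (1 - a) * B₁⁻¹ i l with hw₁
    set w₂ : Fin n → ℝ := fun l => (1 - a) * B₂⁻¹ i l with hw₂
    have hw₁nn : ∀ l, 0 ≤ w₁ l := fun l => mul_nonneg h1a.le
      (inv_nonneg _ (smul_stoch_nonneg ha.1.le P₁ hP₁) (smul_stoch_row ha P₁ hP₁row) i l)
    have hw₂nn : ∀ l, 0 ≤ w₂ l := fun l => mul_nonneg h1a.le
      (inv_nonneg _ (smul_stoch_nonneg ha.1.le P₂ hP₂) (smul_stoch_row ha P₂ hP₂row) i l)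
    have hsum₂ : ∑ l, w₂ l = 1 := by
      rw [hw₂, ← Finset.mul_sum, inv_row_sum ha P₂ hP₂ hP₂row i]
      field_simp
    have hw12 : ∀ l, w₁ l ≤ K * w₂ l := by
      intro l
      have h := inv_entry_le ha hγ1 P₁ P₂ hP₁ hP₁row hP₂ hP₂row h12 h21 i l
      calc w₁ l = (1 - a) * B₁⁻¹ i l := rfl
        _ ≤ (1 - a) * ((γ ^ n * γ ^ n) * B₂⁻¹ i l) := mul_le_mul_of_nonneg_left h h1a.le
        _ = K * w₂ l := by rw [hKdef, hw₂]; ring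
    have hw21 : ∀ l, w₂ l ≤ K * w₁ l := by
      intro l
      have h := inv_entry_le ha hγ1 P₂ P₁ hP₂ hP₂row hP₁ hP₁row h21 h12 i l
      calc w₂ l = (1 - a) * B₂⁻¹ i l := rfl
        _ ≤ (1 - a) * ((γ ^ n * γ ^ n) * B₁⁻¹ i l) := mul_le_mul_of_nonneg_left h h1a.le
        _ = K * w₁ l := by rw [hKdef, hw₁]; ring
    have habs : ∀ l, |w₁ l - w₂ l| ≤ (K - 1) * w₂ l := by
      intro l
      rw [abs_sub_le_iff]
      constructor
      · linarith [hw12 l]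
      · nlinarith [hw21 l, hw₁nn l, hw₂nn l, hK1,
          mul_nonneg (hw₂nn l) (sq_nonneg (K - 1))]
    have hf₁ : (1 - a) * (B₁⁻¹ *ᵥ r₁) i = ∑ l, w₁ l * r₁ l := by
      have hmv : (B₁⁻¹ *ᵥ r₁) i = ∑ l, B₁⁻¹ i l * r₁ l := by
        simp [Matrix.mulVec, dotProduct]
      rw [hmv, Finset.mul_sum]
      exact Finset.sum_congr rfl fun l _ => by rw [hw₁]; ring
    have hf₂ : (1 - a) * (B₂⁻¹ *ᵥ r₂) i = ∑ l, w₂ l * r₂ l := by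
      have hmv : (B₂⁻¹ *ᵥ r₂) i = ∑ l, B₂⁻¹ i l * r₂ l := by
        simp [Matrix.mulVec, dotProduct]
      rw [hmv, Finset.mul_sum]
      exact Finset.sum_congr rfl fun l _ => by rw [hw₂]; ring
    rw [hf₁, hf₂]
    calc |∑ l, w₁ l * r₁ l - ∑ l, w₂ l * r₂ l|
        = |∑ l, (w₁ l * r₁ l - w₂ l * r₂ l)| := by rw [Finset.sum_sub_distrib]
      _ ≤ ∑ l, |w₁ l * r₁ l - w₂ l * r₂ l| := Finset.abs_sum_le_sum_abs _ _
      _ ≤ ∑ l, ((K - 1) * M + ε / 2) * w₂ l := by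
          refine Finset.sum_le_sum fun l _ => ?_
          have hsplit : w₁ l * r₁ l - w₂ l * r₂ l
              = (w₁ l - w₂ l) * r₁ l + w₂ l * (r₁ l - r₂ l) := by ring
          calc |w₁ l * r₁ l - w₂ l * r₂ l|
              ≤ |(w₁ l - w₂ l) * r₁ l| + |w₂ l * (r₁ l - r₂ l)| := by
                rw [hsplit]; exact abs_add_le _ _
            _ = |w₁ l - w₂ l| * |r₁ l| + w₂ l * |r₁ l - r₂ l| := by
                rw [abs_mul, abs_mul, abs_of_nonneg (hw₂nn l)]
            _ ≤ ((K - 1) * w₂ l) * M + w₂ l * (ε / 2) := by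
                have h1 : |w₁ l - w₂ l| * |r₁ l| ≤ ((K - 1) * w₂ l) * M :=
                  mul_le_mul (habs l) (hMk l) (abs_nonneg _)
                    (mul_nonneg (by linarith) (hw₂nn l))
                have h2 : w₂ l * |r₁ l - r₂ l| ≤ w₂ l * (ε / 2) :=
                  mul_le_mul_of_nonneg_left (hA3 l) (hw₂nn l)
                linarith
            _ = ((K - 1) * M + ε / 2) * w₂ l := by ring
      _ = ((K - 1) * M + ε / 2) * ∑ l, w₂ l := by rw [← Finset.mul_sum]
      _ = (K - 1) * M + ε / 2 := by rw [hsum₂, mul_one]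
      _ ≤ ε / 2 + ε / 2 * M := by nlinarith [mul_le_mul_of_nonneg_right hKe hM0]
  have htend : Tendsto (fun a : ℝ =>
      |(1 - a) * ((1 - a • P₁)⁻¹ *ᵥ r₁) i - (1 - a) * ((1 - a • P₂)⁻¹ *ᵥ r₂) i|)
      (nhdsWithin 1 (Set.Iio 1)) (nhds |φ₁ - φ₂|) := (hφ₁.sub hφ₂).abs
  refine le_of_tendsto htend ?_
  filter_upwards [Ioo_mem_nhdsLT_of_mem (show (1:ℝ) ∈ Set.Ioc (0:ℝ) 1 by norm_num)] with t ht
  exact key t ht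
end

section
/- Let P be an n×n row-stochastic matrix and r ∈ ℝⁿ. Then there exists L ∈ ℝⁿ such that both (1/T)·∑_{t=0}^{T−1} (Pᵗ r) → L as T → ∞, and (1−α)·((I − α·P)⁻¹ *ᵥ r) → L as α → 1 from the left. -/
open Matrix Filter

set_option maxHeartbeats 1000000 in
theorem stmt_6 (n : ℕ) (P : Matrix (Fin n) (Fin n) ℝ)
    (hP : ∀ k l, 0 ≤ P k l) (hProw : ∀ k, ∑ l, P k l = 1)
    (r : Fin n → ℝ) :
    ∃ L : Fin n → ℝ,
      Tendsto (fun T : ℕ => (1 / (T : ℝ)) • ∑ t ∈ Finset.range T, (P ^ t) *ᵥ r)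
        atTop (nhds L) ∧
      Tendsto (fun α : ℝ => (1 - α) • ((1 - α • P)⁻¹ *ᵥ r))
        (nhdsWithin 1 (Set.Iio 1)) (nhds L) := by
  classical
  -- contraction in sup norm
  have hcontr : ∀ v : Fin n → ℝ, ‖P *ᵥ v‖ ≤ ‖v‖ := by
    intro v
    refine (pi_norm_le_iff_of_nonneg (norm_nonneg v)).2 fun k => ?_
    calc ‖(P *ᵥ v) k‖ = ‖∑ l, P k l * v l‖ := by
          simp [Matrix.mulVec, dotProduct]
      _ ≤ ∑ l, ‖P k l * v l‖ := norm_sum_le _ _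
      _ ≤ ∑ l, P k l * ‖v‖ := by
          refine Finset.sum_le_sum fun l _ => ?_
          rw [norm_mul, Real.norm_of_nonneg (hP k l)]
          exact mul_le_mul_of_nonneg_left (norm_le_pi_norm v l) (hP k l)
      _ = ‖v‖ := by rw [← Finset.sum_mul, hProw k, one_mul]
  set f : (Fin n → ℝ) →ₗ[ℝ] (Fin n → ℝ) := P.mulVecLin with hf_def
  have hfapp : ∀ v : Fin n → ℝ, f v = P *ᵥ v := fun v => rfl
  have hiter : ∀ (t : ℕ) (v : Fin n → ℝ), f^[t] v = (P ^ t) *ᵥ v := by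
    intro t
    induction t with
    | zero => intro v; simp
    | succ t ih =>
      intro v
      rw [Function.iterate_succ_apply', ih, hfapp, Matrix.mulVec_mulVec, ← pow_succ']
  have hiter_norm : ∀ (t : ℕ) (v : Fin n → ℝ), ‖f^[t] v‖ ≤ ‖v‖ := by
    intro t
    induction t with
    | zero => intro v; simp
    | succ t ih =>
      intro v
      rw [Function.iterate_succ_apply']
      exact le_trans (hcontr _) (ih v)
  have hf_lip : LipschitzWith 1 f := by
    refine LipschitzWith.of_dist_le_mul fun a b => ?_
    rw [dist_eq_norm, dist_eq_norm, NNReal.coe_one, one_mul, ← map_sub]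
    exact hcontr _
  -- the fixed subspace and the range of f - 1
  set K : Submodule ℝ (Fin n → ℝ) := LinearMap.eqLocus f 1 with hK_def
  set R : Submodule ℝ (Fin n → ℝ) := LinearMap.range (f - 1) with hR_def
  have hdisj : Disjoint K R := by
    rw [Submodule.disjoint_def]
    intro v hvK hvR
    obtain ⟨w, hw⟩ := hvR
    have hvfix : f v = v := hvK
    have hwv : f w - w = v := by
      simpa [LinearMap.sub_apply] using hw
    have hiterfix : ∀ t : ℕ, f^[t] v = v := by
      intro t
      induction t with
      | zero => rfl
      | succ t ih => rw [Function.iterate_succ_apply', ih, hvfix]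
    have key : ∀ N : ℕ, (N : ℝ) • v = f^[N] w - w := by
      intro N
      induction N with
      | zero => simp
      | succ N ih =>
        have h1 : f^[N + 1] w = f^[N] w + v := by
          rw [Function.iterate_succ_apply]
          have : f^[N] (f w) = f^[N] w + f^[N] (f w - w) := by
            rw [← Module.End.pow_apply, ← Module.End.pow_apply, ← Module.End.pow_apply,
              ← map_add]
            congr 1
            abel
          rw [this, ← Module.End.pow_apply]
          rw [show f w - w = v from hwv, Module.End.pow_apply, hiterfix]
        rw [h1]
        push_cast
        rw [add_smul, one_smul, ih]
        abel
    by_contra hv0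
    have hvpos : 0 < ‖v‖ := norm_pos_iff.2 hv0
    obtain ⟨N, hN⟩ := exists_nat_gt ((2 * ‖w‖) / ‖v‖)
    have hb : (N : ℝ) * ‖v‖ ≤ 2 * ‖w‖ := by
      have := key N
      have h2 : ‖(N : ℝ) • v‖ ≤ ‖f^[N] w‖ + ‖w‖ := by
        rw [this]; exact norm_sub_le _ _
      have h3 : ‖f^[N] w‖ ≤ ‖w‖ := hiter_norm N w
      rw [norm_smul, Real.norm_natCast] at h2
      linarith
    rw [div_lt_iff₀ hvpos] at hN
    linarith
  have hdim : Module.finrank ℝ K + Module.finrank ℝ R = Module.finrank ℝ (Fin n → ℝ) := by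
    rw [hK_def, hR_def, LinearMap.eqLocus_eq_ker_sub, add_comm]
    exact LinearMap.finrank_range_add_finrank_ker (f - 1)
  have hcompl : IsCompl K R :=
    ⟨hdisj, codisjoint_iff.2 (Submodule.eq_top_of_disjoint K R hdim.ge hdisj)⟩
  set g₀ : (Fin n → ℝ) →ₗ[ℝ] ↥K := K.linearProjOfIsCompl R hcompl with hg₀_def
  set g : (Fin n → ℝ) →L[ℝ] ↥K := LinearMap.toContinuousLinearMap g₀ with hg_def
  have hg_apply : ∀ x : Fin n → ℝ, g x = g₀ x := fun x => rfl
  have hg_proj : ∀ x : K, g x = x := fun x => by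
    rw [hg_apply]; exact Submodule.linearProjOfIsCompl_apply_left hcompl x
  have hg_ker : (g.ker : Set (Fin n → ℝ)) ⊆ closure (LinearMap.range (f - 1)) := by
    intro x hx
    apply subset_closure
    have : g₀ x = 0 := by
      have := hx
      simpa [LinearMap.mem_ker, hg_apply] using hx
    exact (Submodule.linearProjOfIsCompl_apply_eq_zero_iff hcompl).1 this
  have hmain := LinearMap.tendsto_birkhoffAverage_of_ker_subset_closure
    f hf_lip g hg_proj hg_ker r
  set z : Fin n → ℝ := ((g r : ↥K) : Fin n → ℝ) with hz_def
  have hmain' : Tendsto (fun x => birkhoffAverage ℝ (⇑f) id x r) atTop (nhds z) := hmain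
  refine ⟨z, ?_, ?_⟩
  · -- Cesàro part
    have : (fun T : ℕ => (1 / (T : ℝ)) • ∑ t ∈ Finset.range T, (P ^ t) *ᵥ r)
        = fun T : ℕ => birkhoffAverage ℝ f _root_.id T r := by
      funext T
      simp [birkhoffAverage, birkhoffSum, hiter, one_div]
    rw [this]
    exact hmain'
  · -- Abel part
    have hzK : z ∈ K := by rw [hz_def]; exact (g r).2
    have hPz : P *ᵥ z = z := by
      have : f z = z := hzK
      simpa [hfapp] using this
    -- r - z ∈ R
    have hrz : r - z ∈ R := by
      have : g₀ (r - z) = 0 := by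
        have h1 : g₀ z = g₀ r := by
          rw [hz_def]
          exact Submodule.linearProjOfIsCompl_apply_left hcompl (g r)
        rw [map_sub, h1, sub_self]
      exact (Submodule.linearProjOfIsCompl_apply_eq_zero_iff hcompl).1 this
    obtain ⟨w, hw⟩ := hrz
    have hrzw : r = z + (P *ᵥ w - w) := by
      have : f w - w = r - z := by simpa [LinearMap.sub_apply] using hw
      rw [hfapp] at this
      rw [this]; abel
    -- eventual bound
    have hbound : ∀ α ∈ Set.Ioo (0 : ℝ) 1,
        ‖(1 - α) • ((1 - α • P)⁻¹ *ᵥ r) - z‖ ≤ 2 * (1 - α) * ‖w‖ / α := by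
      intro α hα
      obtain ⟨hα0, hα1⟩ := hα
      set M : Matrix (Fin n) (Fin n) ℝ := 1 - α • P with hM_def
      have hMexp : ∀ x : Fin n → ℝ, M *ᵥ x = x - α • (P *ᵥ x) := by
        intro x
        rw [hM_def, Matrix.sub_mulVec, Matrix.one_mulVec, Matrix.smul_mulVec]
      have hMker : ∀ x : Fin n → ℝ, M *ᵥ x = 0 → x = 0 := by
        intro x hx
        rw [hMexp, sub_eq_zero] at hx
        by_contra hx0
        have h1 : ‖x‖ ≤ α * ‖x‖ := by
          calc ‖x‖ = ‖α • (P *ᵥ x)‖ := by rw [← hx]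
            _ = α * ‖P *ᵥ x‖ := by
                rw [norm_smul, Real.norm_of_nonneg hα0.le]
            _ ≤ α * ‖x‖ := by
                exact mul_le_mul_of_nonneg_left (hcontr x) hα0.le
        have := norm_pos_iff.2 hx0
        nlinarith
      have hMinj : Function.Injective M.mulVec := by
        intro a b hab
        have : M *ᵥ (a - b) = 0 := by
          rw [Matrix.mulVec_sub, hab, sub_self]
        have := hMker _ this
        exact sub_eq_zero.1 this
      have hunit : IsUnit M := Matrix.mulVec_injective_iff_isUnit.1 hMinj
      have hMM : M * M⁻¹ = 1 :=
        Matrix.mul_nonsing_inv M ((Matrix.isUnit_iff_isUnit_det M).1 hunit)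
      have hMsolve : ∀ x : Fin n → ℝ, M *ᵥ (M⁻¹ *ᵥ x) = x := by
        intro x
        rw [Matrix.mulVec_mulVec, hMM, Matrix.one_mulVec]
      set q : Fin n → ℝ := M⁻¹ *ᵥ w with hq_def
      have hqb : (1 - α) * ‖q‖ ≤ ‖w‖ := by
        have hMq : M *ᵥ q = w := hMsolve w
        have h1 : q = w + α • (P *ᵥ q) := by
          rw [hMexp] at hMq
          rw [← hMq]; abel
        have h2 : ‖q‖ ≤ ‖w‖ + α * ‖q‖ := by
          calc ‖q‖ = ‖w + α • (P *ᵥ q)‖ := by rw [← h1]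
            _ ≤ ‖w‖ + ‖α • (P *ᵥ q)‖ := norm_add_le _ _
            _ ≤ ‖w‖ + α * ‖q‖ := by
                rw [norm_smul, Real.norm_of_nonneg hα0.le]
                exact add_le_add_right (mul_le_mul_of_nonneg_left (hcontr q) hα0.le) _
        nlinarith
      have key : α • ((1 - α) • (M⁻¹ *ᵥ r) - z) = (1 - α) ^ 2 • q - (1 - α) • w := by
        apply hMinj
        show M *ᵥ _ = M *ᵥ _
        rw [Matrix.mulVec_smul, Matrix.mulVec_sub, Matrix.mulVec_smul, hMsolve,
          Matrix.mulVec_sub, Matrix.mulVec_smul, Matrix.mulVec_smul, hq_def, hMsolve]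
        rw [hMexp z, hMexp w, hPz, hrzw]
        module
      have hnorm : α * ‖(1 - α) • (M⁻¹ *ᵥ r) - z‖ ≤ 2 * (1 - α) * ‖w‖ := by
        calc α * ‖(1 - α) • (M⁻¹ *ᵥ r) - z‖
            = ‖α • ((1 - α) • (M⁻¹ *ᵥ r) - z)‖ := by
              rw [norm_smul, Real.norm_of_nonneg hα0.le]
          _ = ‖(1 - α) ^ 2 • q - (1 - α) • w‖ := by rw [key]
          _ ≤ ‖(1 - α) ^ 2 • q‖ + ‖(1 - α) • w‖ := norm_sub_le _ _
          _ ≤ (1 - α) * ‖w‖ + (1 - α) * ‖w‖ := by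
              gcongr <;> [skip; skip]
              · rw [norm_smul, Real.norm_of_nonneg (by positivity : (0:ℝ) ≤ (1 - α) ^ 2)]
                calc (1 - α) ^ 2 * ‖q‖ = (1 - α) * ((1 - α) * ‖q‖) := by ring
                  _ ≤ (1 - α) * ‖w‖ := by
                      exact mul_le_mul_of_nonneg_left hqb (by linarith)
              · rw [norm_smul, Real.norm_of_nonneg (by linarith : (0:ℝ) ≤ 1 - α)]
          _ = 2 * (1 - α) * ‖w‖ := by ring
      rw [le_div_iff₀ hα0]
      linarith [hnorm]
    have hev : ∀ᶠ α in nhdsWithin (1:ℝ) (Set.Iio 1),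
        ‖(1 - α) • ((1 - α • P)⁻¹ *ᵥ r) - z‖ ≤ 2 * (1 - α) * ‖w‖ / α := by
      have h1 : Set.Ioo (0:ℝ) 1 ∈ nhdsWithin (1:ℝ) (Set.Iio 1) := by
        rw [← Set.Ioi_inter_Iio]
        exact Filter.inter_mem
          (nhdsWithin_le_nhds (Ioi_mem_nhds (by norm_num)))
          self_mem_nhdsWithin
      filter_upwards [h1] with α hα using hbound α hα
    have hg0 : Tendsto (fun α : ℝ => 2 * (1 - α) * ‖w‖ / α)
        (nhdsWithin (1:ℝ) (Set.Iio 1)) (nhds 0) := by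
      have hc : ContinuousAt (fun α : ℝ => 2 * (1 - α) * ‖w‖ / α) 1 := by
        apply ContinuousAt.div
        · fun_prop
        · fun_prop
        · norm_num
      have h2 := hc.tendsto.mono_left
        (nhdsWithin_le_nhds (s := Set.Iio (1:ℝ)))
      simpa using h2
    have := squeeze_zero_norm' hev hg0
    exact tendsto_sub_nhds_zero_iff.1 this
end

section
/- For every n ≥ 1 there exists t ∈ ℕ, depending only on n, such that the following holds: for every n×n row-stochastic matrix P that is irreducible (for all states i, j there exists m ≥ 1 with (Pᵐ)_{ij} > 0) and aperiodic (for every state i, the gcd of {m ≥ 1 : (Pᵐ)_{ii} > 0} is 1), and for every p_min > 0 such that every nonzero entry of P is at least p_min, one has (Pᵗ)_{ij} ≥ p_min^t > 0 for all states i, j. -/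
open Matrix

namespace Stmt16Aux

variable {n : ℕ}




def Walk (P : Matrix (Fin n) (Fin n) ℝ) (m : ℕ) (i j : Fin n) : Prop :=
  ∃ f : ℕ → Fin n, f 0 = i ∧ f m = j ∧ ∀ s < m, 0 < P (f s) (f (s+1))

lemma pow_entry_nonneg (P : Matrix (Fin n) (Fin n) ℝ) (hP : ∀ k l, 0 ≤ P k l) :
    ∀ m k l, 0 ≤ (P ^ m) k l := by
  intro m
  induction m with
  | zero => intro k l; simp [Matrix.one_apply]; split <;> norm_num
  | succ m ih =>
    intro k l
    rw [pow_succ, Matrix.mul_apply]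
    exact Finset.sum_nonneg fun c _ => mul_nonneg (ih k c) (hP c l)

lemma pow_add_entry_le (P : Matrix (Fin n) (Fin n) ℝ) (hP : ∀ k l, 0 ≤ P k l)
    (m m' : ℕ) (i j k : Fin n) : (P ^ m) i j * (P ^ m') j k ≤ (P ^ (m + m')) i k := by
  rw [pow_add, Matrix.mul_apply]
  have : ∀ c ∈ Finset.univ, 0 ≤ (P ^ m) i c * (P ^ m') c k := fun c _ =>
    mul_nonneg (pow_entry_nonneg P hP m i c) (pow_entry_nonneg P hP m' c k)
  exact Finset.single_le_sum this (Finset.mem_univ j)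

lemma pow_add_pos (P : Matrix (Fin n) (Fin n) ℝ) (hP : ∀ k l, 0 ≤ P k l)
    {m m' : ℕ} {i j k : Fin n} (h1 : 0 < (P ^ m) i j) (h2 : 0 < (P ^ m') j k) :
    0 < (P ^ (m + m')) i k :=
  lt_of_lt_of_le (mul_pos h1 h2) (pow_add_entry_le P hP m m' i j k)

lemma pow_mul_pos (P : Matrix (Fin n) (Fin n) ℝ) (hP : ∀ k l, 0 ≤ P k l)
    {m : ℕ} {i : Fin n} (h : 0 < (P ^ m) i i) : ∀ k, 1 ≤ k → 0 < (P ^ (m * k)) i i := by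
  intro k hk
  induction k with
  | zero => omega
  | succ k ih =>
    rcases Nat.eq_or_lt_of_le hk with h1 | h1
    · simpa [← h1] using h
    · have := pow_add_pos P hP (ih (by omega)) h
      simpa [Nat.mul_succ] using this

lemma walk_of_pos (P : Matrix (Fin n) (Fin n) ℝ) (hP : ∀ k l, 0 ≤ P k l) :
    ∀ m i j, 0 < (P ^ m) i j → Walk P m i j := by
  intro m
  induction m with
  | zero =>
    intro i j h
    simp only [pow_zero, Matrix.one_apply] at h
    rcases eq_or_ne i j with he | he
    · exact ⟨fun _ => i, rfl, he, by intro s hs; omega⟩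
    · simp [he] at h
  | succ m ih =>
    intro i j h
    rw [pow_succ, Matrix.mul_apply] at h
    have : ∃ c, 0 < (P ^ m) i c * P c j := by
      by_contra hc
      push_neg at hc
      have : ∑ c, (P ^ m) i c * P c j ≤ 0 := Finset.sum_nonpos fun c _ => hc c
      linarith
    obtain ⟨c, hc⟩ := this
    have h1 : 0 < (P ^ m) i c := by
      rcases lt_or_ge 0 ((P ^ m) i c) with h' | h'
      · exact h'
      · nlinarith [hP c j, pow_entry_nonneg P hP m i c]
    have h2 : 0 < P c j := by
      nlinarith [pow_entry_nonneg P hP m i c]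
    obtain ⟨f, hf0, hfm, hfs⟩ := ih i c h1
    refine ⟨fun s => if s ≤ m then f s else j, by simpa using hf0, by simp, ?_⟩
    intro s hs
    rcases Nat.lt_or_ge s m with h' | h'
    · simp only [if_pos (le_of_lt h'), if_pos (by omega : s + 1 ≤ m)]
      exact hfs s h'
    · have hsm : s = m := by omega
      subst hsm
      simp only [if_pos le_rfl, if_neg (by omega : ¬ s + 1 ≤ s), hfm]
      exact h2

lemma pos_of_walk (P : Matrix (Fin n) (Fin n) ℝ) (hP : ∀ k l, 0 ≤ P k l) :
    ∀ m i j, Walk P m i j → 0 < (P ^ m) i j := by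
  intro m
  induction m with
  | zero =>
    rintro i j ⟨f, hf0, hfm, _⟩
    have : i = j := by rw [← hf0, ← hfm]
    simp [this, Matrix.one_apply]
  | succ m ih =>
    rintro i j ⟨f, hf0, hfm, hfs⟩
    have h1 : 0 < (P ^ m) i (f m) := ih i (f m) ⟨f, hf0, rfl, fun s hs => hfs s (by omega)⟩
    have h2 : 0 < P (f m) j := by
      have := hfs m (by omega)
      rwa [hfm] at this
    have h2x : 0 < (P ^ 1) (f m) j := by rwa [pow_one]
    exact pow_add_pos P hP h1 h2x

lemma walk_cut (P : Matrix (Fin n) (Fin n) ℝ) {m : ℕ} {i j : Fin n}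
    (f : ℕ → Fin n) (hf0 : f 0 = i) (hfm : f m = j)
    (hfs : ∀ s < m, 0 < P (f s) (f (s+1))) {s s' : ℕ} (hss : s ≤ s') (hs'm : s' ≤ m)
    (hfe : f s = f s') : Walk P (m - (s' - s)) i j := by
  refine ⟨fun t => if t ≤ s then f t else f (t + (s' - s)), by simp [hf0], ?_, ?_⟩
  · by_cases h : m - (s' - s) ≤ s
    · have h1 : m - (s' - s) = s := by omega
      have h2 : m = s' := by omega
      have h3 : f s' = j := h2 ▸ hfm
      simp [h1, hfe, h3]
    · simp only [if_neg h]
      have : m - (s' - s) + (s' - s) = m := by omega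
      rw [this, hfm]
  · intro t ht
    by_cases h1 : t + 1 ≤ s
    · simp only [if_pos (by omega : t ≤ s), if_pos h1]
      exact hfs t (by omega)
    · by_cases h2 : t ≤ s
      · -- t = s
        have hts : t = s := by omega
        simp only [if_pos h2, if_neg h1]
        have e1 : s + 1 + (s' - s) = s' + 1 := by omega
        rw [hts, hfe, e1]
        exact hfs s' (by omega)
      · simp only [if_neg h2, if_neg (by omega : ¬ t + 1 ≤ s)]
        have e1 : t + 1 + (s' - s) = (t + (s' - s)) + 1 := by omega
        rw [e1]
        exact hfs (t + (s' - s)) (by omega)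

lemma walk_short (P : Matrix (Fin n) (Fin n) ℝ) (hn : 1 ≤ n) {i j : Fin n} :
    ∀ m, 1 ≤ m → Walk P m i j → ∃ m', 1 ≤ m' ∧ m' ≤ n ∧ Walk P m' i j := by
  intro m
  induction m using Nat.strong_induction_on with
  | _ m ih =>
    intro hm hw
    rcases le_or_gt m n with h | h
    · exact ⟨m, hm, h, hw⟩
    · obtain ⟨f, hf0, hfm, hfs⟩ := hw
      have hcard : (Finset.univ : Finset (Fin n)).card < (Finset.Icc 1 m).card := by
        rw [Nat.card_Icc, Finset.card_univ, Fintype.card_fin]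
        omega
      obtain ⟨s, hs, s', hs', hne, heq⟩ :=
        Finset.exists_ne_map_eq_of_card_lt_of_maps_to hcard
          (fun x _ => Finset.mem_univ (f x))
      simp only [Finset.mem_Icc] at hs hs'
      rcases lt_or_gt_of_ne hne with hlt | hlt
      · have hw' := walk_cut P f hf0 hfm hfs (le_of_lt hlt) hs'.2 heq
        exact ih (m - (s' - s)) (by omega) (by omega) hw'
      · have hw' := walk_cut P f hf0 hfm hfs (le_of_lt hlt) hs.2 heq.symm
        exact ih (m - (s - s')) (by omega) (by omega) hw'

lemma walk_short_mod (P : Matrix (Fin n) (Fin n) ℝ) {a : ℕ} (ha : 1 ≤ a) {i : Fin n} :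
    ∀ m, ¬ (a ∣ m) → Walk P m i i →
    ∃ m', 1 ≤ m' ∧ m' ≤ n * a ∧ m' % a = m % a ∧ Walk P m' i i := by
  intro m
  induction m using Nat.strong_induction_on with
  | _ m ih =>
    intro hnd hw
    have hm1 : 1 ≤ m := Nat.pos_of_ne_zero (by rintro rfl; exact hnd (dvd_zero a))
    rcases le_or_gt m (n * a) with h | h
    · exact ⟨m, hm1, h, rfl, hw⟩
    · obtain ⟨f, hf0, hfm, hfs⟩ := hw
      have hcard : (Finset.univ : Finset (Fin n × Fin a)).card < (Finset.range (m+1)).card := by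
        rw [Finset.card_range, Finset.card_univ, Fintype.card_prod, Fintype.card_fin,
          Fintype.card_fin]
        omega
      obtain ⟨s, hs, s', hs', hne, heq⟩ :=
        Finset.exists_ne_map_eq_of_card_lt_of_maps_to (s := Finset.range (m+1))
          (f := fun s => ((f s, ⟨s % a, Nat.mod_lt _ ha⟩) : Fin n × Fin a))
          hcard (fun x _ => Finset.mem_univ _)
      simp only [Finset.mem_range, Prod.mk.injEq, Fin.mk.injEq] at hs hs' heq
      obtain ⟨heqf, heqm⟩ := heq
      -- wlog s < s'
      rcases lt_or_gt_of_ne hne with hlt | hlt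
      case _ =>
        have hw' := walk_cut P f hf0 hfm hfs (le_of_lt hlt) (by omega) heqf
        have hmod : (m - (s' - s)) % a = m % a := by
          have hd : a ∣ (s' - s) := (Nat.modEq_iff_dvd' hlt.le).mp heqm
          obtain ⟨k, hk⟩ := hd
          have h5 : m - (s' - s) + a * k = m := by omega
          calc (m - (s' - s)) % a = (m - (s' - s) + a * k) % a :=
                (Nat.add_mul_mod_self_left _ _ _).symm
            _ = m % a := by rw [h5]
        have hnd' : ¬ a ∣ (m - (s' - s)) := by
          intro hc
          exact hnd (by rwa [Nat.dvd_iff_mod_eq_zero, hmod, ← Nat.dvd_iff_mod_eq_zero] at hc)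
        obtain ⟨m', h1, h2, h3, h4⟩ := ih (m - (s' - s)) (by omega) hnd' hw'
        exact ⟨m', h1, h2, by rw [h3, hmod], h4⟩
      case _ =>
        have hw' := walk_cut P f hf0 hfm hfs (le_of_lt hlt) (by omega) heqf.symm
        have hmod : (m - (s - s')) % a = m % a := by
          have hd : a ∣ (s - s') := (Nat.modEq_iff_dvd' hlt.le).mp heqm.symm
          obtain ⟨k, hk⟩ := hd
          have h5 : m - (s - s') + a * k = m := by omega
          calc (m - (s - s')) % a = (m - (s - s') + a * k) % a :=
                (Nat.add_mul_mod_self_left _ _ _).symm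
            _ = m % a := by rw [h5]
        have hnd' : ¬ a ∣ (m - (s - s')) := by
          intro hc
          exact hnd (by rwa [Nat.dvd_iff_mod_eq_zero, hmod, ← Nat.dvd_iff_mod_eq_zero] at hc)
        obtain ⟨m', h1, h2, h3, h4⟩ := ih (m - (s - s')) (by omega) hnd' hw'
        exact ⟨m', h1, h2, by rw [h3, hmod], h4⟩

lemma returns_large (P : Matrix (Fin n) (Fin n) ℝ) (hP : ∀ k l, 0 ≤ P k l) (hn : 1 ≤ n)
    (hirr : ∀ i j : Fin n, ∃ m : ℕ, 1 ≤ m ∧ 0 < (P ^ m) i j)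
    (haper : ∀ i : Fin n, ∀ d : ℕ, (∀ m : ℕ, 1 ≤ m → 0 < (P ^ m) i i → d ∣ m) → d = 1)
    (i : Fin n) : ∀ N, n * n ≤ N → 0 < (P ^ N) i i := by
  obtain ⟨m0, hm0, hp0⟩ := hirr i i
  obtain ⟨a, ha1, han, hwa⟩ := walk_short P hn m0 hm0 (walk_of_pos P hP m0 i i hp0)
  have hpa : 0 < (P ^ a) i i := pos_of_walk P hP a i i hwa
  haveI : NeZero a := ⟨by omega⟩
  set H : AddSubgroup (ZMod a) :=
    { carrier := {x | x = 0 ∨ ∃ m : ℕ, 1 ≤ m ∧ 0 < (P ^ m) i i ∧ (m : ZMod a) = x}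
      zero_mem' := Or.inl rfl
      add_mem' := by
        rintro x y (rfl | ⟨m, h1, h2, h3⟩) (rfl | ⟨m', h1', h2', h3'⟩)
        · exact Or.inl (by simp)
        · exact Or.inr ⟨m', h1', h2', by simp [h3']⟩
        · exact Or.inr ⟨m, h1, h2, by simp [h3]⟩
        · exact Or.inr ⟨m + m', by omega, pow_add_pos P hP h2 h2', by push_cast [h3, h3']; ring⟩
      neg_mem' := by
        rintro x (rfl | ⟨m, h1, h2, h3⟩)
        · exact Or.inl (by simp)
        · rcases eq_or_lt_of_le ha1 with ha | ha
          · left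
            haveI : Subsingleton (ZMod a) := by rw [← ha]; infer_instance
            exact Subsingleton.elim _ _
          · refine Or.inr ⟨m * (a - 1), ?_, pow_mul_pos P hP h2 (a - 1) (by omega), ?_⟩
            · have : 1 ≤ a - 1 := by omega
              exact Nat.one_le_iff_ne_zero.mpr (by positivity)
            · rw [← h3]
              push_cast [Nat.cast_sub (by omega : 1 ≤ a)]
              rw [ZMod.natCast_self]
              ring } with hH
  have hHmem : ∀ x : ZMod a,
      x ∈ H ↔ (x = 0 ∨ ∃ m : ℕ, 1 ≤ m ∧ 0 < (P ^ m) i i ∧ (m : ZMod a) = x) := fun x => Iff.rfl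
  set K := AddSubgroup.comap (Int.castAddHom (ZMod a)) H with hK
  obtain ⟨g, hg⟩ := Int.subgroup_cyclic K
  have hdvd : ∀ m : ℕ, 1 ≤ m → 0 < (P ^ m) i i → g.natAbs ∣ m := by
    intro m h1 h2
    have hmem : (m : ℤ) ∈ K := by
      rw [hK, AddSubgroup.mem_comap]
      simp only [Int.coe_castAddHom, Int.cast_natCast]
      exact (hHmem _).mpr (Or.inr ⟨m, h1, h2, rfl⟩)
    rw [hg, AddSubgroup.mem_closure_singleton] at hmem
    obtain ⟨k, hk⟩ := hmem
    have hgd : g ∣ (m : ℤ) := ⟨k, by rw [← hk, zsmul_eq_mul, mul_comm]; norm_cast⟩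
    exact Int.natCast_dvd_natCast.mp (Int.natAbs_dvd.mpr hgd)
  have hg1 : g.natAbs = 1 := haper i _ hdvd
  have hgK : g ∈ K := by rw [hg]; exact AddSubgroup.subset_closure rfl
  have h1K : (1 : ℤ) ∈ K := by
    rcases Int.natAbs_eq_iff.mp hg1 with hge | hge
    · simpa [hge] using hgK
    · have := K.neg_mem hgK
      simpa [hge] using this
  have h1H : (1 : ZMod a) ∈ H := by
    rw [hK, AddSubgroup.mem_comap] at h1K
    simpa using h1K
  have hallH : ∀ x : ZMod a, x ∈ H := by
    intro x
    have hx : x = x.val • (1 : ZMod a) := by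
      rw [nsmul_eq_mul, mul_one, ZMod.natCast_val, ZMod.cast_id]
    rw [hx]
    exact AddSubgroup.nsmul_mem H h1H _
  have hres : ∀ r : ℕ, ∃ m, 1 ≤ m ∧ m ≤ n * a ∧ m % a = r % a ∧ 0 < (P ^ m) i i := by
    intro r
    by_cases hdr : a ∣ r
    · refine ⟨a, ha1, Nat.le_mul_of_pos_left a hn, ?_, hpa⟩
      obtain ⟨k, rfl⟩ := hdr
      simp [Nat.mod_self, Nat.mul_mod_right]
    · rcases (hHmem _).mp (hallH (r : ZMod a)) with h0 | ⟨m, h1, h2, h3⟩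
      · rw [ZMod.natCast_eq_zero_iff] at h0
        exact absurd h0 hdr
      · have hmr : m % a = r % a := by
          rw [← ZMod.natCast_eq_natCast_iff'] ; exact h3
        have hndm : ¬ a ∣ m := by
          intro hc
          apply hdr
          rw [Nat.dvd_iff_mod_eq_zero] at hc ⊢
          omega
        obtain ⟨m', hm'1, hm'2, hm'3, hw'⟩ :=
          walk_short_mod P ha1 m hndm (walk_of_pos P hP m i i h2)
        exact ⟨m', hm'1, hm'2, by rw [hm'3, hmr], pos_of_walk P hP m' i i hw'⟩
  intro N hN
  obtain ⟨m, h1, h2, h3, h4⟩ := hres N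
  have hman : m ≤ N := le_trans h2 (le_trans (Nat.mul_le_mul_left n han) hN)
  have hd : a ∣ N - m := (Nat.modEq_iff_dvd' hman).mp h3
  obtain ⟨k, hk⟩ := hd
  rcases Nat.eq_zero_or_pos k with rfl | hk0
  · have hNm : N = m := by omega
    rw [hNm]; exact h4
  · have hpos := pow_add_pos P hP h4 (pow_mul_pos P hP hpa k hk0)
    have hNm : m + a * k = N := by omega
    rwa [hNm] at hpos


lemma entry_ge (P : Matrix (Fin n) (Fin n) ℝ) (hP : ∀ k l, 0 ≤ P k l) {pmin : ℝ}
    (hpmin : 0 < pmin) (hpm : ∀ i j, P i j ≠ 0 → pmin ≤ P i j) :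
    ∀ t i j, 0 < (P ^ t) i j → pmin ^ t ≤ (P ^ t) i j := by
  intro t
  induction t with
  | zero =>
    intro i j h
    rcases eq_or_ne i j with rfl | hne
    · simp [Matrix.one_apply]
    · simp [Matrix.one_apply, hne] at h
  | succ t ih =>
    intro i j h
    rw [pow_succ, Matrix.mul_apply] at h
    have hex : ∃ c, 0 < (P ^ t) i c * P c j := by
      by_contra hc
      push_neg at hc
      have : ∑ c, (P ^ t) i c * P c j ≤ 0 := Finset.sum_nonpos fun c _ => hc c
      linarith
    obtain ⟨c, hc⟩ := hex
    have h1 : 0 < (P ^ t) i c := by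
      rcases lt_or_ge 0 ((P ^ t) i c) with h' | h'
      · exact h'
      · nlinarith [hP c j, pow_entry_nonneg P hP t i c]
    have h2 : 0 < P c j := by
      nlinarith [pow_entry_nonneg P hP t i c]
    have h3 : pmin ^ t ≤ (P ^ t) i c := ih i c h1
    have h4 : pmin ≤ P c j := hpm c j (ne_of_gt h2)
    calc pmin ^ (t + 1) = pmin ^ t * pmin := by ring
      _ ≤ (P ^ t) i c * P c j := by
          apply mul_le_mul h3 h4 (le_of_lt hpmin)
          exact le_trans (le_of_lt (pow_pos hpmin t)) h3
      _ ≤ ∑ d, (P ^ t) i d * P d j :=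
          Finset.single_le_sum (fun d _ => mul_nonneg (pow_entry_nonneg P hP t i d) (hP d j))
            (Finset.mem_univ c)
      _ = (P ^ (t + 1)) i j := by rw [pow_succ, Matrix.mul_apply]

end Stmt16Aux

open Stmt16Aux in
theorem stmt_16 (n : ℕ) (hn : 1 ≤ n) :
    ∃ t : ℕ, ∀ P : Matrix (Fin n) (Fin n) ℝ,
      (∀ k l, 0 ≤ P k l) → (∀ k, ∑ l, P k l = 1) →
      (∀ i j : Fin n, ∃ m : ℕ, 1 ≤ m ∧ 0 < (P ^ m) i j) →
      (∀ i : Fin n, ∀ d : ℕ, (∀ m : ℕ, 1 ≤ m → 0 < (P ^ m) i i → d ∣ m) → d = 1) →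
      ∀ pmin : ℝ, 0 < pmin → (∀ i j, P i j ≠ 0 → pmin ≤ P i j) →
      ∀ i j : Fin n, pmin ^ t ≤ (P ^ t) i j ∧ 0 < pmin ^ t := by
  refine ⟨n * n + n, ?_⟩
  intro P hP _hrow hirr haper pmin hpmin hpm i j
  refine ⟨?_, pow_pos hpmin _⟩
  obtain ⟨m0, hm0, hp0⟩ := hirr i j
  obtain ⟨m1, hm11, hm1n, hw1⟩ := walk_short P hn m0 hm0 (walk_of_pos P hP m0 i j hp0)
  have hp1 := pos_of_walk P hP m1 i j hw1
  have hret := returns_large P hP hn hirr haper i (n * n + n - m1) (by omega)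
  have hpos := pow_add_pos P hP hret hp1
  have he : n * n + n - m1 + m1 = n * n + n := by omega
  rw [he] at hpos
  exact entry_ge P hP hpmin hpm (n * n + n) i j hpos
end
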